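/- arXiv:2510.01507 — 7 statements merged into one kernel-verified Lean document; each statement's English description precedes it below -/
import Mathlib

section
/- Let T ∈ (0,∞] and A, R ≥ 1. Let {a_n}_{n≥1} be a sequence of differentiable maps a_n : [0,T) → [0,∞) (with the convention a_0 = a_{-1} = 0) satisfying, for all n ≥ 1 and t ∈ [0,T), the hierarchy of differential inequalities a_n'(t) ≤ n(a_n(t) + a_{n+1}(t)) + n³R^{-2}(a_{n-1}(t) + a_{n-2}(t)), together with the initial bounds a_n(0) ≤ n^{2n}(A R^{-1})^n. Assume further the a priori estimates a_n(t) ≤ B^n for all n ≥ 1 and t ∈ [0,T), for some B ≥ 1. Then there exists a constant C ≥ 1, depending only on B (and not on T, A, R), such that for all n ≥ 1 and t ∈ [0,T) one has a_n(t) ≤ e^{Cnt}(Cn²)^n (A R^{-1})^n. -/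
open scoped ENNReal
open Set Filter

noncomputable def Phi (C ε : ℝ) (n : ℕ) (s : ℝ) : ℝ :=
  Real.exp (C * n * s) * (C * (n : ℝ) ^ 2 * ε) ^ n

lemma Phi_nonneg {C ε : ℝ} (hC : 0 ≤ C) (hε : 0 ≤ ε) (n : ℕ) (s : ℝ) :
    0 ≤ Phi C ε n s :=
  mul_nonneg (Real.exp_nonneg _)
    (pow_nonneg (mul_nonneg (mul_nonneg hC (pow_nonneg (Nat.cast_nonneg n) 2)) hε) n)

lemma Phi_pos {C ε : ℝ} (hC : 0 < C) (hε : 0 < ε) {n : ℕ} (hn : 1 ≤ n) (s : ℝ) :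
    0 < Phi C ε n s := by
  have hn' : (0:ℝ) < (n:ℝ) := by exact_mod_cast hn
  exact mul_pos (Real.exp_pos _) (pow_pos (mul_pos (mul_pos hC (pow_pos hn' 2)) hε) n)

lemma Phi_continuous (C ε : ℝ) (n : ℕ) : Continuous (fun s => Phi C ε n s) := by
  simp only [Phi]
  exact (Real.continuous_exp.comp (by continuity)).mul continuous_const

lemma exp_two_le : Real.exp 2 ≤ 7.5 := by
  have h := Real.exp_one_lt_d9
  have h2 : Real.exp 2 = Real.exp 1 * Real.exp 1 := by
    rw [← Real.exp_add]; norm_num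
  nlinarith [Real.exp_pos 1]

/-- Estimate for the upward coupling term. -/
lemma phi_succ_le {B C ε : ℝ} (hB : 1 ≤ B) (hC : C = 100 * B) (hε : 0 < ε)
    {n : ℕ} (hn : 1 ≤ n) {s : ℝ} (hs : 0 ≤ s)
    (hreg : Real.exp (C * s) * (C * (n : ℝ) ^ 2 * ε) ≤ B) :
    Phi C ε (n + 1) s ≤ 30 * B * Phi C ε n s := by
  have hm : (1:ℝ) ≤ (n:ℝ) := by exact_mod_cast hn
  have hm0 : (0:ℝ) < (n:ℝ) := by linarith
  have hC0 : (0:ℝ) < C := by rw [hC]; linarith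
  have hX0 : (0:ℝ) < C * (n:ℝ) ^ 2 * ε := by positivity
  have hY0 : (0:ℝ) < C * ((n:ℝ) + 1) ^ 2 * ε := by positivity
  -- (n+1) ≤ n * exp (1/n)
  have h1 : (n:ℝ) + 1 ≤ (n:ℝ) * Real.exp (1 / (n:ℝ)) := by
    have h := Real.add_one_le_exp (1 / (n:ℝ))
    have h' := mul_le_mul_of_nonneg_left h hm0.le
    have heq : (n:ℝ) * (1 / (n:ℝ) + 1) = (n:ℝ) + 1 := by
      rw [mul_add, mul_one_div, div_self hm0.ne', mul_one]; ring
    linarith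
  have h2 : ((n:ℝ) + 1) ^ 2 ≤ (n:ℝ) ^ 2 * Real.exp (1 / (n:ℝ)) ^ 2 := by
    nlinarith [Real.exp_pos (1 / (n:ℝ))]
  have hYX : C * ((n:ℝ) + 1) ^ 2 * ε ≤ (C * (n:ℝ) ^ 2 * ε) * Real.exp (1 / (n:ℝ)) ^ 2 := by
    nlinarith [hε.le, hC0.le]
  have hpowE : (Real.exp (1 / (n:ℝ)) ^ 2) ^ n = Real.exp 2 := by
    rw [← pow_mul, ← Real.exp_nat_mul]
    congr 1
    push_cast
    field_simp
  have hYn : (C * ((n:ℝ) + 1) ^ 2 * ε) ^ n ≤ (C * (n:ℝ) ^ 2 * ε) ^ n * Real.exp 2 := by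
    calc (C * ((n:ℝ) + 1) ^ 2 * ε) ^ n
        ≤ ((C * (n:ℝ) ^ 2 * ε) * Real.exp (1 / (n:ℝ)) ^ 2) ^ n :=
          pow_le_pow_left₀ hY0.le hYX n
      _ = (C * (n:ℝ) ^ 2 * ε) ^ n * (Real.exp (1 / (n:ℝ)) ^ 2) ^ n := mul_pow _ _ n
      _ = (C * (n:ℝ) ^ 2 * ε) ^ n * Real.exp 2 := by rw [hpowE]
  have h4 : ((n:ℝ) + 1) ^ 2 ≤ 4 * (n:ℝ) ^ 2 := by nlinarith
  have hY4X : C * ((n:ℝ) + 1) ^ 2 * ε ≤ 4 * (C * (n:ℝ) ^ 2 * ε) := by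
    have h5 := mul_le_mul_of_nonneg_right (mul_le_mul_of_nonneg_left h4 hC0.le) hε.le
    linarith
  have hhead : Real.exp (C * s) * (C * ((n:ℝ) + 1) ^ 2 * ε) ≤ 4 * B := by
    calc Real.exp (C * s) * (C * ((n:ℝ) + 1) ^ 2 * ε)
        ≤ Real.exp (C * s) * (4 * (C * (n:ℝ) ^ 2 * ε)) :=
          mul_le_mul_of_nonneg_left hY4X (Real.exp_nonneg _)
      _ = 4 * (Real.exp (C * s) * (C * (n:ℝ) ^ 2 * ε)) := by ring
      _ ≤ 4 * B := by linarith
  have hkey : Phi C ε (n + 1) s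
      = Real.exp (C * (n:ℝ) * s) *
        ((Real.exp (C * s) * (C * ((n:ℝ) + 1) ^ 2 * ε)) * (C * ((n:ℝ) + 1) ^ 2 * ε) ^ n) := by
    simp only [Phi]
    push_cast
    rw [show C * ((n:ℝ) + 1) * s = C * (n:ℝ) * s + C * s by ring, Real.exp_add, pow_succ]
    ring
  rw [hkey]
  have hstep : (Real.exp (C * s) * (C * ((n:ℝ) + 1) ^ 2 * ε)) * (C * ((n:ℝ) + 1) ^ 2 * ε) ^ n
      ≤ (4 * B) * ((C * (n:ℝ) ^ 2 * ε) ^ n * Real.exp 2) := by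
    apply mul_le_mul hhead hYn (pow_nonneg hY0.le n) (by linarith)
  calc Real.exp (C * (n:ℝ) * s) *
        ((Real.exp (C * s) * (C * ((n:ℝ) + 1) ^ 2 * ε)) * (C * ((n:ℝ) + 1) ^ 2 * ε) ^ n)
      ≤ Real.exp (C * (n:ℝ) * s) * ((4 * B) * ((C * (n:ℝ) ^ 2 * ε) ^ n * Real.exp 2)) :=
        mul_le_mul_of_nonneg_left hstep (Real.exp_nonneg _)
    _ ≤ Real.exp (C * (n:ℝ) * s) * (30 * B * (C * (n:ℝ) ^ 2 * ε) ^ n) := by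
        apply mul_le_mul_of_nonneg_left _ (Real.exp_nonneg _)
        have hp : (0:ℝ) ≤ (C * (n:ℝ) ^ 2 * ε) ^ n := pow_nonneg hX0.le n
        have h6 := mul_le_mul_of_nonneg_left exp_two_le
          (mul_nonneg (by linarith : (0:ℝ) ≤ 4 * B) hp)
        nlinarith [h6]
    _ = 30 * B * Phi C ε n s := by simp only [Phi]; ring

/-- Estimate for the downward coupling terms. -/
lemma phi_down_le {B C A R ε : ℝ} (hB : 1 ≤ B) (hC : C = 100 * B)
    (hA : 1 ≤ A) (hR : 1 ≤ R) (hεd : ε = A / R)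
    {n : ℕ} (hn : 1 ≤ n) {s : ℝ} (hs : 0 ≤ s)
    (hcrit : C * (n:ℝ) ^ 2 * ε ≤ B) :
    (n:ℝ) ^ 3 / R ^ 2 * (Phi C ε (n - 1) s + Phi C ε (n - 2) s)
      ≤ 2 * B * (n:ℝ) * Phi C ε n s := by
  have hm : (1:ℝ) ≤ (n:ℝ) := by exact_mod_cast hn
  have hm0 : (0:ℝ) < (n:ℝ) := by linarith
  have hC0 : (0:ℝ) < C := by rw [hC]; linarith
  have hR0 : (0:ℝ) < R := by linarith
  have hε0 : (0:ℝ) < ε := by rw [hεd]; positivity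
  set X : ℝ := C * (n:ℝ) ^ 2 * ε with hXdef
  have hX0 : (0:ℝ) < X := by positivity
  -- 1/R ≤ ε
  have h1R : 1 / R ≤ ε := by rw [hεd]; gcongr
  have hRR : (n:ℝ) ^ 3 / R ^ 2 ≤ (n:ℝ) ^ 3 * ε ^ 2 := by
    have h2 : (1 / R) ^ 2 ≤ ε ^ 2 := pow_le_pow_left₀ (by positivity) h1R 2
    have : (n:ℝ) ^ 3 / R ^ 2 = (n:ℝ) ^ 3 * (1 / R) ^ 2 := by field_simp
    rw [this]
    exact mul_le_mul_of_nonneg_left h2 (by positivity)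
  -- Phi (n-k) bounds
  have hup : ∀ k : ℕ, Phi C ε (n - k) s ≤ Real.exp (C * (n:ℝ) * s) * X ^ (n - k) := by
    intro k
    have hcast : ((n - k : ℕ):ℝ) ≤ (n:ℝ) := Nat.cast_le.mpr (Nat.sub_le n k)
    have hcast0 : (0:ℝ) ≤ ((n - k : ℕ):ℝ) := Nat.cast_nonneg _
    simp only [Phi]
    apply mul_le_mul
    · apply Real.exp_le_exp.mpr
      apply mul_le_mul_of_nonneg_right (mul_le_mul_of_nonneg_left hcast hC0.le) hs
    · apply pow_le_pow_left₀ (by positivity)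
      apply mul_le_mul_of_nonneg_right _ hε0.le
      apply mul_le_mul_of_nonneg_left _ hC0.le
      exact pow_le_pow_left₀ hcast0 hcast 2
    · positivity
    · exact Real.exp_nonneg _
  -- small epsilon facts
  have hεsmall : (n:ℝ) ^ 2 * ε ≤ 1 / 100 := by nlinarith
  have hn21 : (1:ℝ) ≤ (n:ℝ) ^ 2 := one_le_pow₀ hm
  have hε100 : ε ≤ 1 / 100 := by
    have := mul_le_mul_of_nonneg_right hn21 hε0.le
    linarith
  have hεB : ε ≤ 100 * B ^ 2 := by nlinarith
  -- key scalar inequality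
  have key1 : (n:ℝ) ^ 3 * ε ^ 2 * X ^ (n - 1) ≤ B * (n:ℝ) * X ^ n := by
    have hXsplit : X ^ n = X ^ (n - 1) * X := by
      rw [← pow_succ]; congr 1; omega
    have h : (n:ℝ) ^ 3 * ε ^ 2 ≤ B * (n:ℝ) * X := by
      rw [hXdef, hC]
      have := mul_le_mul_of_nonneg_left hεB (mul_nonneg (pow_nonneg hm0.le 3) hε0.le)
      nlinarith [this]
    calc (n:ℝ) ^ 3 * ε ^ 2 * X ^ (n - 1) ≤ (B * (n:ℝ) * X) * X ^ (n - 1) :=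
          mul_le_mul_of_nonneg_right h (pow_nonneg hX0.le _)
      _ = B * (n:ℝ) * X ^ n := by rw [hXsplit]; ring
  have key2 : (n:ℝ) ^ 3 * ε ^ 2 * X ^ (n - 2) ≤ B * (n:ℝ) * X ^ n := by
    rcases Nat.lt_or_ge n 2 with h2 | hn2
    · -- n = 1
      have hn1 : n = 1 := by omega
      have he : n - 2 = 0 := by omega
      have hXval : X = C * ε := by rw [hXdef, hn1]; push_cast; ring
      rw [he, pow_zero, mul_one, hn1, pow_one, hXval, hC]
      push_cast
      have := mul_le_mul_of_nonneg_left hεB hε0.le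
      nlinarith [this]
    · -- n ≥ 2
      have hXsplit : X ^ n = X ^ (n - 2) * X ^ 2 := by
        rw [← pow_add]; congr 1; omega
      have hn35 : (n:ℝ) ^ 3 ≤ (n:ℝ) ^ 5 := pow_le_pow_right₀ hm (by omega)
      have h : (n:ℝ) ^ 3 * ε ^ 2 ≤ B * (n:ℝ) * X ^ 2 := by
        rw [hXdef, hC]
        have hB3 : (1:ℝ) ≤ B ^ 3 := one_le_pow₀ hB
        have h5 : (0:ℝ) ≤ (n:ℝ) ^ 5 * ε ^ 2 := by positivity
        have hA1 := mul_le_mul_of_nonneg_right hn35 (sq_nonneg ε)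
        have hA2 := mul_le_mul_of_nonneg_right hB3 h5
        have hgoal : B * (n:ℝ) * (100 * B * (n:ℝ) ^ 2 * ε) ^ 2
            = 10000 * (B ^ 3 * ((n:ℝ) ^ 5 * ε ^ 2)) := by ring
        rw [hgoal]
        linarith [hA1, hA2, h5]
      calc (n:ℝ) ^ 3 * ε ^ 2 * X ^ (n - 2) ≤ (B * (n:ℝ) * X ^ 2) * X ^ (n - 2) :=
            mul_le_mul_of_nonneg_right h (pow_nonneg hX0.le _)
        _ = B * (n:ℝ) * X ^ n := by rw [hXsplit]; ring
  have hsum : (n:ℝ) ^ 3 * ε ^ 2 * (X ^ (n - 1) + X ^ (n - 2)) ≤ 2 * B * (n:ℝ) * X ^ n := by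
    have : (n:ℝ) ^ 3 * ε ^ 2 * (X ^ (n - 1) + X ^ (n - 2))
        = (n:ℝ) ^ 3 * ε ^ 2 * X ^ (n - 1) + (n:ℝ) ^ 3 * ε ^ 2 * X ^ (n - 2) := by ring
    rw [this]; linarith
  calc (n:ℝ) ^ 3 / R ^ 2 * (Phi C ε (n - 1) s + Phi C ε (n - 2) s)
      ≤ (n:ℝ) ^ 3 * ε ^ 2 *
          (Real.exp (C * (n:ℝ) * s) * X ^ (n - 1) + Real.exp (C * (n:ℝ) * s) * X ^ (n - 2)) := by
        apply mul_le_mul hRR (add_le_add (hup 1) (hup 2))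
        · have := Phi_nonneg hC0.le hε0.le (n - 1) s
          have := Phi_nonneg hC0.le hε0.le (n - 2) s
          linarith
        · positivity
    _ = Real.exp (C * (n:ℝ) * s) * ((n:ℝ) ^ 3 * ε ^ 2 * (X ^ (n - 1) + X ^ (n - 2))) := by ring
    _ ≤ Real.exp (C * (n:ℝ) * s) * (2 * B * (n:ℝ) * X ^ n) :=
        mul_le_mul_of_nonneg_left hsum (Real.exp_nonneg _)
    _ = 2 * B * (n:ℝ) * Phi C ε n s := by simp only [Phi]; ring

set_option maxHeartbeats 1000000 in
/-- Grönwall step: inside the active region, bootstrap bounds self-improve. -/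
lemma gron {B C A R ε : ℝ} {T : ℝ≥0∞} {a : ℕ → ℝ → ℝ}
    (hB : 1 ≤ B) (hC : C = 100 * B) (hA : 1 ≤ A) (hR : 1 ≤ R) (hεd : ε = A / R)
    (hdiff : ∀ n, 1 ≤ n → ∀ t : ℝ, 0 ≤ t → ENNReal.ofReal t < T →
      DifferentiableAt ℝ (a n) t)
    (hineq : ∀ n, 1 ≤ n → ∀ t : ℝ, 0 ≤ t → ENNReal.ofReal t < T →
      deriv (a n) t ≤ (n : ℝ) * (a n t + a (n + 1) t)
        + (n : ℝ) ^ 3 / R ^ 2 * (a (n - 1) t + a (n - 2) t))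
    (hinit : ∀ n, 1 ≤ n → a n 0 ≤ (n : ℝ) ^ (2 * n) * (A / R) ^ n)
    {n : ℕ} (hn : 1 ≤ n) {τ : ℝ} (hτ0 : 0 ≤ τ) (hτT : ENNReal.ofReal τ < T)
    (hreg : Real.exp (C * τ) * (C * (n:ℝ) ^ 2 * ε) ≤ B)
    (hboot : ∀ m s, 0 ≤ s → s ≤ τ → a m s ≤ Phi C ε m s) :
    a n τ ≤ Phi C ε n τ / 3 := by
  have hm : (1:ℝ) ≤ (n:ℝ) := by exact_mod_cast hn
  have hm0 : (0:ℝ) < (n:ℝ) := by linarith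
  have hC0 : (0:ℝ) < C := by rw [hC]; linarith
  have hε0 : (0:ℝ) < ε := by rw [hεd]; positivity
  set X : ℝ := C * (n:ℝ) ^ 2 * ε with hXdef
  have hX0 : (0:ℝ) < X := by rw [hXdef]; positivity
  have hcrit : X ≤ B := by
    have h1 : (1:ℝ) ≤ Real.exp (C * τ) := Real.one_le_exp (by positivity)
    nlinarith [hX0]
  set g : ℝ → ℝ := fun x => (a n x - Real.exp (C * (n:ℝ) * x) * X ^ n / 3)
      * Real.exp (-(n:ℝ) * x) with hgdef
  -- derivative of g
  have hder : ∀ x, 0 ≤ x → ENNReal.ofReal x < T → HasDerivAt g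
      ((deriv (a n) x - Real.exp (C * (n:ℝ) * x) * (C * (n:ℝ) * 1) * X ^ n / 3)
          * Real.exp (-(n:ℝ) * x)
        + (a n x - Real.exp (C * (n:ℝ) * x) * X ^ n / 3)
          * (Real.exp (-(n:ℝ) * x) * (-(n:ℝ) * 1))) x := by
    intro x hx0 hxT
    have h1 : HasDerivAt (fun y : ℝ => C * (n:ℝ) * y) (C * (n:ℝ) * 1) x :=
      (hasDerivAt_id x).const_mul (C * (n:ℝ))
    have h2 := h1.exp
    have h3 := (h2.mul_const (X ^ n)).div_const 3
    have h4 := (hdiff n hn x hx0 hxT).hasDerivAt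
    have h5 := h4.sub h3
    have h6 : HasDerivAt (fun y : ℝ => -(n:ℝ) * y) (-(n:ℝ) * 1) x :=
      (hasDerivAt_id x).const_mul (-(n:ℝ))
    have h7 := h6.exp
    exact h5.mul h7
  -- the key differential inequality
  have hderiv_le : ∀ x, 0 ≤ x → x ≤ τ → ENNReal.ofReal x < T →
      deriv (a n) x ≤ (n:ℝ) * a n x + 32 * B * (n:ℝ) * Phi C ε n x := by
    intro x hx0 hxτ hxT
    have hregx : Real.exp (C * x) * (C * (n:ℝ) ^ 2 * ε) ≤ B := by
      rw [← hXdef]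
      have h1 : Real.exp (C * x) ≤ Real.exp (C * τ) := by
        apply Real.exp_le_exp.mpr
        exact mul_le_mul_of_nonneg_left hxτ hC0.le
      have h2 := mul_le_mul_of_nonneg_right h1 hX0.le
      linarith
    have hup := phi_succ_le hB hC hε0 hn hx0 hregx
    have hdown := phi_down_le hB hC hA hR hεd hn hx0 (by rw [← hXdef]; exact hcrit)
    have hineqx := hineq n hn x hx0 hxT
    have hb1 : a (n + 1) x ≤ Phi C ε (n + 1) x := hboot (n + 1) x hx0 hxτ
    have hb2 : a (n - 1) x ≤ Phi C ε (n - 1) x := hboot (n - 1) x hx0 hxτ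
    have hb3 : a (n - 2) x ≤ Phi C ε (n - 2) x := hboot (n - 2) x hx0 hxτ
    have hcoef : (0:ℝ) ≤ (n:ℝ) ^ 3 / R ^ 2 := by positivity
    calc deriv (a n) x
        ≤ (n:ℝ) * (a n x + a (n + 1) x)
            + (n:ℝ) ^ 3 / R ^ 2 * (a (n - 1) x + a (n - 2) x) := hineqx
      _ ≤ (n:ℝ) * (a n x + Phi C ε (n + 1) x)
            + (n:ℝ) ^ 3 / R ^ 2 * (Phi C ε (n - 1) x + Phi C ε (n - 2) x) := by
          have h1 := mul_le_mul_of_nonneg_left (add_le_add_left hb1 (a n x)) hm0.le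
          have h2 := mul_le_mul_of_nonneg_left (add_le_add hb2 hb3) hcoef
          linarith
      _ ≤ (n:ℝ) * a n x + (n:ℝ) * (30 * B * Phi C ε n x) + 2 * B * (n:ℝ) * Phi C ε n x := by
          have h1 := mul_le_mul_of_nonneg_left hup hm0.le
          nlinarith [h1, hdown]
      _ ≤ (n:ℝ) * a n x + 32 * B * (n:ℝ) * Phi C ε n x := by nlinarith []
  -- antitonicity of g on [0, τ]
  have hant : AntitoneOn g (Set.Icc 0 τ) := by
    apply antitoneOn_of_deriv_nonpos (convex_Icc 0 τ)
    · intro x hx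
      have hxT : ENNReal.ofReal x < T :=
        lt_of_le_of_lt (ENNReal.ofReal_le_ofReal hx.2) hτT
      exact ((hder x hx.1 hxT).differentiableAt).continuousAt.continuousWithinAt
    · rw [interior_Icc]
      intro x hx
      have hxT : ENNReal.ofReal x < T :=
        lt_of_le_of_lt (ENNReal.ofReal_le_ofReal hx.2.le) hτT
      exact ((hder x hx.1.le hxT).differentiableAt).differentiableWithinAt
    · rw [interior_Icc]
      intro x hx
      have hxT : ENNReal.ofReal x < T :=
        lt_of_le_of_lt (ENNReal.ofReal_le_ofReal hx.2.le) hτT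
      rw [(hder x hx.1.le hxT).deriv]
      have hdl := hderiv_le x hx.1.le hx.2.le hxT
      have hW : (0:ℝ) < Real.exp (-(n:ℝ) * x) := Real.exp_pos _
      have hPx : Phi C ε n x = Real.exp (C * (n:ℝ) * x) * X ^ n := by
        simp only [Phi, hXdef]
      have hP0 : (0:ℝ) < Phi C ε n x := Phi_pos hC0 hε0 hn x
      rw [hPx] at hdl hP0
      set E : ℝ := Real.exp (C * (n:ℝ) * x)
      set W : ℝ := Real.exp (-(n:ℝ) * x)
      set u : ℝ := a n x
      set u' : ℝ := deriv (a n) x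
      -- goal: (u' - E*(C*n*1)*X^n/3)*W + (u - E*X^n/3)*(W*(-n*1)) ≤ 0
      have hkey : (u' - E * (C * (n:ℝ) * 1) * X ^ n / 3) * W
          + (u - E * X ^ n / 3) * (W * (-(n:ℝ) * 1))
          = ((u' - (n:ℝ) * u - 32 * B * (n:ℝ) * (E * X ^ n))
            + ((32 * B - (C - 1) / 3) * ((n:ℝ) * (E * X ^ n)))) * W := by
        ring
      rw [hkey]
      have hc1 : u' - (n:ℝ) * u - 32 * B * (n:ℝ) * (E * X ^ n) ≤ 0 := by linarith
      have hc2 : (32 * B - (C - 1) / 3) * ((n:ℝ) * (E * X ^ n)) ≤ 0 := by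
        apply mul_nonpos_of_nonpos_of_nonneg
        · rw [hC]; linarith
        · positivity
      have := add_nonpos hc1 hc2
      exact mul_nonpos_of_nonpos_of_nonneg this hW.le
  -- initial bound
  have hg0 : g 0 ≤ 0 := by
    have h1 := hinit n hn
    rw [← hεd] at h1
    have h2 : (n:ℝ) ^ (2 * n) * ε ^ n = ((n:ℝ) ^ 2 * ε) ^ n := by
      rw [mul_pow, pow_mul]
    have h3 : X ^ n = C ^ n * ((n:ℝ) ^ 2 * ε) ^ n := by
      rw [hXdef, mul_pow, mul_pow]
      ring
    have h4 : (3:ℝ) ≤ C ^ n := by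
      calc (3:ℝ) ≤ C := by rw [hC]; linarith
        _ ≤ C ^ n := le_self_pow₀ (by linarith) (by omega)
    have h5 : (0:ℝ) ≤ ((n:ℝ) ^ 2 * ε) ^ n := by positivity
    have h6 : 3 * ((n:ℝ) ^ 2 * ε) ^ n ≤ X ^ n := by
      rw [h3]
      nlinarith [h5, h4]
    have hgval : g 0 = a n 0 - X ^ n / 3 := by
      simp [hgdef]
    rw [hgval]
    have h7 : a n 0 ≤ ((n:ℝ) ^ 2 * ε) ^ n := by rw [← h2]; exact h1
    linarith
  have hgτ : g τ ≤ g 0 :=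
    hant (Set.mem_Icc.mpr ⟨le_refl 0, hτ0⟩) (Set.mem_Icc.mpr ⟨hτ0, le_refl τ⟩) hτ0
  have hgτ0 : g τ ≤ 0 := le_trans hgτ hg0
  have hWτ : (0:ℝ) < Real.exp (-(n:ℝ) * τ) := Real.exp_pos _
  have hPτ : Phi C ε n τ = Real.exp (C * (n:ℝ) * τ) * X ^ n := by
    simp only [Phi, hXdef]
  rw [hPτ]
  simp only [hgdef] at hgτ0
  have hq : a n τ - Real.exp (C * (n:ℝ) * τ) * X ^ n / 3 ≤ 0 := by
    by_contra hcon
    push_neg at hcon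
    nlinarith [mul_pos hcon hWτ]
  linarith

set_option maxHeartbeats 1000000 in
/-- Lemma 2.1 of the paper, global hierarchical estimates.
Given `B ≥ 1`, there is a constant `C ≥ 1` depending only on `B` (and not on `T`, `A`, `R`)
such that: for any `T ∈ (0,∞]`, any `A, R ≥ 1`, and any sequence of nonnegative
differentiable maps `a_n : [0,T) → [0,∞)` (with the convention `a_0 = a_{−1} = 0`)
satisfying the hierarchy of differential inequalities
`a_n' ≤ n(a_n + a_{n+1}) + n³R^{−2}(a_{n−1} + a_{n−2})` on `[0,T)` with initial bounds
`a_n(0) ≤ n^{2n}(AR^{−1})^n` and the a priori estimates `a_n ≤ B^n` on `[0,T)`,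
one has `a_n(t) ≤ e^{Cnt}(Cn²)^n (AR^{−1})^n` for all `n ≥ 1` and `t ∈ [0,T)`. -/
theorem global_hierarchical_estimates (B : ℝ) (hB : 1 ≤ B) :
    ∃ C : ℝ, 1 ≤ C ∧
      ∀ (T : ℝ≥0∞) (_hT : 0 < T) (A R : ℝ) (_hA : 1 ≤ A) (_hR : 1 ≤ R)
        (a : ℕ → ℝ → ℝ)
        (_ha0 : ∀ t : ℝ, a 0 t = 0)
        (_hnonneg : ∀ n, 1 ≤ n → ∀ t : ℝ, 0 ≤ t → ENNReal.ofReal t < T → 0 ≤ a n t)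
        (_hdiff : ∀ n, 1 ≤ n → ∀ t : ℝ, 0 ≤ t → ENNReal.ofReal t < T →
          DifferentiableAt ℝ (a n) t)
        (_hineq : ∀ n, 1 ≤ n → ∀ t : ℝ, 0 ≤ t → ENNReal.ofReal t < T →
          deriv (a n) t ≤ (n : ℝ) * (a n t + a (n + 1) t)
            + (n : ℝ) ^ 3 / R ^ 2 * (a (n - 1) t + a (n - 2) t))
        (_hinit : ∀ n, 1 ≤ n → a n 0 ≤ (n : ℝ) ^ (2 * n) * (A / R) ^ n)
        (_hapriori : ∀ n, 1 ≤ n → ∀ t : ℝ, 0 ≤ t → ENNReal.ofReal t < T →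
          a n t ≤ B ^ n),
        ∀ n, 1 ≤ n → ∀ t : ℝ, 0 ≤ t → ENNReal.ofReal t < T →
          a n t ≤ Real.exp (C * n * t) * (C * (n : ℝ) ^ 2) ^ n * (A / R) ^ n := by
  refine ⟨100 * B, by linarith, ?_⟩
  intro T hT A R hA hR a ha0 hnonneg hdiff hineq hinit hapriori n hn t ht0 htT
  have hC : (100 * B : ℝ) = 100 * B := rfl
  set C : ℝ := 100 * B with hCdef
  set ε : ℝ := A / R with hεdef
  have hA0 : (0:ℝ) < A := by linarith
  have hR0 : (0:ℝ) < R := by linarith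
  have hε0 : (0:ℝ) < ε := by rw [hεdef]; positivity
  have hC0 : (0:ℝ) < C := by rw [hCdef]; linarith
  have hC1 : (1:ℝ) ≤ C := by rw [hCdef]; linarith
  -- base case m = 0
  have hbase : ∀ s : ℝ, a 0 s ≤ Phi C ε 0 s := by
    intro s
    rw [ha0 s]
    exact Phi_nonneg hC0.le hε0.le 0 s
  -- the invariant set
  set S : Set ℝ := {u | u ∈ Set.Icc 0 t ∧ ∀ m s, 0 ≤ s → s ≤ u → a m s ≤ Phi C ε m s}
    with hSdef
  have h0mem : (0:ℝ) ∈ S := by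
    refine ⟨⟨le_refl 0, ht0⟩, ?_⟩
    intro m s hs0 hs1
    have hs : s = 0 := le_antisymm hs1 hs0
    subst hs
    rcases Nat.eq_zero_or_pos m with hm | hm
    · subst hm; exact hbase 0
    · have hm1 : (1:ℝ) ≤ (m:ℝ) := by exact_mod_cast hm
      have h2 : ((m:ℝ) ^ 2 * ε) ^ m ≤ (C * (m:ℝ) ^ 2 * ε) ^ m := by
        apply pow_le_pow_left₀ (by positivity)
        nlinarith [mul_nonneg (sq_nonneg (m:ℝ)) hε0.le]
      calc a m 0 ≤ (m:ℝ) ^ (2 * m) * ε ^ m := hinit m hm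
        _ = ((m:ℝ) ^ 2 * ε) ^ m := by rw [mul_pow, pow_mul]
        _ ≤ (C * (m:ℝ) ^ 2 * ε) ^ m := h2
        _ = Phi C ε m 0 := by simp [Phi]
  have hSne : S.Nonempty := ⟨0, h0mem⟩
  have hbddS : BddAbove S := ⟨t, fun x hx => hx.1.2⟩
  set τ : ℝ := sSup S with hτdef
  have hτ0 : 0 ≤ τ := le_csSup hbddS h0mem
  have hτt : τ ≤ t := csSup_le hSne (fun x hx => hx.1.2)
  have hτT : ENNReal.ofReal τ < T := lt_of_le_of_lt (ENNReal.ofReal_le_ofReal hτt) htT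
  -- strict-inequality points propagate
  have hlt : ∀ m s, 0 ≤ s → s < τ → a m s ≤ Phi C ε m s := by
    intro m s hs0 hsτ
    obtain ⟨x, hxS, hsx⟩ := exists_lt_of_lt_csSup hSne hsτ
    exact hxS.2 m s hs0 hsx.le
  -- τ itself is in the invariant set
  have hτS : ∀ m s, 0 ≤ s → s ≤ τ → a m s ≤ Phi C ε m s := by
    intro m s hs0 hsτ
    rcases lt_or_eq_of_le hsτ with h | h
    · exact hlt m s hs0 h
    · rcases Nat.eq_zero_or_pos m with hm | hm
      · subst hm; exact hbase s
      rcases eq_or_lt_of_le hs0 with h0 | h0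
      · rw [← h0]
        exact h0mem.2 m 0 le_rfl le_rfl
      · -- 0 < s, s = τ : pass to the limit from the left
        have hsT : ENNReal.ofReal s < T := by rw [h]; exact hτT
        have hPc : Continuous (fun x => Phi C ε m x) := Phi_continuous C ε m
        have hcont : ContinuousAt (fun x => a m x - Phi C ε m x) s :=
          ((hdiff m hm s hs0 hsT).continuousAt).sub hPc.continuousAt
        have htend : Filter.Tendsto (fun x => a m x - Phi C ε m x) (nhdsWithin s (Set.Iio s))
            (nhds (a m s - Phi C ε m s)) :=
          hcont.tendsto.mono_left nhdsWithin_le_nhds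
        have hev : ∀ᶠ x in nhdsWithin s (Set.Iio s), a m x - Phi C ε m x ≤ 0 := by
          filter_upwards [Ioo_mem_nhdsLT_of_mem (Set.mem_Ioc.mpr ⟨h0, le_refl s⟩)] with x hx
          have hxτ : x < τ := by rw [← h]; exact hx.2
          have := hlt m x hx.1.le hxτ
          linarith
        have := le_of_tendsto htend hev
        linarith
  -- τ = t
  have hτeq : τ = t := by
    by_contra hne
    have hτlt : τ < t := lt_of_le_of_ne hτt hne
    set N : ℕ := Nat.ceil R with hNdef
    have hactive : ∀ m : ℕ, 1 ≤ m → C * (m:ℝ) ^ 2 * ε < B → m ≤ N := by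
      intro m hm1 hcm
      have hm1' : (1:ℝ) ≤ (m:ℝ) := by exact_mod_cast hm1
      have h1 : (m:ℝ) ^ 2 * ε < 1 / 100 := by
        rw [hCdef] at hcm
        nlinarith
      have h2 : (1:ℝ) / R ≤ ε := by rw [hεdef]; gcongr
      have h3 : (m:ℝ) ^ 2 * (1 / R) < 1 := by
        have := mul_le_mul_of_nonneg_left h2 (sq_nonneg (m:ℝ))
        nlinarith
      have h4 : (m:ℝ) ^ 2 < R := by
        rw [mul_one_div] at h3
        exact (div_lt_one hR0).mp h3
      have h5 : (m:ℝ) ≤ (m:ℝ) ^ 2 := by nlinarith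
      have h6 : (m:ℝ) ≤ (N:ℝ) := by
        calc (m:ℝ) ≤ (m:ℝ) ^ 2 := h5
          _ ≤ R := h4.le
          _ ≤ (N:ℝ) := Nat.le_ceil R
      exact_mod_cast h6
    -- eventual bounds past τ for active indices
    have hev : ∀ᶠ x in nhdsWithin τ (Set.Ioi τ),
        ∀ m ∈ Finset.range (N + 1),
          (1 ≤ m ∧ Real.exp (C * τ) * (C * (m:ℝ) ^ 2 * ε) < B) → a m x < Phi C ε m x := by
      rw [Filter.eventually_all_finset]
      intro m _
      by_cases hact : 1 ≤ m ∧ Real.exp (C * τ) * (C * (m:ℝ) ^ 2 * ε) < B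
      · obtain ⟨hm1, hregm⟩ := hact
        have hg := gron hB hCdef hA hR hεdef hdiff hineq
          (by rw [← hεdef]; exact hinit) hm1 hτ0 hτT hregm.le hτS
        have hP : 0 < Phi C ε m τ := Phi_pos hC0 hε0 hm1 τ
        have hval : a m τ - Phi C ε m τ < 0 := by linarith
        have hPc : Continuous (fun x => Phi C ε m x) := Phi_continuous C ε m
        have hcont : ContinuousAt (fun x => a m x - Phi C ε m x) τ :=
          ((hdiff m hm1 τ hτ0 hτT).continuousAt).sub hPc.continuousAt
        have hevm : ∀ᶠ x in nhds τ, a m x - Phi C ε m x < 0 :=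
          hcont.tendsto.eventually_lt_const hval
        filter_upwards [hevm.filter_mono nhdsWithin_le_nhds] with x hx _
        linarith
      · filter_upwards with x hx
        exact absurd hx hact
    obtain ⟨u, hu, hsub⟩ := mem_nhdsGT_iff_exists_Ioc_subset.mp hev
    set w : ℝ := min u t with hwdef
    have hτw : τ < w := lt_min hu hτlt
    have hwS : w ∈ S := by
      refine ⟨⟨by linarith, min_le_right u t⟩, ?_⟩
      intro m s hs0 hsw
      rcases le_or_gt s τ with hsτ | hsτ
      · exact hτS m s hs0 hsτ
      · have hsu : s ∈ Set.Ioc τ u := ⟨hsτ, le_trans hsw (min_le_left u t)⟩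
        have hst : s ≤ t := le_trans hsw (min_le_right u t)
        have hsT : ENNReal.ofReal s < T := lt_of_le_of_lt (ENNReal.ofReal_le_ofReal hst) htT
        rcases Nat.eq_zero_or_pos m with hm | hm1
        · subst hm; exact hbase s
        by_cases hregm : Real.exp (C * τ) * (C * (m:ℝ) ^ 2 * ε) < B
        · have hcm : C * (m:ℝ) ^ 2 * ε < B := by
            have h1 : (1:ℝ) ≤ Real.exp (C * τ) := Real.one_le_exp (by positivity)
            nlinarith [mul_nonneg (mul_nonneg hC0.le (sq_nonneg (m:ℝ))) hε0.le]
          have hmN : m ∈ Finset.range (N + 1) :=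
            Finset.mem_range.mpr (Nat.lt_succ_of_le (hactive m hm1 hcm))
          exact (hsub hsu m hmN ⟨hm1, hregm⟩).le
        · push_neg at hregm
          have h1 : B ≤ Real.exp (C * s) * (C * (m:ℝ) ^ 2 * ε) := by
            have h2 : Real.exp (C * τ) ≤ Real.exp (C * s) :=
              Real.exp_le_exp.mpr (mul_le_mul_of_nonneg_left hsτ.le hC0.le)
            have h3 := mul_le_mul_of_nonneg_right h2
              (mul_nonneg (mul_nonneg hC0.le (sq_nonneg (m:ℝ))) hε0.le)
            linarith
          calc a m s ≤ B ^ m := hapriori m hm1 s hs0 hsT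
            _ ≤ (Real.exp (C * s) * (C * (m:ℝ) ^ 2 * ε)) ^ m :=
                pow_le_pow_left₀ (by linarith) h1 m
            _ = Phi C ε m s := by
                simp only [Phi]
                rw [mul_pow, ← Real.exp_nat_mul]
                ring_nf
    have := le_csSup hbddS hwS
    linarith
  -- conclude
  have hfinal : a n t ≤ Phi C ε n t := hτS n t ht0 (by rw [hτeq])
  have hPhi : Phi C ε n t = Real.exp (C * n * t) * (C * (n:ℝ) ^ 2) ^ n * ε ^ n := by
    simp only [Phi]
    rw [mul_pow]
    ring
  rw [hPhi] at hfinal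
  exact hfinal
end

section
/- Let (Z, μ) be a measure space and N ≥ 2. For 1 ≤ k ≤ N let F_k ∈ L¹(μ^{⊗k}) be symmetric functions satisfying the marginal consistency relations: ∫_Z F_1 dμ = 1, and for all 2 ≤ k ≤ N, ∫_Z F_k(z_1,…,z_{k−1}, z) dμ(z) = F_{k−1}(z_1,…,z_{k−1}) for μ^{⊗(k−1)}-almost every (z_1,…,z_{k−1}). Define correlation functions G_m : Z^m → ℝ for 1 ≤ m ≤ N by G_m(z_1,…,z_m) = Σ_{π ⊢ [m]} (#π − 1)! (−1)^{#π−1} Π_{B ∈ π} F_{#B}(z_B). Then the correlation functions are maximal (centered): for every 2 ≤ m ≤ N and every 1 ≤ ℓ ≤ m, ∫_Z G_m(z_1,…,z_m) dμ(z_ℓ) = 0 for μ^{⊗(m−1)}-almost every (z_i)_{i ∈ [m]∖{ℓ}}. -/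
open Finset MeasureTheory

/-- Evaluation of a family of functions `F_k : Z^k → ℝ` on the sub-tuple `z_B` of
`z = (z_1,…,z_m)` indexed by a subset `B ⊆ [m]`, taken in increasing order. -/
noncomputable def blockEval {Z : Type*} (F : (k : ℕ) → (Fin k → Z) → ℝ) {m : ℕ}
    (z : Fin m → Z) (B : Finset (Fin m)) : ℝ :=
  F B.card (fun j => z (B.orderEmbOfFin rfl j))

/-- The correlation functions defined by Möbius inversion over set partitions:
`G_m(z) = Σ_{π ⊢ [m]} (#π − 1)! (−1)^{#π−1} Π_{B ∈ π} F_{#B}(z_B)`. -/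
noncomputable def mobiusCorrelation {Z : Type*} (F : (k : ℕ) → (Fin k → Z) → ℝ) (m : ℕ)
    (z : Fin m → Z) : ℝ :=
  ∑ π : Finpartition (Finset.univ : Finset (Fin m)),
    ((π.parts.card - 1).factorial : ℝ) * (-1 : ℝ) ^ (π.parts.card - 1) *
      ∏ B ∈ π.parts, blockEval F z B


lemma ae_comp_inj {Z : Type*} [MeasurableSpace Z] (μ : Measure Z) [SigmaFinite μ]
    {k n : ℕ} (e : Fin k → Fin n) (he : Function.Injective e)
    {P : (Fin k → Z) → Prop}
    (hP : ∀ᵐ v ∂(Measure.pi fun _ : Fin k => μ), P v) :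
    ∀ᵐ w ∂(Measure.pi fun _ : Fin n => μ), P (w ∘ e) := by
  classical
  set p : Fin n → Prop := fun i => ∃ j, e j = i with hp
  have hbij : Function.Bijective (fun j : Fin k => (⟨e j, ⟨j, rfl⟩⟩ : {i // p i})) := by
    constructor
    · intro a b hab
      exact he (congrArg Subtype.val hab)
    · rintro ⟨i, j, rfl⟩
      exact ⟨j, rfl⟩
  let ι : Fin k ≃ {i // p i} := Equiv.ofBijective _ hbij
  have hψ := measurePreserving_piCongrLeft (fun _ : {i // p i} => (μ : Measure Z)) ι
  have hφ := measurePreserving_piEquivPiSubtypeProd (fun _ : Fin n => (μ : Measure Z)) p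
  rw [ae_iff] at hP ⊢
  obtain ⟨T, hTsub, hTm, hT0⟩ := exists_measurable_superset_of_null hP
  set ψ := MeasurableEquiv.piCongrLeft (fun _ : {i // p i} => Z) ι with hψdef
  set φ := MeasurableEquiv.piEquivPiSubtypeProd (fun _ : Fin n => Z) p with hφdef
  have key : {w : Fin n → Z | ¬ P (w ∘ e)} ⊆
      φ ⁻¹' ((ψ.symm ⁻¹' T) ×ˢ (Set.univ : Set ({i // ¬ p i} → Z))) := by
    intro w hw
    have hcomp : w ∘ e = ψ.symm (φ w).1 := by
      funext j
      simp [ψ, φ, MeasurableEquiv.piEquivPiSubtypeProd, MeasurableEquiv.piCongrLeft,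
        Equiv.piCongrLeft_symm_apply, ι]
    refine ⟨?_, trivial⟩
    show ψ.symm (φ w).1 ∈ T
    exact hTsub (by rw [← hcomp]; exact hw)
  refine measure_mono_null key ?_
  have hTm' : MeasurableSet (ψ.symm ⁻¹' T) := ψ.symm.measurable hTm
  rw [hφ.measure_preimage (hTm'.prod MeasurableSet.univ).nullMeasurableSet,
    Measure.prod_prod]
  have h1 : (Measure.pi fun _ : {i // p i} => μ) (ψ.symm ⁻¹' T) = 0 := by
    rw [(hψ.symm ψ).measure_preimage hTm.nullMeasurableSet, hT0]
  rw [h1, zero_mul]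


lemma insertNth_eq_snoc_comp {Z : Type*} {k : ℕ} (p : Fin (k + 1)) (z : Z) (v : Fin k → Z) :
    Fin.insertNth p z v =
      (Fin.snoc v z : Fin (k+1) → Z) ∘ ((p.cycleRange).trans (finRotate (k+1)).symm) := by
  funext i
  refine p.succAboveCases ?_ ?_ i
  · simp only [Fin.insertNth_apply_same, Function.comp_apply, Equiv.trans_apply,
      Fin.cycleRange_self]
    have : (finRotate (k+1)).symm 0 = Fin.last k := by
      rw [Equiv.symm_apply_eq, finRotate_last]
    rw [this, Fin.snoc_last]
  · intro j
    simp only [Fin.insertNth_apply_succAbove, Function.comp_apply, Equiv.trans_apply,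
      Fin.cycleRange_succAbove]
    have : (finRotate (k+1)).symm j.succ = j.castSucc := by
      rw [Equiv.symm_apply_eq, finRotate_succ_apply, Fin.coeSucc_eq_succ]
    rw [this, Fin.snoc_castSucc]

lemma marg_insertNth {Z : Type*} [MeasurableSpace Z]
    (μ : MeasureTheory.Measure Z) [MeasureTheory.SigmaFinite μ] (N : ℕ)
    (F : (k : ℕ) → (Fin k → Z) → ℝ)
    (hFint : ∀ k, 1 ≤ k → k ≤ N →
      MeasureTheory.Integrable (F k) (MeasureTheory.Measure.pi fun _ : Fin k => μ))
    (hFsymm : ∀ k, 1 ≤ k → k ≤ N → ∀ τ : Equiv.Perm (Fin k), ∀ z : Fin k → Z,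
      F k (z ∘ τ) = F k z)
    (hmarg : ∀ k, 1 ≤ k → k + 1 ≤ N →
      ∀ᵐ w ∂(MeasureTheory.Measure.pi fun _ : Fin k => μ),
        ∫ z, F (k + 1) (Fin.snoc w z) ∂μ = F k w)
    (k : ℕ) (hk : 1 ≤ k) (hkN : k + 1 ≤ N) (p : Fin (k+1)) :
    ∀ᵐ v ∂(MeasureTheory.Measure.pi fun _ : Fin k => μ),
      (∫ z, F (k + 1) (Fin.insertNth p z v) ∂μ = F k v) ∧
        MeasureTheory.Integrable (fun z => F (k + 1) (Fin.insertNth p z v)) μ := by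
  have hrw : ∀ (z : Z) (v : Fin k → Z),
      F (k + 1) (Fin.insertNth p z v) = F (k + 1) (Fin.snoc v z) := by
    intro z v
    rw [insertNth_eq_snoc_comp]
    exact hFsymm (k+1) (by omega) (by omega) _ _
  have hint : Integrable (fun q : Z × (Fin k → Z) => F (k + 1) (Fin.snoc q.2 q.1))
      (μ.prod (Measure.pi fun _ : Fin k => μ)) := by
    have hmp := measurePreserving_piFinSuccAbove (fun _ : Fin (k+1) => μ) (Fin.last k)
    have heq : (fun q : Z × (Fin k → Z) => F (k + 1) (Fin.snoc q.2 q.1)) ∘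
        (MeasurableEquiv.piFinSuccAbove (fun _ : Fin (k+1) => Z) (Fin.last k)) = F (k+1) := by
      funext f
      simp only [Function.comp_apply, MeasurableEquiv.piFinSuccAbove]
      show F (k+1) (Fin.snoc (fun j => f ((Fin.last k).succAbove j)) (f (Fin.last k))) = _
      congr 1
      have : (fun j => f ((Fin.last k).succAbove j)) = Fin.init f := by
        funext j; rw [Fin.succAbove_last]; rfl
      rw [this, Fin.snoc_init_self]
    rw [← hmp.integrable_comp_emb (MeasurableEquiv.measurableEmbedding _), heq]
    exact hFint (k+1) (by omega) hkN
  filter_upwards [hmarg k hk hkN, hint.prod_left_ae] with v h1 h2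
  constructor
  · simp_rw [hrw]; exact h1
  · simp_rw [hrw]; exact h2


variable {n : ℕ}

lemma avoid_parts_eq' {α : Type*} [DecidableEq α] [Fintype α]
    (π : Finpartition (univ : Finset α)) (ℓ : α) :
    (π.avoid {ℓ}).parts = (insert ((π.part ℓ).erase ℓ) (π.parts.erase (π.part ℓ))).erase ∅ := by
  have hmem : π.part ℓ ∈ π.parts := π.part_mem.2 (mem_univ ℓ)
  have h1 : (π.avoid {ℓ}).parts = (π.parts.image (· \ {ℓ})).erase ⊥ := by
    simp [Finpartition.avoid, Finpartition.ofErase]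
  rw [h1]
  have h2 : π.parts = insert (π.part ℓ) (π.parts.erase (π.part ℓ)) := (insert_erase hmem).symm
  conv_lhs => rw [h2]
  rw [image_insert]
  have h3 : (π.parts.erase (π.part ℓ)).image (· \ {ℓ}) = π.parts.erase (π.part ℓ) := by
    rw [image_congr (g := id), image_id]
    intro B hB
    simp only [mem_coe, mem_erase] at hB
    have hℓB : ℓ ∉ B := fun hℓB => hB.1 (π.part_eq_of_mem hB.2 hℓB).symm
    simp only [id_eq, sdiff_singleton_eq_erase]
    exact erase_eq_of_notMem hℓB
  rw [h3, sdiff_singleton_eq_erase]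
  rfl

/-- Add `ℓ` to the block `C` (or as a singleton if `C = ∅`) of a partition of `univ \ {ℓ}`. -/
def addTo (ℓ : Fin (n+1)) (π' : Finpartition ((univ : Finset (Fin (n+1))) \ {ℓ}))
    (C : Finset (Fin (n+1))) (hC : C = ∅ ∨ C ∈ π'.parts) :
    Finpartition (univ : Finset (Fin (n+1))) where
  parts := insert (insert ℓ C) (π'.parts.erase C)
  supIndep := by
    rw [supIndep_iff_pairwiseDisjoint, coe_insert]
    refine Set.PairwiseDisjoint.insert (π'.disjoint.subset (coe_subset.2 (erase_subset _ _))) ?_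
    intro B hB _
    rw [mem_coe, mem_erase] at hB
    simp only [id_eq]
    rw [disjoint_insert_left]
    constructor
    · have := π'.le hB.2
      intro hℓB
      simpa using this hℓB
    · rcases hC with rfl | hC
      · exact disjoint_bot_left
      · exact π'.disjoint hC hB.2 (Ne.symm hB.1)
  sup_parts := by
    apply le_antisymm
    · intro x _
      exact mem_univ x
    · intro x _
      rw [mem_sup]
      by_cases hx : x = ℓ
      · exact ⟨insert ℓ C, mem_insert_self _ _, by simp [hx]⟩
      · obtain ⟨B, hB, hxB⟩ := π'.exists_mem (mem_sdiff.2 ⟨mem_univ x, by simp [hx]⟩)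
        by_cases hBC : B = C
        · exact ⟨insert ℓ C, mem_insert_self _ _, by subst hBC; exact mem_insert_of_mem hxB⟩
        · exact ⟨B, mem_insert_of_mem (mem_erase.2 ⟨hBC, hB⟩), hxB⟩
  bot_notMem := by
    simp only [bot_eq_empty, mem_insert, not_or]
    exact ⟨(insert_ne_empty _ _).symm, fun h => π'.bot_notMem (erase_subset _ _ h)⟩

lemma addTo_parts (ℓ : Fin (n+1)) (π' : Finpartition ((univ : Finset (Fin (n+1))) \ {ℓ}))
    (C : Finset (Fin (n+1))) (hC : C = ∅ ∨ C ∈ π'.parts) :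
    (addTo ℓ π' C hC).parts = insert (insert ℓ C) (π'.parts.erase C) := rfl

lemma addTo_part (ℓ : Fin (n+1)) (π' : Finpartition ((univ : Finset (Fin (n+1))) \ {ℓ}))
    (C : Finset (Fin (n+1))) (hC : C = ∅ ∨ C ∈ π'.parts) :
    (addTo ℓ π' C hC).part ℓ = insert ℓ C :=
  Finpartition.part_eq_of_mem _ (mem_insert_self _ _) (mem_insert_self _ _)

lemma part_erase_not_mem (ℓ : Fin (n+1)) (π : Finpartition (univ : Finset (Fin (n+1)))) :
    (π.part ℓ).erase ℓ ∉ π.parts.erase (π.part ℓ) := by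
  intro hmem
  rw [mem_erase] at hmem
  obtain ⟨x, hx⟩ := π.nonempty_of_mem_parts hmem.2
  have hx' : x ∈ π.part ℓ := (erase_subset _ _) hx
  exact hmem.1 (π.eq_of_mem_parts hmem.2 (π.part_mem.2 (mem_univ ℓ)) hx hx')

lemma partition_sum_zero (hn : 1 ≤ n) (ℓ : Fin (n+1)) (h : Finset (Fin (n+1)) → ℝ) :
    ∑ π : Finpartition (univ : Finset (Fin (n+1))),
      ((π.parts.card - 1).factorial : ℝ) * (-1 : ℝ) ^ (π.parts.card - 1) *
        ((if (π.part ℓ).card = 1 then 1 else h ((π.part ℓ).erase ℓ)) *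
          ∏ B ∈ π.parts.erase (π.part ℓ), h B) = 0 := by
  classical
  set c : ℕ → ℝ := fun j => ((j - 1).factorial : ℝ) * (-1 : ℝ) ^ (j - 1) with hc
  have hcoef : ∀ k : ℕ, 1 ≤ k → c (k + 1) + (k : ℝ) * c k = 0 := by
    rintro ⟨⟩ hk
    · omega
    · rename_i k'
      simp only [hc, Nat.add_sub_cancel, Nat.factorial_succ, pow_succ]
      push_cast
      ring
  set T := ((univ : Finset (Finpartition ((univ : Finset (Fin (n+1))) \ {ℓ}))).sigma
      fun π' => insert ∅ π'.parts) with hTdef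
  set g : (Σ _ : Finpartition ((univ : Finset (Fin (n+1))) \ {ℓ}), Finset (Fin (n+1))) → ℝ :=
    fun q => (if q.2 = ∅ then c (q.1.parts.card + 1) else c q.1.parts.card) *
      ∏ B ∈ q.1.parts, h B with hg
  have hℓC : ∀ (π' : Finpartition ((univ : Finset (Fin (n+1))) \ {ℓ}))
      (C : Finset (Fin (n+1))), (C = ∅ ∨ C ∈ π'.parts) → ℓ ∉ C := by
    rintro π' C (rfl | hC)
    · exact notMem_empty ℓ
    · intro hℓ
      simpa using (π'.le hC) hℓ
  have key : (∑ π : Finpartition (univ : Finset (Fin (n+1))),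
      c π.parts.card *
        ((if (π.part ℓ).card = 1 then 1 else h ((π.part ℓ).erase ℓ)) *
          ∏ B ∈ π.parts.erase (π.part ℓ), h B)) = ∑ q ∈ T, g q := by
    refine Finset.sum_bij' (fun π _ => ⟨π.avoid {ℓ}, (π.part ℓ).erase ℓ⟩)
      (fun q hq => addTo ℓ q.1 q.2 (by
        rw [hTdef, mem_sigma] at hq
        rcases mem_insert.1 hq.2 with h0 | h0
        · exact Or.inl h0
        · exact Or.inr h0)) ?_ ?_ ?_ ?_ ?_
    · -- maps into T
      intro π _
      rw [hTdef, mem_sigma]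
      refine ⟨mem_univ _, ?_⟩
      rw [avoid_parts_eq']
      by_cases h0 : (π.part ℓ).erase ℓ = ∅
      · exact mem_insert.2 (Or.inl h0)
      · exact mem_insert_of_mem (mem_erase.2 ⟨h0, mem_insert_self _ _⟩)
    · intro q hq; exact mem_univ _
    · -- left inverse
      intro π _
      apply Finpartition.ext
      rw [addTo_parts]
      have h1 : insert ℓ ((π.part ℓ).erase ℓ) = π.part ℓ :=
        insert_erase (π.mem_part (mem_univ ℓ))
      have h2 : (π.avoid {ℓ}).parts.erase ((π.part ℓ).erase ℓ) =
          π.parts.erase (π.part ℓ) := by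
        have hb2 : (∅ : Finset (Fin (n+1))) ∉ π.parts.erase (π.part ℓ) :=
          fun hmem => π.bot_notMem ((erase_subset _ _) hmem)
        rw [avoid_parts_eq', erase_right_comm,
          erase_insert (part_erase_not_mem ℓ π), erase_eq_of_notMem hb2]
      rw [h1, h2, insert_erase (π.part_mem.2 (mem_univ ℓ))]
    · -- right inverse
      rintro ⟨π', C⟩ hq
      have hC : C = ∅ ∨ C ∈ π'.parts := by
        rw [hTdef, mem_sigma] at hq
        rcases mem_insert.1 hq.2 with h0 | h0
        · exact Or.inl h0
        · exact Or.inr h0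
      have hℓC' : ℓ ∉ C := hℓC π' C hC
      have hpart : (addTo ℓ π' C hC).part ℓ = insert ℓ C := addTo_part ℓ π' C hC
      have h2 : ((addTo ℓ π' C hC).part ℓ).erase ℓ = C := by
        rw [hpart, erase_insert hℓC']
      have hnotmem : insert ℓ C ∉ π'.parts.erase C := by
        intro hmem
        exact hℓC π' (insert ℓ C) (Or.inr ((erase_subset _ _) hmem)) (mem_insert_self _ _)
      have h1 : (addTo ℓ π' C hC).avoid {ℓ} = π' := by
        apply Finpartition.ext
        have hb' : (∅ : Finset (Fin (n+1))) ∉ π'.parts := π'.bot_notMem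
        rw [avoid_parts_eq', hpart, erase_insert hℓC', addTo_parts, erase_insert hnotmem]
        rcases hC with rfl | hC
        · rw [erase_eq_of_notMem hb', erase_insert hb']
        · rw [insert_erase hC, erase_eq_of_notMem hb']
      exact Sigma.ext h1 (heq_of_eq h2)
    · -- value equality
      intro π _
      simp only [hg]
      have hmem : π.part ℓ ∈ π.parts := π.part_mem.2 (mem_univ ℓ)
      have hcard : (π.parts.erase (π.part ℓ)).card + 1 = π.parts.card :=
        card_erase_add_one hmem
      by_cases h0 : (π.part ℓ).erase ℓ = ∅
      · have hcard1 : (π.part ℓ).card = 1 := by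
          have := card_erase_add_one (π.mem_part (mem_univ ℓ))
          rw [h0] at this
          simpa using this.symm
        have hb2 : (∅ : Finset (Fin (n+1))) ∉ π.parts.erase (π.part ℓ) :=
          fun hmem' => π.bot_notMem ((erase_subset _ _) hmem')
        have havoid : (π.avoid {ℓ}).parts = π.parts.erase (π.part ℓ) := by
          rw [avoid_parts_eq', h0, erase_insert hb2]
        rw [if_pos hcard1]
        simp only [havoid, h0, if_pos rfl, hcard, if_true]
        ring
      · have hcard1 : (π.part ℓ).card ≠ 1 := by
          intro hcc
          have := card_erase_add_one (π.mem_part (mem_univ ℓ))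
          rw [hcc] at this
          exact h0 (card_eq_zero.1 (by omega))
        have havoid : (π.avoid {ℓ}).parts =
            insert ((π.part ℓ).erase ℓ) (π.parts.erase (π.part ℓ)) := by
          rw [avoid_parts_eq']
          apply erase_eq_of_notMem
          simp only [mem_insert, not_or]
          exact ⟨fun hh => h0 hh.symm,
            fun hmem' => π.bot_notMem ((erase_subset _ _) hmem')⟩
        rw [if_neg hcard1]
        simp only [havoid, if_neg h0]
        rw [prod_insert (part_erase_not_mem ℓ π),
          card_insert_of_notMem (part_erase_not_mem ℓ π), hcard]
  rw [key, hTdef, Finset.sum_sigma]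
  apply Finset.sum_eq_zero
  intro π' _
  have hkpos : 1 ≤ π'.parts.card := by
    rw [Nat.one_le_iff_ne_zero, Ne, card_eq_zero]
    intro hparts
    have hne : ((univ : Finset (Fin (n+1))) \ {ℓ}).Nonempty := by
      rw [← card_pos, card_sdiff_of_subset (by simp)]
      simp only [card_univ, Fintype.card_fin, card_singleton]
      omega
    obtain ⟨x, hx⟩ := hne
    obtain ⟨B, hB, _⟩ := π'.exists_mem hx
    simp [hparts] at hB
  have hb' : (∅ : Finset (Fin (n+1))) ∉ π'.parts := π'.bot_notMem
  rw [sum_insert hb']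
  have hrest : ∀ C ∈ π'.parts, g ⟨π', C⟩ = c π'.parts.card * ∏ B ∈ π'.parts, h B := by
    intro C hC
    simp only [hg]
    rw [if_neg (show ¬ C = ∅ from fun hC0 => hb' (by rw [← hC0]; exact hC))]
  rw [Finset.sum_congr rfl hrest, sum_const, nsmul_eq_mul]
  have hg0 : g ⟨π', ∅⟩ = c (π'.parts.card + 1) * ∏ B ∈ π'.parts, h B := by
    simp only [hg, if_pos rfl, if_true]
  rw [hg0]
  have hz := hcoef π'.parts.card hkpos
  calc c (#π'.parts + 1) * ∏ B ∈ π'.parts, h B +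
        ↑(#π'.parts) * (c #π'.parts * ∏ B ∈ π'.parts, h B)
      = (c (#π'.parts + 1) + ↑(#π'.parts) * c #π'.parts) * ∏ B ∈ π'.parts, h B := by ring
    _ = 0 := by rw [hz, zero_mul]

lemma blockEval_eq {Z : Type*} (F : (k : ℕ) → (Fin k → Z) → ℝ) {m k : ℕ}
    (z : Fin m → Z) (B : Finset (Fin m)) (h : B.card = k) :
    blockEval F z B = F k (fun j => z (B.orderEmbOfFin h j)) := by
  subst h; rfl

noncomputable def unproj {n : ℕ} [NeZero n] (ℓ : Fin (n + 1)) : Fin (n + 1) → Fin n :=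
  Function.invFun ℓ.succAbove

lemma unproj_succAbove {n : ℕ} [NeZero n] (ℓ : Fin (n + 1)) (j : Fin n) :
    unproj ℓ (ℓ.succAbove j) = j :=
  Function.leftInverse_invFun Fin.succAbove_right_injective j

/-- Evaluation of `F` on the sub-tuple of `w : Fin n → Z` indexed by a set `C` of indices
in `Fin (n+1)` avoiding `ℓ`. -/
noncomputable def restEval {Z : Type*} (F : (k : ℕ) → (Fin k → Z) → ℝ) {n : ℕ} [NeZero n]
    (ℓ : Fin (n + 1)) (w : Fin n → Z) (C : Finset (Fin (n + 1))) : ℝ :=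
  F C.card (fun j => w (unproj ℓ (C.orderEmbOfFin rfl j)))

lemma restEval_eq {Z : Type*} (F : (k : ℕ) → (Fin k → Z) → ℝ) {n k : ℕ} [NeZero n]
    (ℓ : Fin (n + 1)) (w : Fin n → Z) (C : Finset (Fin (n + 1))) (h : C.card = k) :
    restEval F ℓ w C = F k (fun j => w (unproj ℓ (C.orderEmbOfFin h j))) := by
  subst h; rfl

lemma blockEval_not_mem {Z : Type*} (F : (k : ℕ) → (Fin k → Z) → ℝ) {n : ℕ} [NeZero n]
    (ℓ : Fin (n + 1)) (z : Z) (w : Fin n → Z) (C : Finset (Fin (n + 1))) (hC : ℓ ∉ C) :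
    blockEval F (Fin.insertNth ℓ z w) C = restEval F ℓ w C := by
  unfold blockEval restEval
  congr 1
  funext j
  have hne : C.orderEmbOfFin rfl j ≠ ℓ := fun he => hC (he ▸ C.orderEmbOfFin_mem rfl j)
  obtain ⟨i, hi⟩ := Fin.exists_succAbove_eq hne
  rw [← hi, Fin.insertNth_apply_succAbove, unproj_succAbove]

lemma blockEval_mem {Z : Type*} (F : (k : ℕ) → (Fin k → Z) → ℝ) {n k : ℕ} [NeZero n]
    (ℓ : Fin (n + 1)) (C : Finset (Fin (n + 1))) (hck : C.card = k + 1) (hℓ : ℓ ∈ C) :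
    ∃ p : Fin (k + 1), ∃ e : Fin k → Fin n,
      Function.Injective e ∧
      (∀ (z : Z) (w : Fin n → Z),
        blockEval F (Fin.insertNth ℓ z w) C = F (k + 1) (Fin.insertNth p z (w ∘ e))) ∧
      (∀ (w : Fin n → Z), F k (w ∘ e) = restEval F ℓ w (C.erase ℓ)) := by
  have hℓrange : ℓ ∈ Set.range (C.orderEmbOfFin hck) := by
    rw [Finset.range_orderEmbOfFin]; exact hℓ
  obtain ⟨p, hp⟩ := hℓrange
  set e : Fin k → Fin n := fun j => unproj ℓ (C.orderEmbOfFin hck (p.succAbove j)) with he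
  have hne : ∀ j, C.orderEmbOfFin hck (p.succAbove j) ≠ ℓ := by
    intro j hj
    rw [← hp] at hj
    exact Fin.succAbove_ne p j ((C.orderEmbOfFin hck).injective hj)
  have hsa : ∀ j, ℓ.succAbove (e j) = C.orderEmbOfFin hck (p.succAbove j) := by
    intro j
    obtain ⟨i, hi⟩ := Fin.exists_succAbove_eq (hne j)
    simp only [he, ← hi, unproj_succAbove]
  refine ⟨p, e, ?_, ?_, ?_⟩
  · intro a b hab
    have h2 : C.orderEmbOfFin hck (p.succAbove a) = C.orderEmbOfFin hck (p.succAbove b) := by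
      rw [← hsa a, ← hsa b, hab]
    exact Fin.succAbove_right_injective ((C.orderEmbOfFin hck).injective h2)
  · intro z w
    rw [blockEval_eq F _ C hck]
    congr 1
    funext i
    refine p.succAboveCases ?_ ?_ i
    · rw [Fin.insertNth_apply_same, hp, Fin.insertNth_apply_same]
    · intro j
      rw [Fin.insertNth_apply_succAbove, Function.comp_apply, ← hsa j,
        Fin.insertNth_apply_succAbove]
  · intro w
    have hcard' : (C.erase ℓ).card = k := by
      have := card_erase_add_one hℓ
      omega
    rw [restEval_eq F ℓ w _ hcard']
    have hemb' : (fun j => C.orderEmbOfFin hck (p.succAbove j)) =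
        fun j => (C.erase ℓ).orderEmbOfFin hcard' j := by
      apply orderEmbOfFin_unique hcard'
      · intro j
        exact mem_erase.2 ⟨hne j, C.orderEmbOfFin_mem hck (p.succAbove j)⟩
      · exact (C.orderEmbOfFin hck).strictMono.comp (Fin.strictMono_succAbove p)
    have hemb2 : ∀ j, C.orderEmbOfFin hck (p.succAbove j) =
        (C.erase ℓ).orderEmbOfFin hcard' j := fun j => congrFun hemb' j
    congr 1
    funext j
    simp only [Function.comp_apply, he, hemb2]

lemma blockEval_singleton {Z : Type*} (F : (k : ℕ) → (Fin k → Z) → ℝ) {n : ℕ}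
    (ℓ : Fin (n + 1)) (z : Z) (w : Fin n → Z) :
    blockEval F (Fin.insertNth ℓ z w) {ℓ} = F 1 (fun _ => z) := by
  rw [blockEval_eq F _ _ (card_singleton ℓ)]
  congr 1
  funext j
  rw [Finset.orderEmbOfFin_singleton, Fin.insertNth_apply_same]

/-- for symmetric marginals `F_k ∈ L¹(μ^{⊗k})` satisfying the marginal
consistency relations (∫ F_1 dμ = 1 and ∫ F_k(·, z) dμ(z) = F_{k−1} a.e.), the correlation
functions `G_m` defined by the Möbius inversion formula are maximal (centered): for
`2 ≤ m ≤ N` (written `m = n+1` with `1 ≤ n`) and any coordinate `ℓ`, the integral of `G_m`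
in the variable `z_ℓ` vanishes for `μ^{⊗(m−1)}`-almost every choice of the other variables. -/
theorem correlation_functions_centered {Z : Type*} [MeasurableSpace Z]
    (μ : Measure Z) [SigmaFinite μ] (N : ℕ) (hN : 2 ≤ N)
    (F : (k : ℕ) → (Fin k → Z) → ℝ)
    (hFint : ∀ k, 1 ≤ k → k ≤ N →
      Integrable (F k) (Measure.pi fun _ : Fin k => μ))
    (hFsymm : ∀ k, 1 ≤ k → k ≤ N → ∀ τ : Equiv.Perm (Fin k), ∀ z : Fin k → Z,
      F k (z ∘ τ) = F k z)
    (hF1 : ∫ z, F 1 (fun _ => z) ∂μ = 1)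
    (hmarg : ∀ k, 1 ≤ k → k + 1 ≤ N →
      ∀ᵐ w ∂(Measure.pi fun _ : Fin k => μ),
        ∫ z, F (k + 1) (Fin.snoc w z) ∂μ = F k w) :
    ∀ n, 1 ≤ n → n + 1 ≤ N → ∀ ℓ : Fin (n + 1),
      ∀ᵐ w ∂(Measure.pi fun _ : Fin n => μ),
        ∫ z, mobiusCorrelation F (n + 1) (Fin.insertNth ℓ z w) ∂μ = 0 := by
  intro n hn hNn ℓ
  haveI : NeZero n := ⟨by omega⟩
  classical
  have hint1 : Integrable (fun z : Z => F 1 (fun _ => z)) μ := by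
    have hme := (measurePreserving_funUnique μ (Fin 1)).symm
      (MeasurableEquiv.funUnique (Fin 1) Z)
    have heq : (fun z : Z => F 1 (fun _ => z)) =
        F 1 ∘ (MeasurableEquiv.funUnique (Fin 1) Z).symm := rfl
    rw [heq]
    exact (hme.integrable_comp_emb (MeasurableEquiv.measurableEmbedding _)).2
      (hFint 1 le_rfl (by omega))
  have hπ : ∀ π : Finpartition (univ : Finset (Fin (n+1))),
      ∀ᵐ w ∂(Measure.pi fun _ : Fin n => μ),
        (∫ z, ∏ B ∈ π.parts, blockEval F (Fin.insertNth ℓ z w) B ∂μ =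
          (if (π.part ℓ).card = 1 then 1 else restEval F ℓ w ((π.part ℓ).erase ℓ)) *
            ∏ B ∈ π.parts.erase (π.part ℓ), restEval F ℓ w B) ∧
        Integrable (fun z => ∏ B ∈ π.parts, blockEval F (Fin.insertNth ℓ z w) B) μ := by
    intro π
    have hmem : π.part ℓ ∈ π.parts := π.part_mem.2 (mem_univ ℓ)
    have hℓB0 : ℓ ∈ π.part ℓ := π.mem_part (mem_univ ℓ)
    obtain ⟨k, hck⟩ : ∃ k, (π.part ℓ).card = k + 1 := by
      have : 0 < (π.part ℓ).card := card_pos.2 ⟨ℓ, hℓB0⟩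
      exact ⟨(π.part ℓ).card - 1, by omega⟩
    have hother : ∀ B ∈ π.parts.erase (π.part ℓ), ℓ ∉ B := by
      intro B hB hℓB
      rw [mem_erase] at hB
      exact hB.1 (π.eq_of_mem_parts hB.2 hmem hℓB hℓB0)
    have hprod : ∀ (z : Z) (w : Fin n → Z),
        ∏ B ∈ π.parts, blockEval F (Fin.insertNth ℓ z w) B =
          blockEval F (Fin.insertNth ℓ z w) (π.part ℓ) *
            ∏ B ∈ π.parts.erase (π.part ℓ), restEval F ℓ w B := by
      intro z w
      rw [← mul_prod_erase _ _ hmem]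
      congr 1
      exact prod_congr rfl fun B hB => blockEval_not_mem F ℓ z w B (hother B hB)
    rcases Nat.eq_zero_or_pos k with rfl | hkpos
    · have hB0 : π.part ℓ = {ℓ} := by
        obtain ⟨a, ha⟩ := card_eq_one.1 hck
        rw [ha] at hℓB0 ⊢
        rw [mem_singleton] at hℓB0
        rw [hℓB0]
      refine Filter.Eventually.of_forall fun w => ?_
      have hpt : ∀ z : Z, ∏ B ∈ π.parts, blockEval F (Fin.insertNth ℓ z w) B =
          F 1 (fun _ => z) * ∏ B ∈ π.parts.erase (π.part ℓ), restEval F ℓ w B := by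
        intro z
        rw [hprod z w]
        congr 1
        rw [hB0, blockEval_singleton]
      constructor
      · simp_rw [hpt]
        rw [integral_mul_const, hF1, if_pos (show (π.part ℓ).card = 1 by omega), one_mul]
      · have hfe : (fun z : Z => ∏ B ∈ π.parts, blockEval F (Fin.insertNth ℓ z w) B) =
            fun z => F 1 (fun _ => z) *
              ∏ B ∈ π.parts.erase (π.part ℓ), restEval F ℓ w B := funext hpt
        rw [hfe]
        exact hint1.mul_const _
    · obtain ⟨p, e, hinj, hA, hC⟩ := blockEval_mem F ℓ (π.part ℓ) hck hℓB0
      have hkN : k + 1 ≤ N := by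
        have h1 : (π.part ℓ).card ≤ n + 1 := by
          simpa using card_le_univ (π.part ℓ)
        omega
      have hmargp := marg_insertNth μ N F hFint hFsymm hmarg k hkpos hkN p
      have hae := ae_comp_inj μ e hinj hmargp
      filter_upwards [hae] with w hw
      have hcard1 : (π.part ℓ).card ≠ 1 := by omega
      constructor
      · simp_rw [hprod _ w, hA _ w]
        rw [integral_mul_const, hw.1, hC w, if_neg hcard1]
      · have hfe : (fun z => ∏ B ∈ π.parts, blockEval F (Fin.insertNth ℓ z w) B) =
            fun z => F (k+1) (Fin.insertNth p z (w ∘ e)) *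
              ∏ B ∈ π.parts.erase (π.part ℓ), restEval F ℓ w B := by
          funext z; rw [hprod z w, hA z w]
        rw [hfe]
        exact hw.2.mul_const _
  have hall := ae_all_iff.2 hπ
  filter_upwards [hall] with w hw
  have hint : ∀ π ∈ (univ : Finset (Finpartition (univ : Finset (Fin (n+1))))),
      Integrable (fun z =>
        ((π.parts.card - 1).factorial : ℝ) * (-1:ℝ)^(π.parts.card - 1) *
          ∏ B ∈ π.parts, blockEval F (Fin.insertNth ℓ z w) B) μ :=
    fun π _ => ((hw π).2).const_mul _
  have h1 : ∫ z, mobiusCorrelation F (n + 1) (Fin.insertNth ℓ z w) ∂μ =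
      ∑ π : Finpartition (univ : Finset (Fin (n+1))),
        ∫ z, ((π.parts.card - 1).factorial : ℝ) * (-1:ℝ)^(π.parts.card - 1) *
          ∏ B ∈ π.parts, blockEval F (Fin.insertNth ℓ z w) B ∂μ := by
    simp only [mobiusCorrelation]
    exact integral_finset_sum univ hint
  rw [h1]
  have h2 : ∀ π ∈ (univ : Finset (Finpartition (univ : Finset (Fin (n+1))))),
      (∫ z, ((π.parts.card - 1).factorial : ℝ) * (-1:ℝ)^(π.parts.card - 1) *
          ∏ B ∈ π.parts, blockEval F (Fin.insertNth ℓ z w) B ∂μ) =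
        ((π.parts.card - 1).factorial : ℝ) * (-1:ℝ)^(π.parts.card - 1) *
          ((if (π.part ℓ).card = 1 then 1 else restEval F ℓ w ((π.part ℓ).erase ℓ)) *
            ∏ B ∈ π.parts.erase (π.part ℓ), restEval F ℓ w B) := by
    intro π _
    rw [integral_const_mul, (hw π).1]
  rw [Finset.sum_congr rfl h2]
  exact partition_sum_zero hn ℓ (restEval F ℓ w)
end

section
/- Let Z be a set, N ≥ 1, f : Z → ℝ a function, and for 1 ≤ k ≤ N let F_k : Z^k → ℝ be symmetric functions (with convention F_0 = 1). Define the correlation functions G_m : Z^m → ℝ (1 ≤ m ≤ N) by G_m(z_1,…,z_m) = Σ_{π ⊢ [m]} (#π − 1)! (−1)^{#π−1} Π_{B ∈ π} F_{#B}(z_B), and the linear correlations H_m : Z^m → ℝ (0 ≤ m ≤ N) by H_m(z_1,…,z_m) = Σ_{k=0}^m (−1)^{m−k} Σ_{σ ∈ P^m_k} F_k(z_σ) Π_{i ∈ [m]∖σ} f(z_i). Set G̃_1 := F_1 − f and G̃_m := G_m for 2 ≤ m ≤ N. Then for every 1 ≤ m ≤ N and every (z_1,…,z_m) ∈ Z^m,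 H_m(z_1,…,z_m) = Σ_{π ⊢ [m]} Π_{B ∈ π} G̃_{#B}(z_B). -/
open Finset

/-- The linear correlations
`H_m(z) = Σ_{k=0}^m (−1)^{m−k} Σ_{σ ∈ P^m_k} F_k(z_σ) Π_{i ∈ [m]∖σ} f(z_i)`. -/
noncomputable def linearCorrelation {Z : Type*} (F : (k : ℕ) → (Fin k → Z) → ℝ)
    (f : Z → ℝ) (m : ℕ) (z : Fin m → Z) : ℝ :=
  ∑ k ∈ Finset.range (m + 1), (-1 : ℝ) ^ (m - k) *
    ∑ σ ∈ (Finset.univ : Finset (Fin m)).powersetCard k,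
      blockEval F z σ * ∏ i ∈ σᶜ, f (z i)

/-- The modified correlation functions `G̃_1 := F_1 − f` and `G̃_m := G_m` for `m ≠ 1`. -/
noncomputable def tildeCorrelation {Z : Type*} (F : (k : ℕ) → (Fin k → Z) → ℝ)
    (f : Z → ℝ) : (k : ℕ) → (Fin k → Z) → ℝ
  | 1 => fun z => F 1 z - f (z 0)
  | k => fun z => mobiusCorrelation F k z


namespace ClusterExp

variable {α : Type*} [DecidableEq α]

/-- The weight appearing in the Möbius/cluster expansion. -/
noncomputable def w (k : ℕ) : ℝ := ((k - 1).factorial : ℝ) * (-1 : ℝ) ^ (k - 1)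

lemma w_one : w 1 = 1 := by simp [w]

lemma w_add {k : ℕ} (hk : 1 ≤ k) :
    w k + ((k - 1 : ℕ) : ℝ) * w (k - 1) = if k = 1 then 1 else 0 := by
  match k, hk with
  | 1, _ => simp [w]
  | (n+2), _ =>
    have h1 : (n + 2) - 1 = n + 1 := rfl
    have h2 : (n + 1) - 1 = n := rfl
    simp only [w, h1, h2, if_neg (by omega : ¬ n + 2 = 1), Nat.factorial_succ]
    push_cast
    ring

/-- Delete a part from a finpartition. -/
def delete {s : Finset α} (π : Finpartition s) (B : Finset α) (hB : B ∈ π.parts) :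
    Finpartition (s \ B) where
  parts := π.parts.erase B
  supIndep := π.supIndep.subset (erase_subset _ _)
  sup_parts := by
    have hd : Disjoint B ((π.parts.erase B).sup id) :=
      (Finset.supIndep_iff_disjoint_erase.mp π.supIndep) B hB
    have h2 : (insert B (π.parts.erase B)).sup id = s := by
      rw [Finset.insert_erase hB, π.sup_parts]
    rw [Finset.sup_insert] at h2
    simp only [id_eq] at h2
    calc (π.parts.erase B).sup id = (B ∪ (π.parts.erase B).sup id) \ B :=
          (Finset.union_sdiff_cancel_left hd).symm
      _ = s \ B := by rw [← sup_eq_union, h2]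
  bot_notMem := fun h => π.bot_notMem (Finset.mem_of_mem_erase h)

@[simp] lemma delete_parts {s : Finset α} (π : Finpartition s) (B : Finset α)
    (hB : B ∈ π.parts) : (delete π B hB).parts = π.parts.erase B := rfl

/-- Insert a new part into a finpartition of `s \ B`. -/
def insertP {s : Finset α} (B : Finset α) (hBs : B ⊆ s) (hBne : B.Nonempty)
    (π : Finpartition (s \ B)) : Finpartition s :=
  π.extend (by simpa [Finset.bot_eq_empty] using hBne.ne_empty)
    (Finset.sdiff_disjoint)
    (by rw [sup_eq_union, Finset.sdiff_union_of_subset hBs])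

@[simp] lemma insertP_parts {s : Finset α} (B : Finset α) (hBs : B ⊆ s) (hBne : B.Nonempty)
    (π : Finpartition (s \ B)) : (insertP B hBs hBne π).parts = insert B π.parts := rfl

lemma not_mem_sdiff_parts {s B : Finset α} (hBne : B.Nonempty) (π : Finpartition (s \ B)) :
    B ∉ π.parts := by
  intro h
  obtain ⟨a, ha⟩ := hBne
  have := π.le h ha
  simp only [Finset.mem_sdiff] at this
  exact this.2 ha


lemma fp_heq {s t : Finset α} (h : s = t) (π : Finpartition s) (ρ : Finpartition t)
    (hp : π.parts = ρ.parts) : HEq π ρ := by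
  subst h
  exact heq_of_eq (Finpartition.ext hp)

lemma parts_of_singleton (i : α) (π : Finpartition ({i} : Finset α)) : π.parts = {{i}} := by
  have h1 : ∀ B ∈ π.parts, B = {i} := fun B hB =>
    (Finset.subset_singleton_iff.mp (π.le hB)).resolve_left (π.ne_bot hB)
  obtain ⟨B, hB⟩ := π.parts_nonempty (by simp [Finset.bot_eq_empty])
  rw [Finset.eq_singleton_iff_unique_mem]
  exact ⟨(h1 B hB) ▸ hB, h1⟩

lemma sum_finpartition_singleton (i : α) (φ : Finpartition ({i} : Finset α) → ℝ) :
    ∑ π : Finpartition ({i} : Finset α), φ π = φ ⊥ := by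
  haveI : Subsingleton (Finpartition ({i} : Finset α)) :=
    ⟨fun π ρ => Finpartition.ext (by rw [parts_of_singleton i π, parts_of_singleton i ρ])⟩
  exact Fintype.sum_subsingleton φ ⊥


/-- Summing over partitions of `s` having `B` as a part is summing over partitions of `s \ B`. -/
lemma sum_insertP {s B : Finset α} (hBs : B ⊆ s) (hBne : B.Nonempty)
    (φ : Finpartition s → ℝ) :
    ∑ π : Finpartition (s \ B), φ (insertP B hBs hBne π)
      = ∑ τ ∈ univ.filter (fun τ : Finpartition s => B ∈ τ.parts), φ τ := by
  refine Finset.sum_nbij' (fun π => insertP B hBs hBne π)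
    (fun τ => if h : B ∈ τ.parts then delete τ B h else ⊥) ?_ ?_ ?_ ?_ ?_
  · intro π _
    simp only [Finset.mem_filter, Finset.mem_univ, true_and, insertP_parts]
    exact Finset.mem_insert_self _ _
  · intro τ _; exact Finset.mem_univ _
  · intro π _
    have hmem : B ∈ (insertP B hBs hBne π).parts := by
      rw [insertP_parts]; exact Finset.mem_insert_self _ _
    rw [dif_pos hmem]
    apply Finpartition.ext
    rw [delete_parts, insertP_parts, Finset.erase_insert (not_mem_sdiff_parts hBne π)]
  · intro τ hτ
    simp only [Finset.mem_filter] at hτ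
    rw [dif_pos hτ.2]
    apply Finpartition.ext
    rw [insertP_parts, delete_parts, Finset.insert_erase hτ.2]
  · intro π _; rfl

/-- Recursion: group partitions of `s` by the part containing a fixed element `a`. -/
lemma sum_finpartition_part {s : Finset α} {a : α} (ha : a ∈ s) (v : Finset α → ℝ) :
    ∑ π : Finpartition s, ∏ B ∈ π.parts, v B
      = ∑ B ∈ s.powerset.filter (fun B => a ∈ B),
          v B * ∑ π' : Finpartition (s \ B), ∏ C ∈ π'.parts, v C := by
  rw [← Finset.sum_fiberwise_of_maps_to (g := fun π : Finpartition s => π.part a)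
    (t := s.powerset.filter (fun B => a ∈ B)) ?hmaps (fun π => ∏ B ∈ π.parts, v B)]
  case hmaps =>
    intro π _
    simp only [Finset.mem_filter, Finset.mem_powerset]
    exact ⟨π.le (π.part_mem.2 ha), π.mem_part ha⟩
  refine Finset.sum_congr rfl fun B hB => ?_
  simp only [Finset.mem_filter, Finset.mem_powerset] at hB
  obtain ⟨hBs, haB⟩ := hB
  have hBne : B.Nonempty := ⟨a, haB⟩
  have hfe : (univ.filter fun π : Finpartition s => π.part a = B)
      = univ.filter fun π : Finpartition s => B ∈ π.parts := by
    ext π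
    simp only [Finset.mem_filter, Finset.mem_univ, true_and]
    constructor
    · rintro rfl; exact π.part_mem.2 ha
    · intro h; exact π.part_eq_of_mem h haB
  rw [hfe, ← sum_insertP hBs hBne, Finset.mul_sum]
  refine Finset.sum_congr rfl fun π _ => ?_
  rw [insertP_parts, Finset.prod_insert (not_mem_sdiff_parts hBne π)]


/-- The set-indexed correlation function built from set-indexed marginals `F'`. -/
noncomputable def Gv (F' : Finset α → ℝ) (t : Finset α) : ℝ :=
  ∑ ρ : Finpartition t, w ρ.parts.card * ∏ C ∈ ρ.parts, F' C

lemma filter_mem_parts {s : Finset α} {a : α} (ha : a ∈ s) (τ : Finpartition s) :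
    (τ.parts.filter (fun B => a ∈ B)) = {τ.part a} := by
  ext B
  simp only [Finset.mem_filter, Finset.mem_singleton]
  constructor
  · rintro ⟨hB, haB⟩; exact (τ.part_eq_of_mem hB haB).symm
  · rintro rfl; exact ⟨τ.part_mem.2 ha, τ.mem_part ha⟩

lemma card_filter_not_mem {s : Finset α} {a : α} (ha : a ∈ s) (τ : Finpartition s) :
    (τ.parts.filter (fun B => a ∉ B)).card = τ.parts.card - 1 := by
  have h := Finset.card_filter_add_card_filter_not
    (s := τ.parts) (p := fun B => a ∈ B)
  rw [filter_mem_parts ha τ] at h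
  simp only [Finset.card_singleton] at h
  omega

lemma card_parts_pos {s : Finset α} (hs : s.Nonempty) (τ : Finpartition s) :
    1 ≤ τ.parts.card :=
  Finset.card_pos.mpr (τ.parts_nonempty (by simpa [Finset.bot_eq_empty] using hs.ne_empty))

lemma parts_card_eq_one {s : Finset α} (hs : s.Nonempty) (τ : Finpartition s)
    (h : τ.parts.card = 1) : τ.parts = {s} := by
  obtain ⟨B, hB⟩ := Finset.card_eq_one.mp h
  have : s = B := by rw [← τ.sup_parts, hB, Finset.sup_singleton, id_eq]
  rw [hB, this]

/-- The key identity: the cluster recursion for the correlation functions. -/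
lemma claimC (F' : Finset α → ℝ) (hF' : F' ∅ = 1) {s : Finset α} {a : α} (ha : a ∈ s) :
    ∑ D ∈ (s.erase a).powerset, F' D * Gv F' (s \ D) = F' s := by
  have hs : s.Nonempty := ⟨a, ha⟩
  -- split off the empty set
  rw [← Finset.add_sum_erase _ _ (Finset.empty_mem_powerset (s.erase a))]
  rw [hF', one_mul, Finset.sdiff_empty]
  -- rewrite each nonempty term as a sum over partitions of `s` containing `D`
  have step2 : ∀ D ∈ ((s.erase a).powerset.erase ∅),
      F' D * Gv F' (s \ D)
        = ∑ τ ∈ univ.filter (fun τ : Finpartition s => D ∈ τ.parts),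
            w (τ.parts.card - 1) * ∏ C ∈ τ.parts, F' C := by
    intro D hD
    simp only [Finset.mem_erase, Finset.mem_powerset] at hD
    have hDne : D.Nonempty := Finset.nonempty_iff_ne_empty.mpr hD.1
    have hDs : D ⊆ s := hD.2.trans (Finset.erase_subset _ _)
    rw [← sum_insertP hDs hDne]
    unfold Gv
    rw [Finset.mul_sum]
    refine Finset.sum_congr rfl fun ρ _ => ?_
    have hnm := not_mem_sdiff_parts hDne ρ
    rw [insertP_parts, Finset.card_insert_of_notMem hnm,
      Finset.prod_insert hnm, Nat.add_sub_cancel]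
    ring
  rw [Finset.sum_congr rfl step2]
  -- swap the two sums
  have step3 : ∑ D ∈ ((s.erase a).powerset.erase ∅),
      ∑ τ ∈ univ.filter (fun τ : Finpartition s => D ∈ τ.parts),
        w (τ.parts.card - 1) * ∏ C ∈ τ.parts, F' C
      = ∑ τ : Finpartition s, ((τ.parts.card - 1 : ℕ) : ℝ) *
          (w (τ.parts.card - 1) * ∏ C ∈ τ.parts, F' C) := by
    simp only [Finset.sum_filter]
    rw [Finset.sum_comm]
    refine Finset.sum_congr rfl fun τ _ => ?_
    rw [← Finset.sum_filter]
    have hfe : ((s.erase a).powerset.erase ∅).filter (fun D => D ∈ τ.parts)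
        = τ.parts.filter (fun B => a ∉ B) := by
      ext D
      simp only [Finset.mem_filter, Finset.mem_erase, Finset.mem_powerset]
      constructor
      · rintro ⟨⟨hne, hsub⟩, hmem⟩
        exact ⟨hmem, fun haD => (Finset.notMem_erase a s) (hsub haD)⟩
      · rintro ⟨hmem, haD⟩
        refine ⟨⟨?_, Finset.subset_erase.mpr ⟨τ.le hmem, haD⟩⟩, hmem⟩
        simpa [Finset.bot_eq_empty] using τ.ne_bot hmem
    rw [hfe, Finset.sum_const, card_filter_not_mem ha τ, nsmul_eq_mul]
  rw [step3]
  -- recombine coefficients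
  unfold Gv
  rw [← Finset.sum_add_distrib]
  have step4 : ∀ τ : Finpartition s,
      w τ.parts.card * ∏ C ∈ τ.parts, F' C
        + ((τ.parts.card - 1 : ℕ) : ℝ) * (w (τ.parts.card - 1) * ∏ C ∈ τ.parts, F' C)
      = (if τ.parts.card = 1 then 1 else 0) * ∏ C ∈ τ.parts, F' C := by
    intro τ
    rw [← w_add (card_parts_pos hs τ)]
    ring
  rw [Finset.sum_congr rfl (fun τ _ => step4 τ)]
  -- only the indiscrete partition survives
  have hsne : s ≠ ⊥ := by simpa [Finset.bot_eq_empty] using hs.ne_empty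
  rw [Fintype.sum_eq_single (Finpartition.indiscrete hsne)]
  · have : (Finpartition.indiscrete hsne).parts = {s} := rfl
    rw [this]
    simp
  · intro τ hτ
    have hcard : τ.parts.card ≠ 1 := by
      intro h
      exact hτ (Finpartition.ext (by rw [parts_card_eq_one hs τ h]; rfl))
    rw [if_neg hcard, zero_mul]


/-- Inversion: the marginals are recovered from the correlation functions. -/
lemma inversion (F' : Finset α → ℝ) (hF' : F' ∅ = 1) (s : Finset α) :
    ∑ π : Finpartition s, ∏ B ∈ π.parts, Gv F' B = F' s := by
  induction s using Finset.strongInduction with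
  | _ s ih =>
    rcases s.eq_empty_or_nonempty with rfl | ⟨a, ha⟩
    · have hparts : ∀ π : Finpartition (∅ : Finset α), π.parts = ∅ :=
        fun π => (Finpartition.parts_eq_empty_iff (P := π)).mpr rfl
      have hcard : Fintype.card (Finpartition (∅ : Finset α)) = 1 :=
        Fintype.card_eq_one_iff.mpr
          ⟨⊥, fun π => Finpartition.ext (by rw [hparts, hparts])⟩
      rw [Finset.sum_congr rfl (fun π _ => by rw [hparts π, Finset.prod_empty])]
      rw [Finset.sum_const, Finset.card_univ, hcard, hF']
      simp
    · rw [sum_finpartition_part ha (Gv F')]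
      have step : ∀ B ∈ s.powerset.filter (fun B => a ∈ B),
          Gv F' B * ∑ π' : Finpartition (s \ B), ∏ C ∈ π'.parts, Gv F' C
            = Gv F' B * F' (s \ B) := by
        intro B hB
        simp only [Finset.mem_filter, Finset.mem_powerset] at hB
        rw [ih (s \ B) (Finset.sdiff_ssubset hB.1 ⟨a, hB.2⟩)]
      rw [Finset.sum_congr rfl step]
      rw [← claimC F' hF' ha]
      refine Finset.sum_nbij' (fun B => s \ B) (fun D => s \ D) ?_ ?_ ?_ ?_ ?_
      · intro B hB
        simp only [Finset.mem_filter, Finset.mem_powerset] at hB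
        exact Finset.mem_powerset.mpr
          (Finset.subset_erase.mpr ⟨Finset.sdiff_subset, fun h => (Finset.mem_sdiff.mp h).2 hB.2⟩)
      · intro D hD
        simp only [Finset.mem_powerset] at hD
        simp only [Finset.mem_filter, Finset.mem_powerset]
        refine ⟨Finset.sdiff_subset, Finset.mem_sdiff.mpr ⟨ha, fun h => ?_⟩⟩
        exact (Finset.notMem_erase a s) (hD h)
      · intro B hB
        simp only [Finset.mem_filter, Finset.mem_powerset] at hB
        exact Finset.sdiff_sdiff_eq_self hB.1
      · intro D hD
        simp only [Finset.mem_powerset] at hD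
        exact Finset.sdiff_sdiff_eq_self (hD.trans (Finset.erase_subset _ _))
      · intro B hB
        simp only [Finset.mem_filter, Finset.mem_powerset] at hB
        rw [Finset.sdiff_sdiff_eq_self hB.1, mul_comm]


/-- Push a finpartition forward along an embedding. -/
def imageEmb {β : Type*} [DecidableEq β] (e : β ↪ α) {t : Finset β} (π : Finpartition t) :
    Finpartition (t.image ⇑e) where
  parts := π.parts.image (Finset.image ⇑e)
  supIndep := by
    rw [Finset.supIndep_iff_pairwiseDisjoint]
    rintro x hx y hy hxy
    simp only [Finset.coe_image, Set.mem_image, Finset.mem_coe] at hx hy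
    obtain ⟨C, hC, rfl⟩ := hx
    obtain ⟨D, hD, rfl⟩ := hy
    have hCD : C ≠ D := fun h => hxy (by rw [h])
    exact (Finset.disjoint_image e.injective).mpr (π.disjoint hC hD hCD)
  sup_parts := by
    ext x
    simp only [Finset.mem_sup, Finset.mem_image, id_eq]
    constructor
    · rintro ⟨X, ⟨C, hC, rfl⟩, hxX⟩
      obtain ⟨b, hbC, rfl⟩ := Finset.mem_image.mp hxX
      exact ⟨b, π.le hC hbC, rfl⟩
    · rintro ⟨b, hb, rfl⟩
      obtain ⟨C, hC, hbC⟩ := π.exists_mem hb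
      exact ⟨C.image ⇑e, ⟨C, hC, rfl⟩, Finset.mem_image_of_mem _ hbC⟩
  bot_notMem := by
    simp only [Finset.bot_eq_empty, Finset.mem_image]
    rintro ⟨C, hC, hCe⟩
    exact π.bot_notMem (by rw [Finset.bot_eq_empty, ← Finset.image_eq_empty.mp hCe]; exact hC)

@[simp] lemma imageEmb_parts {β : Type*} [DecidableEq β] (e : β ↪ α) {t : Finset β}
    (π : Finpartition t) : (imageEmb e π).parts = π.parts.image (Finset.image ⇑e) := rfl

lemma image_filter_preimage {β : Type*} [DecidableEq β] (e : β ↪ α) {t : Finset β}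
    {C : Finset α} (hC : C ⊆ t.image ⇑e) :
    (t.filter (fun b => e b ∈ C)).image ⇑e = C := by
  ext x
  simp only [Finset.mem_image, Finset.mem_filter]
  constructor
  · rintro ⟨b, ⟨_, hbe⟩, rfl⟩; exact hbe
  · intro hx
    obtain ⟨b, hbt, rfl⟩ := Finset.mem_image.mp (hC hx)
    exact ⟨b, ⟨hbt, hx⟩, rfl⟩

/-- Pull a finpartition of `t.image e` back along the embedding. -/
def preimageEmb {β : Type*} [DecidableEq β] (e : β ↪ α) {t : Finset β}
    (τ : Finpartition (t.image ⇑e)) : Finpartition t where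
  parts := τ.parts.image (fun C => t.filter (fun b => e b ∈ C))
  supIndep := by
    rw [Finset.supIndep_iff_pairwiseDisjoint]
    rintro x hx y hy hxy
    simp only [Finset.coe_image, Set.mem_image, Finset.mem_coe] at hx hy
    obtain ⟨C, hC, rfl⟩ := hx
    obtain ⟨D, hD, rfl⟩ := hy
    have hCD : C ≠ D := fun h => hxy (by rw [h])
    have hdisj := τ.disjoint hC hD hCD
    simp only [id_eq, Function.onFun]
    rw [Finset.disjoint_left]
    intro b hb1 hb2
    simp only [Finset.mem_filter] at hb1 hb2
    exact (Finset.disjoint_left.mp hdisj) hb1.2 hb2.2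
  sup_parts := by
    ext b
    simp only [Finset.mem_sup, Finset.mem_image, id_eq]
    constructor
    · rintro ⟨X, ⟨C, hC, rfl⟩, hbX⟩
      exact (Finset.mem_filter.mp hbX).1
    · intro hb
      obtain ⟨C, hC, hbC⟩ := τ.exists_mem (Finset.mem_image_of_mem ⇑e hb)
      exact ⟨t.filter (fun b => e b ∈ C), ⟨C, hC, rfl⟩, Finset.mem_filter.mpr ⟨hb, hbC⟩⟩
  bot_notMem := by
    simp only [Finset.bot_eq_empty, Finset.mem_image]
    rintro ⟨C, hC, hCe⟩
    obtain ⟨x, hx⟩ := τ.nonempty_of_mem_parts hC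
    obtain ⟨b, hbt, rfl⟩ := Finset.mem_image.mp (τ.le hC hx)
    have : b ∈ t.filter (fun b => e b ∈ C) := Finset.mem_filter.mpr ⟨hbt, hx⟩
    rw [hCe] at this
    exact absurd this (Finset.notMem_empty b)

lemma filter_image_self {β : Type*} [DecidableEq β] (e : β ↪ α) {t : Finset β}
    {C : Finset β} (hC : C ⊆ t) :
    t.filter (fun b => e b ∈ C.image ⇑e) = C := by
  ext b
  simp only [Finset.mem_filter]
  constructor
  · rintro ⟨hbt, hb⟩
    obtain ⟨b', hb', heq⟩ := Finset.mem_image.mp hb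
    rwa [← e.injective heq]
  · intro hb
    exact ⟨hC hb, Finset.mem_image_of_mem _ hb⟩

lemma sum_finpartition_image {β : Type*} [DecidableEq β] (e : β ↪ α) (t : Finset β)
    (φ : ℕ → ℝ) (v : Finset α → ℝ) :
    ∑ τ : Finpartition (t.image ⇑e), φ τ.parts.card * ∏ C ∈ τ.parts, v C
      = ∑ π : Finpartition t, φ π.parts.card * ∏ C ∈ π.parts, v (C.image ⇑e) := by
  have injfilter : ∀ τ : Finpartition (t.image ⇑e), Set.InjOn
      (fun C => t.filter (fun b => e b ∈ C)) (τ.parts : Set (Finset α)) := by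
    intro τ C hC D hD h
    have h' := congrArg (Finset.image ⇑e) h
    dsimp only at h'
    rwa [image_filter_preimage e (τ.le hC), image_filter_preimage e (τ.le hD)] at h'
  refine Finset.sum_nbij' (fun τ => preimageEmb e τ) (fun π => imageEmb e π)
    (fun _ _ => Finset.mem_univ _) (fun _ _ => Finset.mem_univ _) ?_ ?_ ?_
  · intro τ _
    apply Finpartition.ext
    show (τ.parts.image _).image _ = τ.parts
    rw [Finset.image_image]
    have : ∀ C ∈ τ.parts,
        ((t.filter (fun b => e b ∈ C)).image ⇑e) = C :=
      fun C hC => image_filter_preimage e (τ.le hC)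
    calc τ.parts.image (fun C => (t.filter (fun b => e b ∈ C)).image ⇑e)
        = τ.parts.image id := Finset.image_congr (fun C hC => this C hC)
      _ = τ.parts := Finset.image_id
  · intro π _
    apply Finpartition.ext
    show (π.parts.image _).image _ = π.parts
    rw [Finset.image_image]
    calc π.parts.image (fun C => t.filter (fun b => e b ∈ C.image ⇑e))
        = π.parts.image id := Finset.image_congr (fun C hC => filter_image_self e (π.le hC))
      _ = π.parts := Finset.image_id
  · intro τ _
    have hcard : (preimageEmb e τ).parts.card = τ.parts.card := by
      show (τ.parts.image _).card = _
      exact Finset.card_image_of_injOn (injfilter τ)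
    rw [hcard]
    congr 1
    rw [show (preimageEmb e τ).parts
        = τ.parts.image (fun C => t.filter (fun b => e b ∈ C)) from rfl,
      Finset.prod_image (injfilter τ)]
    exact (Finset.prod_congr rfl fun C hC => by
      rw [image_filter_preimage e (τ.le hC)]).symm

lemma sum_finpartition_congr {s t : Finset α} (h : s = t) (φ : Finset (Finset α) → ℝ) :
    ∑ π : Finpartition s, φ π.parts = ∑ π : Finpartition t, φ π.parts := by
  subst h; rfl


lemma blockEval_eq {Z : Type*} (F : (k : ℕ) → (Fin k → Z) → ℝ) {m : ℕ} (z : Fin m → Z)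
    (s : Finset (Fin m)) {k : ℕ} (h : s.card = k) :
    blockEval F z s = F k (fun j => z (s.orderEmbOfFin h j)) := by
  subst h; rfl

/-- Key reindexing: `blockEval` of the Möbius correlation evaluates to `Gv`. -/
lemma blockEval_mobius {Z : Type*} (F : (k : ℕ) → (Fin k → Z) → ℝ) {m : ℕ}
    (z : Fin m → Z) (B : Finset (Fin m)) :
    blockEval (mobiusCorrelation F) z B = Gv (blockEval F z) B := by
  set e := B.orderEmbOfFin rfl with he
  have himg : (univ : Finset (Fin B.card)).image ⇑e.toEmbedding = B := by
    ext x
    simp only [Finset.mem_image, Finset.mem_univ, true_and]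
    constructor
    · rintro ⟨j, rfl⟩
      exact Finset.orderEmbOfFin_mem B rfl j
    · intro hx
      have : x ∈ Set.range ⇑(B.orderEmbOfFin rfl) := by
        rw [Finset.range_orderEmbOfFin]; exact_mod_cast hx
      obtain ⟨j, hj⟩ := this
      exact ⟨j, hj⟩
  have key : ∀ C : Finset (Fin B.card),
      blockEval F (fun j => z (e j)) C = blockEval F z (C.image ⇑e.toEmbedding) := by
    intro C
    have hcard : (C.image ⇑e.toEmbedding).card = C.card :=
      Finset.card_image_of_injective C e.toEmbedding.injective
    rw [blockEval_eq F z (C.image ⇑e.toEmbedding) hcard]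
    have hemb : ⇑e ∘ ⇑(C.orderEmbOfFin rfl) = ⇑((C.image ⇑e.toEmbedding).orderEmbOfFin hcard) :=
      Finset.orderEmbOfFin_unique hcard
        (fun x => Finset.mem_image_of_mem _ (Finset.orderEmbOfFin_mem C rfl x))
        (e.strictMono.comp (C.orderEmbOfFin rfl).strictMono)
    show F C.card (fun j => z (e (C.orderEmbOfFin rfl j))) = _
    congr 1
    funext j
    rw [← congrFun hemb j]
    rfl
  show mobiusCorrelation F B.card (fun j => z (e j)) = Gv (blockEval F z) B
  unfold mobiusCorrelation
  have h1 : ∀ π : Finpartition (univ : Finset (Fin B.card)),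
      ((π.parts.card - 1).factorial : ℝ) * (-1 : ℝ) ^ (π.parts.card - 1) *
          ∏ C ∈ π.parts, blockEval F (fun j => z (e j)) C
        = w π.parts.card * ∏ C ∈ π.parts, blockEval F z (C.image ⇑e.toEmbedding) := by
    intro π
    rw [show w π.parts.card
      = ((π.parts.card - 1).factorial : ℝ) * (-1 : ℝ) ^ (π.parts.card - 1) from rfl]
    congr 1
    exact Finset.prod_congr rfl fun C _ => key C
  rw [Finset.sum_congr rfl fun π _ => h1 π]
  rw [← sum_finpartition_image e.toEmbedding univ w (blockEval F z)]
  unfold Gv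
  exact sum_finpartition_congr himg
    (fun P => w P.card * ∏ C ∈ P, blockEval F z C)

lemma tilde_ne_one {Z : Type*} (F : (k : ℕ) → (Fin k → Z) → ℝ) (f : Z → ℝ) {k : ℕ}
    (hk : k ≠ 1) : tildeCorrelation F f k = mobiusCorrelation F k := by
  match k with
  | 0 => rfl
  | 1 => exact absurd rfl hk
  | (n+2) => rfl


lemma Gv_singleton {m : ℕ} {Z : Type*} (F : (k : ℕ) → (Fin k → Z) → ℝ) (z : Fin m → Z)
    (i : Fin m) : Gv (blockEval F z) {i} = blockEval F z {i} := by
  unfold Gv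
  rw [sum_finpartition_singleton i
    (fun π => w π.parts.card * ∏ C ∈ π.parts, blockEval F z C)]
  rw [parts_of_singleton i ⊥]
  simp [w_one]

lemma blockEval_singleton {m : ℕ} {Z : Type*} (G : (k : ℕ) → (Fin k → Z) → ℝ)
    (z : Fin m → Z) (i : Fin m) :
    blockEval G z {i} = G 1 (fun _ => z i) := by
  show G ({i} : Finset (Fin m)).card _ = G 1 _
  have hc : ({i} : Finset (Fin m)).card = 1 := Finset.card_singleton i
  congr 1
  · funext j
    congr 1
    exact Finset.orderEmbOfFin_singleton i j

/-- M1: the tilde correlation per block. -/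
lemma blockEval_tilde {Z : Type*} (F : (k : ℕ) → (Fin k → Z) → ℝ) (f : Z → ℝ) {m : ℕ}
    (z : Fin m → Z) (B : Finset (Fin m)) (hB : B.Nonempty) :
    blockEval (tildeCorrelation F f) z B
      = Gv (blockEval F z) B + (if B.card = 1 then -(∏ i ∈ B, f (z i)) else 0) := by
  rcases eq_or_ne B.card 1 with h1 | h1
  · obtain ⟨i, rfl⟩ := Finset.card_eq_one.mp h1
    rw [if_pos h1, Gv_singleton, blockEval_singleton (tildeCorrelation F f) z i,
      blockEval_singleton F z i]
    have : tildeCorrelation F f 1 (fun _ => z i) = F 1 (fun _ => z i) - f (z i) := rfl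
    rw [this, Finset.prod_singleton]
    ring
  · rw [if_neg h1, add_zero]
    have : blockEval (tildeCorrelation F f) z B = blockEval (mobiusCorrelation F) z B := by
      unfold blockEval
      rw [tilde_ne_one F f h1]
    rw [this, blockEval_mobius]


/-- Remove a set of parts from a finpartition. -/
def restrict {s : Finset α} (π : Finpartition s) (S : Finset (Finset α)) (hS : S ⊆ π.parts) :
    Finpartition (s \ S.sup id) where
  parts := π.parts \ S
  supIndep := π.supIndep.subset Finset.sdiff_subset
  sup_parts := by
    have hdisj : Disjoint ((π.parts \ S).sup id) (S.sup id) := by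
      rw [Finset.disjoint_sup_right]
      intro C hC
      rw [Finset.disjoint_sup_left]
      intro B hB
      have hBS := Finset.mem_sdiff.mp hB
      exact π.disjoint hBS.1 (hS hC) (fun h => hBS.2 (h ▸ hC))
    have hunion : (π.parts \ S).sup id ⊔ S.sup id = s := by
      rw [← Finset.sup_union, Finset.sdiff_union_of_subset hS, π.sup_parts]
    calc (π.parts \ S).sup id
        = ((π.parts \ S).sup id ∪ S.sup id) \ S.sup id :=
          (Finset.union_sdiff_cancel_right hdisj).symm
      _ = s \ S.sup id := by rw [← sup_eq_union, hunion]
  bot_notMem := fun h => π.bot_notMem (Finset.mem_sdiff.mp h).1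

@[simp] lemma restrict_parts {s : Finset α} (π : Finpartition s) (S : Finset (Finset α))
    (hS : S ⊆ π.parts) : (restrict π S hS).parts = π.parts \ S := rfl

/-- Extend a finpartition of `s \ T` by the singletons of `T`. -/
def extendSingletons {s T : Finset α} (hT : T ⊆ s) (π : Finpartition (s \ T)) :
    Finpartition s where
  parts := π.parts ∪ T.image (fun i => ({i} : Finset α))
  supIndep := by
    rw [Finset.supIndep_iff_pairwiseDisjoint]
    rintro x hx y hy hxy
    simp only [Finset.coe_union, Set.mem_union, Finset.mem_coe, Finset.coe_image,
      Set.mem_image] at hx hy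
    have hsd : ∀ C ∈ π.parts, ∀ i ∈ T, Disjoint C {i} := by
      intro C hC i hi
      rw [Finset.disjoint_singleton_right]
      intro hiC
      exact (Finset.mem_sdiff.mp (π.le hC hiC)).2 hi
    rcases hx with hx | ⟨i, hi, rfl⟩ <;> rcases hy with hy | ⟨j, hj, rfl⟩
    · exact π.disjoint hx hy hxy
    · exact hsd _ hx _ hj
    · exact (hsd _ hy _ hi).symm
    · simp only [Function.onFun, id_eq, Finset.disjoint_singleton]
      exact fun h => hxy (by rw [h])
  sup_parts := by
    rw [Finset.sup_union, π.sup_parts, Finset.sup_image]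
    have : T.sup ((id : Finset α → Finset α) ∘ fun i => ({i} : Finset α))
        = T.sup (fun i => ({i} : Finset α)) := rfl
    rw [this, Finset.sup_singleton_eq_self, sup_eq_union, Finset.sdiff_union_of_subset hT]
  bot_notMem := by
    rw [Finset.mem_union]
    rintro (h | h)
    · exact π.bot_notMem h
    · obtain ⟨i, _, hi⟩ := Finset.mem_image.mp h
      exact (Finset.singleton_ne_empty i) (by rw [← Finset.bot_eq_empty, hi])

@[simp] lemma extendSingletons_parts {s T : Finset α} (hT : T ⊆ s)
    (π : Finpartition (s \ T)) :
    (extendSingletons hT π).parts = π.parts ∪ T.image (fun i => ({i} : Finset α)) := rfl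

lemma sup_singletons {S : Finset (Finset α)} (h : ∀ B ∈ S, B.card = 1) :
    (S.sup id).image (fun i => ({i} : Finset α)) = S := by
  ext C
  simp only [Finset.mem_image, Finset.mem_sup, id_eq]
  constructor
  · rintro ⟨i, ⟨B, hB, hiB⟩, rfl⟩
    obtain ⟨b, rfl⟩ := Finset.card_eq_one.mp (h B hB)
    rw [Finset.mem_singleton.mp hiB]
    exact hB
  · intro hC
    obtain ⟨i, rfl⟩ := Finset.card_eq_one.mp (h C hC)
    exact ⟨i, ⟨{i}, hC, Finset.mem_singleton_self i⟩, rfl⟩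


end ClusterExp

open ClusterExp

set_option maxHeartbeats 2000000 in
/-- Lemma 3.3 of the paper: for symmetric marginals `F_m`, the linear
correlations satisfy the same cluster expansion in terms of the nonlinear correlation
functions as the marginals do, up to replacing `G_1 = F_1` by `G̃_1 = F_1 − f`:
`H_m(z) = Σ_{π ⊢ [m]} Π_{B ∈ π} G̃_{#B}(z_B)` for all `1 ≤ m ≤ N`. -/
theorem linearCorrelation_cluster_expansion {Z : Type*} (N : ℕ) (hN : 1 ≤ N)
    (f : Z → ℝ) (F : (k : ℕ) → (Fin k → Z) → ℝ)
    (hF0 : ∀ z : Fin 0 → Z, F 0 z = 1)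
    (hFsymm : ∀ k, 1 ≤ k → k ≤ N → ∀ τ : Equiv.Perm (Fin k), ∀ z : Fin k → Z,
      F k (z ∘ τ) = F k z) :
    ∀ m, 1 ≤ m → m ≤ N → ∀ z : Fin m → Z,
      linearCorrelation F f m z =
        ∑ π : Finpartition (Finset.univ : Finset (Fin m)),
          ∏ B ∈ π.parts, blockEval (tildeCorrelation F f) z B := by
  intro m hm1 hmN z
  set F' : Finset (Fin m) → ℝ := blockEval F z with hF'def
  have hF'empty : F' ∅ = 1 := hF0 _
  set hv : Finset (Fin m) → ℝ :=
    fun B => if B.card = 1 then -(∏ i ∈ B, f (z i)) else 0 with hvdef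
  symm
  calc
    ∑ π : Finpartition (univ : Finset (Fin m)),
        ∏ B ∈ π.parts, blockEval (tildeCorrelation F f) z B
      = ∑ π : Finpartition (univ : Finset (Fin m)),
          ∏ B ∈ π.parts, (hv B + Gv F' B) := by
        refine Finset.sum_congr rfl fun π _ => Finset.prod_congr rfl fun B hB => ?_
        rw [blockEval_tilde F f z B (π.nonempty_of_mem_parts hB), add_comm]
    _ = ∑ π : Finpartition (univ : Finset (Fin m)),
          ∑ S ∈ π.parts.powerset, (∏ B ∈ S, hv B) * ∏ B ∈ π.parts \ S, Gv F' B := by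
        exact Finset.sum_congr rfl fun π _ => Finset.prod_add hv (Gv F') π.parts
    _ = ∑ π : Finpartition (univ : Finset (Fin m)),
          ∑ S ∈ π.parts.powerset.filter (fun S => ∀ B ∈ S, B.card = 1),
            (∏ B ∈ S, hv B) * ∏ B ∈ π.parts \ S, Gv F' B := by
        refine Finset.sum_congr rfl fun π _ => (Finset.sum_filter_of_ne ?_).symm
        intro S hS hne
        by_contra hforall
        push_neg at hforall
        obtain ⟨B, hBS, hB1⟩ := hforall
        apply hne
        have hzero : hv B = 0 := if_neg hB1
        rw [Finset.prod_eq_zero hBS hzero, zero_mul]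
    _ = ∑ x ∈ (univ : Finset (Finpartition (univ : Finset (Fin m)))).sigma
          (fun π => π.parts.powerset.filter (fun S => ∀ B ∈ S, B.card = 1)),
            (∏ B ∈ x.2, hv B) * ∏ B ∈ x.1.parts \ x.2, Gv F' B :=
        Finset.sum_sigma' _ _ _
    _ = ∑ y ∈ (univ : Finset (Fin m)).powerset.sigma
          (fun T => (univ : Finset (Finpartition ((univ : Finset (Fin m)) \ T)))),
            (∏ i ∈ y.1, -(f (z i))) * ∏ C ∈ y.2.parts, Gv F' C := by
        refine Finset.sum_nbij'
          (fun x => if h : x.2 ⊆ x.1.parts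
            then ⟨x.2.sup id, restrict x.1 x.2 h⟩ else ⟨x.2.sup id, ⊥⟩)
          (fun y => ⟨extendSingletons (Finset.subset_univ y.1) y.2,
            y.1.image (fun i => ({i} : Finset (Fin m)))⟩) ?_ ?_ ?_ ?_ ?_
        · rintro ⟨π, S⟩ hx
          simp only [Finset.mem_sigma, Finset.mem_univ, true_and, Finset.mem_filter,
            Finset.mem_powerset] at hx
          dsimp only
          rw [dif_pos hx.1]
          simp only [Finset.mem_sigma, Finset.mem_univ, and_true, Finset.mem_powerset]
          exact Finset.subset_univ _
        · rintro ⟨T, π'⟩ _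
          simp only [Finset.mem_sigma, Finset.mem_univ, true_and, Finset.mem_filter,
            Finset.mem_powerset]
          constructor
          · rw [extendSingletons_parts]
            exact Finset.subset_union_right
          · intro B hB
            obtain ⟨i, _, rfl⟩ := Finset.mem_image.mp hB
            exact Finset.card_singleton i
        · rintro ⟨π, S⟩ hx
          simp only [Finset.mem_sigma, Finset.mem_univ, true_and, Finset.mem_filter,
            Finset.mem_powerset] at hx
          obtain ⟨hS, hsing⟩ := hx
          dsimp only
          rw [dif_pos hS]
          refine Sigma.ext ?_ ?_
          · dsimp only
            apply Finpartition.ext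
            rw [extendSingletons_parts, restrict_parts, sup_singletons hsing,
              Finset.sdiff_union_of_subset hS]
          · dsimp only
            exact heq_of_eq (sup_singletons hsing)
        · rintro ⟨T, π'⟩ hy
          simp only [Finset.mem_sigma, Finset.mem_univ, and_true, Finset.mem_powerset] at hy
          have hsub : T.image (fun i => ({i} : Finset (Fin m)))
              ⊆ (extendSingletons (Finset.subset_univ T) π').parts := by
            rw [extendSingletons_parts]
            exact Finset.subset_union_right
          have hsup : (T.image (fun i => ({i} : Finset (Fin m)))).sup id = T := by
            rw [Finset.sup_image]
            exact Finset.sup_singleton_eq_self T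
          have hdisj : Disjoint π'.parts (T.image (fun i => ({i} : Finset (Fin m)))) := by
            rw [Finset.disjoint_right]
            rintro C hC hC'
            obtain ⟨i, hi, rfl⟩ := Finset.mem_image.mp hC
            have := π'.le hC' (Finset.mem_singleton_self i)
            exact (Finset.mem_sdiff.mp this).2 hi
          dsimp only
          rw [dif_pos hsub]
          refine Sigma.ext hsup ?_
          dsimp only
          refine fp_heq (by rw [hsup]) _ _ ?_
          rw [restrict_parts, extendSingletons_parts,
            Finset.union_sdiff_cancel_right hdisj]
        · rintro ⟨π, S⟩ hx
          simp only [Finset.mem_sigma, Finset.mem_univ, true_and, Finset.mem_filter,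
            Finset.mem_powerset] at hx
          obtain ⟨hS, hsing⟩ := hx
          dsimp only
          rw [dif_pos hS]
          dsimp only
          rw [restrict_parts]
          congr 1
          rw [Finset.sup_eq_biUnion,
            Finset.prod_biUnion (Finset.supIndep_iff_pairwiseDisjoint.mp
              (π.supIndep.subset hS))]
          refine Finset.prod_congr rfl fun B hB => ?_
          obtain ⟨b, rfl⟩ := Finset.card_eq_one.mp (hsing B hB)
          simp [hvdef]
    _ = ∑ T ∈ (univ : Finset (Fin m)).powerset,
          (∏ i ∈ T, -(f (z i))) * F' ((univ : Finset (Fin m)) \ T) := by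
        rw [Finset.sum_sigma]
        refine Finset.sum_congr rfl fun T _ => ?_
        rw [← inversion F' hF'empty ((univ : Finset (Fin m)) \ T), Finset.mul_sum]
    _ = ∑ σ ∈ (univ : Finset (Fin m)).powerset,
          (∏ i ∈ (univ : Finset (Fin m)) \ σ, -(f (z i))) * F' σ := by
        refine Finset.sum_nbij' (fun T => (univ : Finset (Fin m)) \ T)
          (fun σ => (univ : Finset (Fin m)) \ σ) ?_ ?_ ?_ ?_ ?_ <;>
          intro T hT <;>
          simp only [Finset.mem_powerset] at *
        · exact Finset.sdiff_subset
        · exact Finset.sdiff_subset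
        · exact Finset.sdiff_sdiff_eq_self hT
        · exact Finset.sdiff_sdiff_eq_self hT
        · rw [Finset.sdiff_sdiff_eq_self hT]
    _ = linearCorrelation F f m z := by
        unfold linearCorrelation
        have hcard : (univ : Finset (Fin m)).card = m := by
          rw [Finset.card_univ, Fintype.card_fin]
        rw [Finset.sum_powerset, hcard]
        refine Finset.sum_congr rfl fun k hk => ?_
        rw [Finset.mul_sum]
        refine Finset.sum_congr rfl fun σ hσ => ?_
        obtain ⟨hσu, hσc⟩ := Finset.mem_powersetCard.mp hσ
        have h1 : (univ : Finset (Fin m)) \ σ = σᶜ := (Finset.compl_eq_univ_sdiff σ).symm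
        have h2 : (σᶜ : Finset (Fin m)).card = m - k := by
          rw [Finset.card_compl, Fintype.card_fin, hσc]
        rw [h1]
        have h3 : ∏ i ∈ (σᶜ : Finset (Fin m)), -(f (z i))
            = (-1 : ℝ) ^ (m - k) * ∏ i ∈ (σᶜ : Finset (Fin m)), f (z i) := by
          rw [← h2]
          rw [show (fun i => -(f (z i))) = fun i => (-1 : ℝ) * f (z i) by funext i; ring]
          rw [Finset.prod_mul_distrib, Finset.prod_const]
        rw [h3]
        ring
end

section
/- Let (Z, μ) be a measure space, N ≥ 1, and for 1 ≤ k ≤ N let F_k ∈ L¹(μ^{⊗k}) be symmetric functions satisfying the marginal consistency relations: for all 2 ≤ k ≤ N, ∫_Z F_k(z_1,…,z_{k−1}, z) dμ(z) = F_{k−1}(z_1,…,z_{k−1}) for μ^{⊗(k−1)}-almost every (z_1,…,z_{k−1}) (with convention F_0 = 1 and ∫_Z F_1 dμ = 1). Let f ∈ L¹(μ) and let φ : Z → ℝ be a bounded measurable function. Define the linear correlations H_m : Z^m → ℝ for 0 ≤ m ≤ N by H_m(z_1,…,z_m) = Σ_{k=0}^m (−1)^{m−k} Σ_{σ ∈ P^m_k}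 F_k(z_σ) Π_{i ∈ [m]∖σ} f(z_i). Then for every 1 ≤ m ≤ N, ∫_{Z^m} Π_{i=1}^m φ(z_i) · H_m(z_1,…,z_m) dμ^{⊗m} = ∫_{Z^m} Π_{i=1}^m (φ(z_i) − ∫_Z φ f dμ) · F_m(z_1,…,z_m) dμ^{⊗m}. -/
open Finset MeasureTheory

section Aux
variable {Z : Type*} [MeasurableSpace Z] (μ : Measure Z) [SigmaFinite μ]

lemma aux_integral_comp_perm {m : ℕ} (τ : Equiv.Perm (Fin m)) (g : (Fin m → Z) → ℝ) :
    ∫ z : Fin m → Z, g (z ∘ τ) ∂(Measure.pi fun _ : Fin m => μ)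
      = ∫ z : Fin m → Z, g z ∂(Measure.pi fun _ : Fin m => μ) := by
  have h := measurePreserving_piCongrLeft (fun _ : Fin m => μ) τ.symm
  have hco : ∀ z : Fin m → Z,
      (MeasurableEquiv.piCongrLeft (fun _ : Fin m => Z) τ.symm) z = z ∘ τ := by
    intro z
    funext j
    rw [MeasurableEquiv.coe_piCongrLeft]
    have := Equiv.piCongrLeft_apply_apply (fun _ : Fin m => Z) τ.symm z (τ j)
    simpa using this
  rw [← h.integral_comp' g]
  simp_rw [hco]

lemma aux_integral_comp_perm_integrable {m : ℕ} (τ : Equiv.Perm (Fin m))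
    (g : (Fin m → Z) → ℝ) (hg : Integrable g (Measure.pi fun _ : Fin m => μ)) :
    Integrable (fun z : Fin m → Z => g (z ∘ τ)) (Measure.pi fun _ : Fin m => μ) := by
  have h := measurePreserving_piCongrLeft (fun _ : Fin m => μ) τ.symm
  have hco : ∀ z : Fin m → Z,
      (MeasurableEquiv.piCongrLeft (fun _ : Fin m => Z) τ.symm) z = z ∘ τ := by
    intro z
    funext j
    rw [MeasurableEquiv.coe_piCongrLeft]
    have := Equiv.piCongrLeft_apply_apply (fun _ : Fin m => Z) τ.symm z (τ j)
    simpa using this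
  have := (h.integrable_comp_emb
    (MeasurableEquiv.measurableEmbedding _)).mpr hg
  simpa [Function.comp_def, hco] using this

end Aux

section Aux2
variable {Z : Type*} [MeasurableSpace Z] (μ : Measure Z) [SigmaFinite μ]

lemma aux_integral_snoc {n : ℕ} (g : (Fin (n+1) → Z) → ℝ)
    (hg : Integrable g (Measure.pi fun _ : Fin (n+1) => μ)) :
    ∫ z : Fin (n+1) → Z, g z ∂(Measure.pi fun _ : Fin (n+1) => μ)
      = ∫ w : Fin n → Z, ∫ x : Z, g (Fin.snoc w x) ∂μ
          ∂(Measure.pi fun _ : Fin n => μ) := by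
  have h := (measurePreserving_piFinSuccAbove (fun _ : Fin (n+1) => μ) (Fin.last n)).symm
  have hco : ∀ p : Z × (Fin n → Z),
      (MeasurableEquiv.piFinSuccAbove (fun _ : Fin (n+1) => Z) (Fin.last n)).symm p
        = Fin.snoc p.2 p.1 := by
    intro p
    rw [MeasurableEquiv.piFinSuccAbove_symm_apply]
    exact Fin.insertNth_last' p.1 p.2
  have hint : Integrable
      (fun p : Z × (Fin n → Z) => g (Fin.snoc p.2 p.1))
      (μ.prod (Measure.pi fun _ : Fin n => μ)) := by
    have := (h.integrable_comp_emb
      (MeasurableEquiv.measurableEmbedding _)).mpr hg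
    refine this.congr (Filter.Eventually.of_forall fun p => ?_)
    simp only [Function.comp_apply, hco]
  rw [← h.integral_comp']
  simp_rw [hco]
  rw [MeasureTheory.integral_prod _ hint]
  exact integral_integral_swap (by exact hint)

end Aux2

section Aux3
variable {Z : Type*} [MeasurableSpace Z] (μ : Measure Z) [SigmaFinite μ]

/-- bound for products of a bounded function -/
lemma aux_prod_abs_le {ι : Type*} (s : Finset ι) (φ : Z → ℝ) {M : ℝ}
    (hM : ∀ x, |φ x| ≤ M) (g : ι → Z) :
    |∏ i ∈ s, φ (g i)| ≤ (max M 1) ^ s.card := by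
  rw [Finset.abs_prod]
  calc ∏ i ∈ s, |φ (g i)| ≤ ∏ i ∈ s, max M 1 := by
        apply Finset.prod_le_prod (fun i _ => abs_nonneg _)
        exact fun i _ => le_trans (hM _) (le_max_left _ _)
    _ = (max M 1) ^ s.card := by rw [Finset.prod_const]

lemma aux_marginal_step {F : (k : ℕ) → (Fin k → Z) → ℝ} {j : ℕ}
    (hFint : Integrable (F (j+1)) (Measure.pi fun _ : Fin (j+1) => μ))
    (hm : ∀ᵐ w ∂(Measure.pi fun _ : Fin j => μ),
      ∫ x, F (j+1) (Fin.snoc w x) ∂μ = F j w)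
    (G : (Fin j → Z) → ℝ) (hGmeas : Measurable G) {C : ℝ}
    (hGbdd : ∀ w, |G w| ≤ C) :
    ∫ z : Fin (j+1) → Z, G (Fin.init z) * F (j+1) z
        ∂(Measure.pi fun _ : Fin (j+1) => μ)
      = ∫ w : Fin j → Z, G w * F j w ∂(Measure.pi fun _ : Fin j => μ) := by
  have hinitmeas : Measurable (fun z : Fin (j+1) → Z => G (Fin.init z)) := by
    apply hGmeas.comp
    exact measurable_pi_lambda _ fun i => measurable_pi_apply _
  have hInt : Integrable (fun z : Fin (j+1) → Z => G (Fin.init z) * F (j+1) z)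
      (Measure.pi fun _ : Fin (j+1) => μ) :=
    hFint.bdd_mul hinitmeas.aestronglyMeasurable (c := C) (Filter.Eventually.of_forall fun z => by
      simpa using hGbdd (Fin.init z))
  rw [aux_integral_snoc μ _ hInt]
  simp_rw [Fin.init_snoc, integral_const_mul]
  refine integral_congr_ae (hm.mono fun w hw => ?_)
  dsimp only
  rw [hw]

end Aux3

section Aux4
variable {Z : Type*} [MeasurableSpace Z] (μ : Measure Z) [SigmaFinite μ]

lemma aux_pi_one_eq (g : Z → ℝ) :
    ∫ z : Fin 1 → Z, g (z 0) ∂(Measure.pi fun _ : Fin 1 => μ) = ∫ x, g x ∂μ := by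
  have h := measurePreserving_funUnique μ (Fin 1)
  rw [← h.integral_comp' g]
  rfl

lemma aux_A0 (F : (k : ℕ) → (Fin k → Z) → ℝ) (hF0 : ∀ z : Fin 0 → Z, F 0 z = 1)
    (φ : Z → ℝ) :
    ∫ z : Fin 0 → Z, (∏ i : Fin 0, φ (z i)) * F 0 z
        ∂(Measure.pi fun _ : Fin 0 => μ) = 1 := by
  have : (Measure.pi fun _ : Fin 0 => μ) = Measure.dirac isEmptyElim :=
    Measure.pi_of_empty _
  rw [this]
  rw [integral_dirac]
  simp [hF0]

end Aux4

section Aux5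
variable {Z : Type*} [MeasurableSpace Z] (μ : Measure Z) [SigmaFinite μ]

lemma aux_int_one (N : ℕ) (F : (k : ℕ) → (Fin k → Z) → ℝ)
    (hFint : ∀ k, 1 ≤ k → k ≤ N → Integrable (F k) (Measure.pi fun _ : Fin k => μ))
    (hF1 : ∫ z, F 1 (fun _ => z) ∂μ = 1)
    (hmarg : ∀ k, 1 ≤ k → k + 1 ≤ N →
      ∀ᵐ w ∂(Measure.pi fun _ : Fin k => μ),
        ∫ z, F (k + 1) (Fin.snoc w z) ∂μ = F k w) :
    ∀ j, 1 ≤ j → j ≤ N → ∫ z : Fin j → Z, F j z ∂(Measure.pi fun _ : Fin j => μ) = 1 := by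
  intro j hj
  induction j, hj using Nat.le_induction with
  | base => ?_
  | succ j hj ih => ?_
  · intro _
    have hz : ∀ z : Fin 1 → Z, F 1 z = F 1 (fun _ => z 0) := by
      intro z
      congr 1
      funext i
      have : i = 0 := Subsingleton.elim i 0
      rw [this]
    simp_rw [hz]
    rw [aux_pi_one_eq μ (fun x => F 1 (fun _ => x))]
    exact hF1
  · intro hjN
    have hstep := aux_marginal_step μ (hFint (j+1) (by omega) hjN)
      (hmarg j hj hjN) (fun _ => (1:ℝ)) measurable_const
      (C := 1) (fun w => by norm_num)
    simpa using hstep.trans (by simpa using ih (by omega))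

lemma aux_reduce (N : ℕ) (F : (k : ℕ) → (Fin k → Z) → ℝ)
    (hFint : ∀ k, 1 ≤ k → k ≤ N → Integrable (F k) (Measure.pi fun _ : Fin k => μ))
    (hmarg : ∀ k, 1 ≤ k → k + 1 ≤ N →
      ∀ᵐ w ∂(Measure.pi fun _ : Fin k => μ),
        ∫ z, F (k + 1) (Fin.snoc w z) ∂μ = F k w)
    (φ : Z → ℝ) (hφmeas : Measurable φ) {M : ℝ} (hM : ∀ x, |φ x| ≤ M)
    (k : ℕ) (hk1 : 1 ≤ k) :
    ∀ m, ∀ (hkm : k ≤ m), m ≤ N →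
    ∫ z : Fin m → Z, (∏ i : Fin k, φ (z (Fin.castLE hkm i))) * F m z
        ∂(Measure.pi fun _ : Fin m => μ)
      = ∫ z : Fin k → Z, (∏ i, φ (z i)) * F k z ∂(Measure.pi fun _ : Fin k => μ) := by
  intro m hkm
  induction m, hkm using Nat.le_induction with
  | base => ?_
  | succ m hkm ih => ?_
  · intro _
    congr 1
  · intro hmN
    have hkm' : k ≤ m + 1 := by omega
    have hGmeas : Measurable (fun w : Fin m → Z => ∏ i : Fin k, φ (w (Fin.castLE hkm i))) :=
      Finset.measurable_prod _ fun i _ => hφmeas.comp (measurable_pi_apply _)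
    have hGbdd : ∀ w : Fin m → Z,
        |∏ i : Fin k, φ (w (Fin.castLE hkm i))| ≤ (max M 1) ^ k := by
      intro w
      simpa using aux_prod_abs_le (Finset.univ : Finset (Fin k)) φ hM
        (fun i => w (Fin.castLE hkm i))
    have hstep := aux_marginal_step μ (hFint (m+1) (by omega) hmN)
      (hmarg m (by omega) hmN)
      (fun w => ∏ i : Fin k, φ (w (Fin.castLE hkm i))) hGmeas hGbdd
    have heq : ∀ z : Fin (m+1) → Z,
        (∏ i : Fin k, φ (Fin.init z (Fin.castLE hkm i)))
          = ∏ i : Fin k, φ (z (Fin.castLE hkm' i)) := by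
      intro z
      apply Finset.prod_congr rfl
      intro i _
      congr 1
    rw [← ih (by omega), ← hstep]
    apply integral_congr_ae
    filter_upwards with z
    rw [heq z]

end Aux5

section Aux6
variable {Z : Type*} [MeasurableSpace Z] (μ : Measure Z) [SigmaFinite μ]

lemma aux_sort {m : ℕ} (Fm : (Fin m → Z) → ℝ)
    (hFs : ∀ τ : Equiv.Perm (Fin m), ∀ z, Fm (z ∘ τ) = Fm z)
    (φ : Z → ℝ) (σ : Finset (Fin m)) (hkm : σ.card ≤ m) :
    ∫ z : Fin m → Z, (∏ i ∈ σ, φ (z i)) * Fm z ∂(Measure.pi fun _ : Fin m => μ)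
      = ∫ z : Fin m → Z, (∏ i : Fin σ.card, φ (z (Fin.castLE hkm i))) * Fm z
          ∂(Measure.pi fun _ : Fin m => μ) := by
  classical
  set k := σ.card with hk
  have hc : σᶜ.card = m - k := by
    rw [Finset.card_compl, Fintype.card_fin]
  have hlt : ∀ i : Fin m, ¬ ((i : ℕ) < k) → (i : ℕ) - k < m - k := by
    intro i hi
    have := i.isLt
    omega
  set p := σ.orderEmbOfFin (rfl : σ.card = k) with hp
  set q := σᶜ.orderEmbOfFin hc with hq
  set h : Fin m → Fin m := fun i =>
    if hi : (i : ℕ) < k then p ⟨i, hi⟩ else q ⟨(i : ℕ) - k, hlt i hi⟩ with hh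
  have hmemp : ∀ x : Fin k, p x ∈ σ := fun x => Finset.orderEmbOfFin_mem _ _ _
  have hmemq : ∀ x : Fin (m - k), q x ∈ σᶜ := fun x => Finset.orderEmbOfFin_mem _ _ _
  have hinj : Function.Injective h := by
    intro a b hab
    by_cases ha : (a : ℕ) < k <;> by_cases hb : (b : ℕ) < k
    · simp only [hh, dif_pos ha, dif_pos hb] at hab
      have hval := p.injective hab
      simp only [Fin.mk.injEq] at hval
      exact Fin.ext hval
    · simp only [hh, dif_pos ha, dif_neg hb] at hab
      exact absurd (hab ▸ hmemp ⟨a, ha⟩) (Finset.mem_compl.mp (hmemq _))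
    · simp only [hh, dif_neg ha, dif_pos hb] at hab
      exact absurd (hab ▸ hmemq _) (fun hx => (Finset.mem_compl.mp hx) (hmemp ⟨b, hb⟩))
    · simp only [hh, dif_neg ha, dif_neg hb] at hab
      have := q.injective hab
      have hv : (a : ℕ) - k = (b : ℕ) - k := congrArg Fin.val this
      exact Fin.ext (by omega)
  let τ : Equiv.Perm (Fin m) := Equiv.ofBijective h (Finite.injective_iff_bijective.mp hinj)
  have hτ : ∀ i, τ i = h i := fun i => rfl
  have hτp : ∀ i : Fin k, τ (Fin.castLE hkm i) = p i := by
    intro i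
    have hi : ((Fin.castLE hkm i : Fin m) : ℕ) < k := i.isLt
    rw [hτ]
    simp only [hh]
    rw [dif_pos hi]
    exact congrArg p (Fin.ext rfl)
  have himg : Finset.image (fun i : Fin k => p i) Finset.univ = σ := by
    ext x
    simp only [Finset.mem_image, Finset.mem_univ, true_and]
    constructor
    · rintro ⟨i, rfl⟩; exact hmemp i
    · intro hx
      have := (Set.ext_iff.mp (σ.range_orderEmbOfFin (rfl : σ.card = k)) x).mpr hx
      exact this
  rw [← aux_integral_comp_perm μ τ
    (fun z => (∏ i : Fin k, φ (z (Fin.castLE hkm i))) * Fm z)]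
  apply integral_congr_ae
  filter_upwards with z
  simp only [Function.comp_apply]
  rw [hFs τ z]
  congr 1
  calc ∏ i ∈ σ, φ (z i) = ∏ i ∈ Finset.image (fun i : Fin k => p i) Finset.univ, φ (z i) := by
        rw [himg]
    _ = ∏ i : Fin k, φ (z (p i)) := Finset.prod_image (fun x _ y _ hxy => p.injective hxy)
    _ = ∏ i : Fin k, φ ((z ∘ τ) (Fin.castLE hkm i)) := by
        apply Finset.prod_congr rfl
        intro i _
        rw [Function.comp_apply, hτp]

end Aux6

section Aux7
variable {Z : Type*} [MeasurableSpace Z] (μ : Measure Z) [SigmaFinite μ]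

lemma aux_pointwise {m : ℕ} (F : (k : ℕ) → (Fin k → Z) → ℝ) (φ f : Z → ℝ)
    (σ : Finset (Fin m)) (z : Fin m → Z) :
    (∏ i, φ (z i)) * (blockEval F z σ * ∏ i ∈ σᶜ, f (z i))
      = ((∏ i : {x : Fin m // x ∈ σ}, φ (z i)) *
          F σ.card (fun j => z (σ.orderEmbOfFin rfl j))) *
        (∏ i : {x : Fin m // ¬ x ∈ σ}, (φ (z i) * f (z i))) := by
  classical
  have h1 : ∏ i ∈ σ, φ (z i) = ∏ i : {x : Fin m // x ∈ σ}, φ (z i) :=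
    Finset.prod_subtype σ (fun x => Iff.rfl) _
  have h2 : ∏ i ∈ σᶜ, φ (z i) = ∏ i : {x : Fin m // ¬ x ∈ σ}, φ (z i) :=
    Finset.prod_subtype σᶜ (fun x => Finset.mem_compl) _
  have h3 : ∏ i ∈ σᶜ, f (z i) = ∏ i : {x : Fin m // ¬ x ∈ σ}, f (z i) :=
    Finset.prod_subtype σᶜ (fun x => Finset.mem_compl) _
  have h4 : (∏ i ∈ σ, φ (z i)) * ∏ i ∈ σᶜ, φ (z i) = ∏ i, φ (z i) :=
    Finset.prod_mul_prod_compl σ _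
  rw [Finset.prod_mul_distrib, blockEval, ← h4, h1, h2, h3]
  ring

lemma aux_restrict_eval {m : ℕ} (F : (k : ℕ) → (Fin k → Z) → ℝ) (φ : Z → ℝ)
    (σ : Finset (Fin m)) (w : Fin σ.card → Z) :
    ((∏ i : {x : Fin m // x ∈ σ}, φ
        ((MeasurableEquiv.piCongrLeft (fun _ : {x : Fin m // x ∈ σ} => Z)
          (σ.orderIsoOfFin rfl).toEquiv) w i)) *
      F σ.card (fun j => (MeasurableEquiv.piCongrLeft (fun _ : {x : Fin m // x ∈ σ} => Z)
          (σ.orderIsoOfFin rfl).toEquiv) w (⟨σ.orderEmbOfFin rfl j,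
            Finset.orderEmbOfFin_mem _ _ _⟩ : {x : Fin m // x ∈ σ})))
      = (∏ i, φ (w i)) * F σ.card w := by
  classical
  set e2 := (σ.orderIsoOfFin rfl).toEquiv with he2
  have key : ∀ j : Fin σ.card,
      (MeasurableEquiv.piCongrLeft (fun _ : {x : Fin m // x ∈ σ} => Z) e2) w (e2 j) = w j := by
    intro j
    rw [MeasurableEquiv.coe_piCongrLeft]
    exact Equiv.piCongrLeft_apply_apply _ _ _ _
  have hsub : ∀ j : Fin σ.card,
      (⟨σ.orderEmbOfFin rfl j, Finset.orderEmbOfFin_mem _ _ _⟩ : {x : Fin m // x ∈ σ})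
        = e2 j := by
    intro j
    apply Subtype.ext
    exact (Finset.coe_orderIsoOfFin_apply σ rfl j).symm
  congr 1
  · rw [← Equiv.prod_comp e2 (fun i =>
      φ ((MeasurableEquiv.piCongrLeft (fun _ : {x : Fin m // x ∈ σ} => Z) e2) w i))]
    apply Finset.prod_congr rfl
    intro j _
    rw [key j]
  · congr 1
    funext j
    rw [hsub j, key j]

end Aux7

section Aux8
variable {Z : Type*} [MeasurableSpace Z] (μ : Measure Z) [SigmaFinite μ]

lemma aux_term_eval {m : ℕ} (F : (k : ℕ) → (Fin k → Z) → ℝ) (φ f : Z → ℝ)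
    (σ : Finset (Fin m)) :
    ∫ z : Fin m → Z, (∏ i, φ (z i)) * (blockEval F z σ * ∏ i ∈ σᶜ, f (z i))
        ∂(Measure.pi fun _ : Fin m => μ)
      = (∫ w : Fin σ.card → Z, (∏ i, φ (w i)) * F σ.card w
          ∂(Measure.pi fun _ : Fin σ.card => μ)) *
        (∫ x, φ x * f x ∂μ) ^ (m - σ.card) := by
  classical
  letI : MeasureSpace Z := ⟨μ⟩
  set g : ({x : Fin m // x ∈ σ} → Z) → ℝ := fun u =>
    (∏ i : {x : Fin m // x ∈ σ}, φ (u i)) *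
      F σ.card (fun j => u (⟨σ.orderEmbOfFin rfl j,
        Finset.orderEmbOfFin_mem _ _ _⟩ : {x : Fin m // x ∈ σ})) with hg
  set h : ({x : Fin m // ¬ x ∈ σ} → Z) → ℝ := fun v =>
    ∏ i : {x : Fin m // ¬ x ∈ σ}, (φ (v i) * f (v i)) with hh
  have mp := measurePreserving_piEquivPiSubtypeProd
    (fun _ : Fin m => μ) (fun x : Fin m => x ∈ σ)
  refine ((integral_congr_ae ?_).trans
    ((mp.integral_comp' (fun q => g q.1 * h q.2)).trans
      ((integral_prod_mul g h).trans ?_)))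
  · filter_upwards with z
    rw [aux_pointwise]
    rfl
  · congr 1
    · have key3 := (((measurePreserving_piCongrLeft
          (fun _ : {x : Fin m // x ∈ σ} => μ)
          (σ.orderIsoOfFin rfl).toEquiv).integral_comp' g).symm).trans
        (integral_congr_ae (Filter.Eventually.of_forall
          (fun w => aux_restrict_eval F φ σ w)))
      convert key3 using 2
      congr!
      exact congrArg (fun inst => @Measure.pi _ (fun _ => Z) inst _ (fun _ => μ))
        (Subsingleton.elim _ _)
    · have key := MeasureTheory.integral_fintype_prod_eq_pow
        (ι := {x : Fin m // ¬ x ∈ σ}) (fun x => φ x * f x) (μ := μ)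
      have hcard : Fintype.card {x : Fin m // ¬ x ∈ σ} = m - σ.card := by
        simp [Fintype.card_subtype_compl]
      rw [hcard] at key
      exact key

end Aux8

section Aux9
variable {Z : Type*} [MeasurableSpace Z] (μ : Measure Z) [SigmaFinite μ]

lemma aux_term_int {m : ℕ} (F : (k : ℕ) → (Fin k → Z) → ℝ) (φ f : Z → ℝ)
    (hf : Integrable f μ) (hφmeas : Measurable φ) {M : ℝ} (hM : ∀ x, |φ x| ≤ M)
    (σ : Finset (Fin m))
    (hFk : Integrable (F σ.card) (Measure.pi fun _ : Fin σ.card => μ)) :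
    Integrable (fun z : Fin m → Z =>
        (∏ i, φ (z i)) * (blockEval F z σ * ∏ i ∈ σᶜ, f (z i)))
      (Measure.pi fun _ : Fin m => μ) := by
  classical
  letI : MeasureSpace Z := ⟨μ⟩
  have mp := measurePreserving_piEquivPiSubtypeProd
    (fun _ : Fin m => μ) (fun x : Fin m => x ∈ σ)
  set e2 := (σ.orderIsoOfFin rfl).toEquiv with he2
  set pcl := MeasurableEquiv.piCongrLeft
    (fun _ : {x : Fin m // x ∈ σ} => Z) e2 with hpcl
  have mp2 := measurePreserving_piCongrLeft
    (fun _ : {x : Fin m // x ∈ σ} => μ) e2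
  -- first factor integrable on the subtype product space
  have h1 : Integrable (fun u : {x : Fin m // x ∈ σ} → Z =>
      F σ.card (fun j => u (⟨σ.orderEmbOfFin rfl j,
        Finset.orderEmbOfFin_mem _ _ _⟩ : {x : Fin m // x ∈ σ})))
      (Measure.pi fun _ : {x : Fin m // x ∈ σ} => μ) := by
    have hsymm := (mp2.symm pcl)
    have := ((hsymm.integrable_comp_emb
      (pcl.symm.measurableEmbedding)).mpr hFk)
    have heq : (F σ.card ∘ ⇑pcl.symm) = (fun u : {x : Fin m // x ∈ σ} → Z =>
        F σ.card (fun j => u (⟨σ.orderEmbOfFin rfl j,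
          Finset.orderEmbOfFin_mem _ _ _⟩ : {x : Fin m // x ∈ σ}))) := by
      funext u
      simp only [Function.comp_apply]
      congr 1
    rw [← heq]
    exact this
  have h2 : Integrable (fun v : {x : Fin m // ¬ x ∈ σ} → Z =>
      ∏ i : {x : Fin m // ¬ x ∈ σ}, f (v i))
      (Measure.pi fun _ : {x : Fin m // ¬ x ∈ σ} => μ) :=
    MeasureTheory.Integrable.fintype_prod (f := fun _ => f) (fun _ => hf)
  have hprod := h1.mul_prod h2
  have h3 : Integrable (fun z : Fin m → Z => blockEval F z σ * ∏ i ∈ σᶜ, f (z i))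
      (Measure.pi fun _ : Fin m => μ) := by
    have key := mp.integrable_comp_emb
      (MeasurableEquiv.measurableEmbedding _)
      (g := fun q : ({x : Fin m // x ∈ σ} → Z) × ({x : Fin m // ¬ x ∈ σ} → Z) =>
        F σ.card (fun j => q.1 (⟨σ.orderEmbOfFin rfl j,
          Finset.orderEmbOfFin_mem _ _ _⟩ : {x : Fin m // x ∈ σ})) *
        ∏ i : {x : Fin m // ¬ x ∈ σ}, f (q.2 i))
    have this := key.mpr (by convert hprod using 2 <;> congr!)
    have heq2 : ((fun q : ({x : Fin m // x ∈ σ} → Z) × ({x : Fin m // ¬ x ∈ σ} → Z) =>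
          F σ.card (fun j => q.1 (⟨σ.orderEmbOfFin rfl j,
            Finset.orderEmbOfFin_mem _ _ _⟩ : {x : Fin m // x ∈ σ})) *
          ∏ i : {x : Fin m // ¬ x ∈ σ}, f (q.2 i)) ∘
          ⇑(MeasurableEquiv.piEquivPiSubtypeProd (fun _ : Fin m => Z)
            (fun x : Fin m => x ∈ σ)))
          = fun z : Fin m → Z => blockEval F z σ * ∏ i ∈ σᶜ, f (z i) := by
      funext z
      simp only [Function.comp_apply]
      have h3' : ∏ i ∈ σᶜ, f (z i) = ∏ i : {x : Fin m // ¬ x ∈ σ}, f (z i) :=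
        Finset.prod_subtype σᶜ (fun x => Finset.mem_compl) _
      rw [blockEval, h3']
      rfl
    rw [← heq2]
    exact this
  refine h3.bdd_mul ?_ (c := (max M 1) ^ m) (Filter.Eventually.of_forall ?_)
  · exact (Finset.measurable_prod _ fun i _ =>
      hφmeas.comp (measurable_pi_apply _)).aestronglyMeasurable
  · intro z
    have := aux_prod_abs_le (Finset.univ : Finset (Fin m)) φ hM z
    rw [Real.norm_eq_abs]
    simpa only [Finset.card_univ, Fintype.card_fin] using this

end Aux9

section Aux10
variable {Z : Type*} [MeasurableSpace Z] (μ : Measure Z) [SigmaFinite μ]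

lemma aux_reduce_all (N : ℕ) (F : (k : ℕ) → (Fin k → Z) → ℝ)
    (hF0 : ∀ z : Fin 0 → Z, F 0 z = 1)
    (hFint : ∀ k, 1 ≤ k → k ≤ N → Integrable (F k) (Measure.pi fun _ : Fin k => μ))
    (hF1 : ∫ z, F 1 (fun _ => z) ∂μ = 1)
    (hmarg : ∀ k, 1 ≤ k → k + 1 ≤ N →
      ∀ᵐ w ∂(Measure.pi fun _ : Fin k => μ),
        ∫ z, F (k + 1) (Fin.snoc w z) ∂μ = F k w)
    (φ : Z → ℝ) (hφmeas : Measurable φ) {M : ℝ} (hM : ∀ x, |φ x| ≤ M)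
    (k m : ℕ) (hkm : k ≤ m) (hm1 : 1 ≤ m) (hmN : m ≤ N) :
    ∫ z : Fin m → Z, (∏ i : Fin k, φ (z (Fin.castLE hkm i))) * F m z
        ∂(Measure.pi fun _ : Fin m => μ)
      = ∫ w : Fin k → Z, (∏ i, φ (w i)) * F k w ∂(Measure.pi fun _ : Fin k => μ) := by
  rcases Nat.eq_zero_or_pos k with rfl | hk
  · simp only [Finset.univ_eq_empty, Finset.prod_empty, one_mul]
    have h0 := aux_A0 μ F hF0 φ
    simp only [Finset.univ_eq_empty, Finset.prod_empty, one_mul] at h0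
    rw [h0]
    exact aux_int_one μ N F hFint hF1 hmarg m hm1 hmN
  · exact aux_reduce μ N F hFint hmarg φ hφmeas hM k hk m hkm hmN

end Aux10


/-- for symmetric marginals `F_k ∈ L¹(μ^{⊗k})` satisfying the marginal
consistency relations, for `f ∈ L¹(μ)` and `φ` bounded measurable, the linear correlations
satisfy `∫ φ^{⊗m} H_m dμ^{⊗m} = ∫ (φ − ∫ φ f dμ)^{⊗m} F_m dμ^{⊗m}` for all `1 ≤ m ≤ N`. -/
theorem linearCorrelation_moment_identity {Z : Type*} [MeasurableSpace Z]
    (μ : Measure Z) [SigmaFinite μ] (N : ℕ) (hN : 1 ≤ N)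
    (F : (k : ℕ) → (Fin k → Z) → ℝ)
    (hF0 : ∀ z : Fin 0 → Z, F 0 z = 1)
    (hFint : ∀ k, 1 ≤ k → k ≤ N →
      Integrable (F k) (Measure.pi fun _ : Fin k => μ))
    (hFsymm : ∀ k, 1 ≤ k → k ≤ N → ∀ τ : Equiv.Perm (Fin k), ∀ z : Fin k → Z,
      F k (z ∘ τ) = F k z)
    (hF1 : ∫ z, F 1 (fun _ => z) ∂μ = 1)
    (hmarg : ∀ k, 1 ≤ k → k + 1 ≤ N →
      ∀ᵐ w ∂(Measure.pi fun _ : Fin k => μ),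
        ∫ z, F (k + 1) (Fin.snoc w z) ∂μ = F k w)
    (f : Z → ℝ) (hf : Integrable f μ)
    (φ : Z → ℝ) (hφmeas : Measurable φ) (hφbdd : ∃ M, ∀ x, |φ x| ≤ M) :
    ∀ m, 1 ≤ m → m ≤ N →
      ∫ z : Fin m → Z, (∏ i, φ (z i)) * linearCorrelation F f m z
          ∂(Measure.pi fun _ : Fin m => μ)
        = ∫ z : Fin m → Z, (∏ i, (φ (z i) - ∫ x, φ x * f x ∂μ)) * F m z
            ∂(Measure.pi fun _ : Fin m => μ) := by
  classical
  obtain ⟨M, hM⟩ := hφbdd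
  intro m hm1 hmN
  have hFint' : ∀ k, k ≤ N → Integrable (F k) (Measure.pi fun _ : Fin k => μ) := by
    intro k hkN
    rcases Nat.eq_zero_or_pos k with rfl | hk
    · rw [Measure.pi_of_empty (fun _ : Fin 0 => μ)]
      exact (integrable_const (1:ℝ)).congr
        (Filter.Eventually.of_forall fun z => (hF0 z).symm)
    · exact hFint k hk hkN
  have hcardle : ∀ σ : Finset (Fin m), σ.card ≤ m := by
    intro σ
    simpa using Finset.card_le_univ σ
  set c : ℝ := ∫ x, φ x * f x ∂μ with hc
  -- LHS computation
  have hL1 : ∫ z : Fin m → Z, (∏ i, φ (z i)) * linearCorrelation F f m z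
        ∂(Measure.pi fun _ : Fin m => μ)
      = ∑ k ∈ Finset.range (m+1), ∑ σ ∈ (Finset.univ : Finset (Fin m)).powersetCard k,
          (-1:ℝ)^(m-k) * ((∫ w : Fin σ.card → Z, (∏ i, φ (w i)) * F σ.card w
            ∂(Measure.pi fun _ : Fin σ.card => μ)) * c ^ (m - σ.card)) := by
    have hpt : ∀ z : Fin m → Z, (∏ i, φ (z i)) * linearCorrelation F f m z
        = ∑ k ∈ Finset.range (m+1), ∑ σ ∈ (Finset.univ : Finset (Fin m)).powersetCard k,
            (-1:ℝ)^(m-k) * ((∏ i, φ (z i)) * (blockEval F z σ * ∏ i ∈ σᶜ, f (z i))) := by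
      intro z
      rw [linearCorrelation, Finset.mul_sum]
      apply Finset.sum_congr rfl
      intro k _
      rw [mul_left_comm, Finset.mul_sum, Finset.mul_sum]
    have hintσ : ∀ (k : ℕ) (σ : Finset (Fin m)),
        Integrable (fun z : Fin m → Z =>
          (-1:ℝ)^(m-k) * ((∏ i, φ (z i)) * (blockEval F z σ * ∏ i ∈ σᶜ, f (z i))))
        (Measure.pi fun _ : Fin m => μ) := by
      intro k σ
      exact (aux_term_int μ F φ f hf hφmeas hM σ
        (hFint' σ.card (le_trans (hcardle σ) hmN))).const_mul _
    rw [integral_congr_ae (Filter.Eventually.of_forall hpt)]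
    rw [MeasureTheory.integral_finset_sum _
      (fun k _ => integrable_finset_sum _ (fun σ _ => hintσ k σ))]
    apply Finset.sum_congr rfl
    intro k _
    rw [MeasureTheory.integral_finset_sum _ (fun σ _ => hintσ k σ)]
    apply Finset.sum_congr rfl
    intro σ _
    rw [integral_const_mul, aux_term_eval μ F φ f σ]
  -- RHS computation
  have hR1 : ∫ z : Fin m → Z, (∏ i, (φ (z i) - c)) * F m z
        ∂(Measure.pi fun _ : Fin m => μ)
      = ∑ t ∈ (Finset.univ : Finset (Fin m)).powerset,
          (-c)^(m - t.card) * (∫ w : Fin t.card → Z, (∏ i, φ (w i)) * F t.card w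
            ∂(Measure.pi fun _ : Fin t.card => μ)) := by
    have hptR : ∀ z : Fin m → Z, (∏ i, (φ (z i) - c)) * F m z
        = ∑ t ∈ (Finset.univ : Finset (Fin m)).powerset,
            ((∏ i ∈ t, φ (z i)) * (-c)^(m - t.card)) * F m z := by
      intro z
      rw [← Finset.sum_mul]
      congr 1
      calc ∏ i, (φ (z i) - c) = ∏ i, (φ (z i) + (-c)) := by
            simp only [sub_eq_add_neg]
        _ = ∑ t ∈ (Finset.univ : Finset (Fin m)).powerset,
              (∏ i ∈ t, φ (z i)) * ∏ _i ∈ Finset.univ \ t, (-c) :=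
            Finset.prod_add _ _ _
        _ = ∑ t ∈ (Finset.univ : Finset (Fin m)).powerset,
              (∏ i ∈ t, φ (z i)) * (-c)^(m - t.card) := by
            apply Finset.sum_congr rfl
            intro t _
            rw [Finset.prod_const]
            congr 1
            rw [← Finset.compl_eq_univ_sdiff, Finset.card_compl, Fintype.card_fin]
    have hintt : ∀ t : Finset (Fin m),
        Integrable (fun z : Fin m → Z => ((∏ i ∈ t, φ (z i)) * (-c)^(m - t.card)) * F m z)
        (Measure.pi fun _ : Fin m => μ) := by
      intro t
      refine (hFint m hm1 hmN).bdd_mul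
        (((Finset.measurable_prod _ fun i _ =>
          hφmeas.comp (measurable_pi_apply _)).mul_const _).aestronglyMeasurable)
        (c := (max M 1)^t.card * |(-c)^(m - t.card)|) (Filter.Eventually.of_forall fun z => ?_)
      rw [Real.norm_eq_abs, abs_mul]
      exact mul_le_mul_of_nonneg_right (aux_prod_abs_le t φ hM z) (abs_nonneg _)
    rw [integral_congr_ae (Filter.Eventually.of_forall hptR)]
    rw [MeasureTheory.integral_finset_sum _ (fun t _ => hintt t)]
    apply Finset.sum_congr rfl
    intro t _
    have hre : ∀ z : Fin m → Z, ((∏ i ∈ t, φ (z i)) * (-c)^(m - t.card)) * F m z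
        = (-c)^(m - t.card) * ((∏ i ∈ t, φ (z i)) * F m z) := fun z => by ring
    rw [integral_congr_ae (Filter.Eventually.of_forall hre), integral_const_mul]
    congr 1
    rw [aux_sort μ (F m) (hFsymm m hm1 hmN) φ t (hcardle t)]
    exact aux_reduce_all μ N F hF0 hFint hF1 hmarg φ hφmeas hM
      t.card m (hcardle t) hm1 hmN
  rw [hL1, hR1, Finset.sum_powerset]
  have hcu : ((Finset.univ : Finset (Fin m)).card) = m := by
    simp
  rw [hcu]
  apply Finset.sum_congr rfl
  intro k hk
  apply Finset.sum_congr rfl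
  intro σ hσ
  have hcard : σ.card = k := (Finset.mem_powersetCard.mp hσ).2
  rw [hcard, neg_pow]
  ring
end

section
/- Let C ≥ 1, T₀ > 0 and N ≥ 1. Let a_m : [0,T₀] → [0,∞), 0 ≤ m ≤ N, be differentiable functions (with the convention a_m = 0 for m < 0 and for m > N) satisfying, for all 0 ≤ m ≤ N and t ∈ [0,T₀], the differential inequalities a_m'(t) ≤ C m (a_{m−2}(t) + a_{m−1}(t) + a_m(t) + a_{m+1}(t)), with initial conditions a_0(0) ≤ 1 and a_m(0) = 0 for 1 ≤ m ≤ N. Then there exists a time T* ∈ (0, T₀], depending only on C (and not on N or T₀ beyond the constraint T* ≤ T₀), such that a_m(t) ≤ 2^m for all 0 ≤ m ≤ N and all t ∈ [0, T*]. -/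
open Set Filter Topology


/-- a priori generating-function estimate inside the proof of
Proposition 3.2. Given `C ≥ 1`, there is `ε > 0` depending only on `C` such that for
any `T₀ > 0`, any `N ≥ 1`, and any nonnegative differentiable maps
`a_m : [0,T₀] → [0,∞)`, `0 ≤ m ≤ N` (with the convention `a_m = 0` for `m < 0` and
`m > N`), satisfying `a_m' ≤ C m (a_{m−2} + a_{m−1} + a_m + a_{m+1})` on `[0,T₀]`,
`a_0(0) ≤ 1` and `a_m(0) = 0` for `1 ≤ m ≤ N`, one has `a_m(t) ≤ 2^m` for all
`0 ≤ m ≤ N` and `t ∈ [0, T*]` where `T* := min ε T₀ ∈ (0,T₀]`. -/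
theorem generating_function_apriori_bound (C : ℝ) (hC : 1 ≤ C) :
    ∃ ε : ℝ, 0 < ε ∧
      ∀ (T₀ : ℝ) (_hT₀ : 0 < T₀) (N : ℕ) (_hN : 1 ≤ N) (a : ℤ → ℝ → ℝ)
        (_hvanish : ∀ m : ℤ, m < 0 ∨ (N : ℤ) < m → ∀ t : ℝ, a m t = 0)
        (_hnonneg : ∀ m : ℤ, 0 ≤ m → m ≤ (N : ℤ) →
          ∀ t ∈ Set.Icc (0 : ℝ) T₀, 0 ≤ a m t)
        (_hdiff : ∀ m : ℤ, 0 ≤ m → m ≤ (N : ℤ) →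
          ∀ t ∈ Set.Icc (0 : ℝ) T₀, DifferentiableAt ℝ (a m) t)
        (_hineq : ∀ m : ℤ, 0 ≤ m → m ≤ (N : ℤ) → ∀ t ∈ Set.Icc (0 : ℝ) T₀,
          deriv (a m) t ≤ C * (m : ℝ) *
            (a (m - 2) t + a (m - 1) t + a m t + a (m + 1) t))
        (_hinit0 : a 0 0 ≤ 1)
        (_hinit : ∀ m : ℤ, 1 ≤ m → m ≤ (N : ℤ) → a m 0 = 0),
        ∀ m : ℤ, 0 ≤ m → m ≤ (N : ℤ) →
          ∀ t : ℝ, 0 ≤ t → t ≤ min ε T₀ → a m t ≤ (2 : ℝ) ^ m := by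
  have hC0 : (0:ℝ) < C := lt_of_lt_of_le one_pos hC
  refine ⟨1/(10*C), by positivity, ?_⟩
  intro T₀ hT₀ N hN a hvanish hnonneg hdiff hineq hinit0 hinit
  set ε : ℝ := 1/(10*C) with hεdef
  set Tm : ℝ := min ε T₀ with hTmdef
  have hεpos : 0 < ε := by positivity
  have hTmpos : 0 < Tm := lt_min hεpos hT₀
  have hTmT₀ : Tm ≤ T₀ := min_le_right _ _
  have hsub : Icc (0:ℝ) Tm ⊆ Icc (0:ℝ) T₀ := Icc_subset_Icc le_rfl hTmT₀
  -- the barrier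
  set u : ℝ → ℝ := fun t => 1 - 5*C*t with hudef
  set y : ℝ → ℝ := fun t => (u t)⁻¹ with hydef
  have hu_half : ∀ t ∈ Icc (0:ℝ) Tm, (1:ℝ)/2 ≤ u t := by
    intro t ht
    have h1 : t ≤ ε := le_trans ht.2 (min_le_left _ _)
    have h2 : 5*C*t ≤ 5*C*ε := by nlinarith [ht.1]
    have h3 : 5*C*ε = 1/2 := by rw [hεdef]; field_simp; ring
    simp only [hudef]; linarith
  have hu_le1 : ∀ t ∈ Icc (0:ℝ) Tm, u t ≤ 1 := by
    intro t ht
    have : (0:ℝ) ≤ 5*C*t := by have := ht.1; positivity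
    simp only [hudef]; linarith
  have hu_pos : ∀ t ∈ Icc (0:ℝ) Tm, 0 < u t := fun t ht => lt_of_lt_of_le (by norm_num) (hu_half t ht)
  have hy_one : ∀ t ∈ Icc (0:ℝ) Tm, 1 ≤ y t := by
    intro t ht
    simp only [hydef]
    rw [le_inv_comm₀ one_pos (hu_pos t ht)]
    simpa using hu_le1 t ht
  have hy_two : ∀ t ∈ Icc (0:ℝ) Tm, y t ≤ 2 := by
    intro t ht
    simp only [hydef]
    rw [inv_le_comm₀ (hu_pos t ht) (by norm_num)]
    have := hu_half t ht; linarith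
  have hy_pos : ∀ t ∈ Icc (0:ℝ) Tm, 0 < y t := fun t ht => lt_of_lt_of_le one_pos (hy_one t ht)
  set b : ℤ → ℝ → ℝ := fun m t => (y t) ^ m with hbdef
  have hy_deriv : ∀ t ∈ Icc (0:ℝ) Tm, HasDerivAt y (5*C*(y t)^2) t := by
    intro t ht
    have hu : HasDerivAt u (-(5*C)) t := by
      simpa using ((hasDerivAt_id t).const_mul (5*C)).const_sub 1
    have := hu.inv (ne_of_gt (hu_pos t ht))
    refine HasDerivAt.congr_deriv this ?_
    simp only [hydef]; ring
  have hb_deriv : ∀ m : ℤ, ∀ t ∈ Icc (0:ℝ) Tm,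
      HasDerivAt (b m) (5*C*(m:ℝ)*(y t)^(m+1)) t := by
    intro m t ht
    have hne : y t ≠ 0 := ne_of_gt (hy_pos t ht)
    have h1 : HasDerivAt (fun x : ℝ => x ^ m) ((m:ℝ) * (y t) ^ (m-1)) (y t) :=
      hasDerivAt_zpow m (y t) (Or.inl hne)
    have h2 := h1.comp t (hy_deriv t ht)
    refine HasDerivAt.congr_deriv h2 ?_
    have : (y t) ^ (m+1) = (y t) ^ (m-1) * (y t)^2 := by
      rw [← zpow_natCast (y t) 2, ← zpow_add₀ hne]
      congr 1; ring
    rw [this]; ring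
  have hb_cont : ∀ m : ℤ, ContinuousOn (b m) (Icc (0:ℝ) Tm) :=
    fun m t ht => ((hb_deriv m t ht).differentiableAt.continuousAt).continuousWithinAt
  have ha_cont : ∀ m : ℤ, 0 ≤ m → m ≤ (N:ℤ) → ContinuousOn (a m) (Icc (0:ℝ) Tm) :=
    fun m h0 h1 t ht => ((hdiff m h0 h1 t (hsub ht)).continuousAt).continuousWithinAt
  -- a 0 is bounded by 1
  have ha0 : ∀ t ∈ Icc (0:ℝ) Tm, a 0 t ≤ 1 := by
    have hanti : AntitoneOn (a 0) (Icc (0:ℝ) T₀) := by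
      apply antitoneOn_of_deriv_nonpos (convex_Icc 0 T₀)
      · exact fun t ht => ((hdiff 0 le_rfl (by exact_mod_cast Nat.zero_le N) t ht).continuousAt).continuousWithinAt
      · intro t ht
        rw [interior_Icc] at ht
        exact (hdiff 0 le_rfl (by exact_mod_cast Nat.zero_le N) t (Ioo_subset_Icc_self ht)).differentiableWithinAt
      · intro t ht
        rw [interior_Icc] at ht
        have := hineq 0 le_rfl (by exact_mod_cast Nat.zero_le N) t (Ioo_subset_Icc_self ht)
        simpa using this
    intro t ht
    have := hanti (left_mem_Icc.2 hT₀.le) (hsub ht) ht.1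
    linarith
  -- b m bounds for all k ≤ m+1
  have hb_mono : ∀ t ∈ Icc (0:ℝ) Tm, ∀ k l : ℤ, k ≤ l → b k t ≤ b l t :=
    fun t ht k l hkl => zpow_le_zpow_right₀ (hy_one t ht) hkl
  have hb_pos : ∀ t ∈ Icc (0:ℝ) Tm, ∀ k : ℤ, 0 < b k t :=
    fun t ht k => zpow_pos (hy_pos t ht) k
  -- key comparison at any time t* with a k t* ≤ b k t* for relevant k
  -- the bad set
  set B : Set ℝ := ⋃ m ∈ Finset.Icc (1:ℤ) (N:ℤ), (Icc (0:ℝ) Tm ∩ {t | b m t ≤ a m t}) with hBdef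
  have hBclosed : IsClosed B := by
    apply isClosed_biUnion_finset
    intro m hm
    rw [Finset.mem_Icc] at hm
    have : ContinuousOn (fun t => a m t - b m t) (Icc (0:ℝ) Tm) :=
      (ha_cont m (by linarith [hm.1]) hm.2).sub (hb_cont m)
    have := this.preimage_isClosed_of_isClosed isClosed_Icc (isClosed_Ici (a := (0:ℝ)))
    convert this using 1
    ext t; simp [sub_nonneg]
  have hBsub : B ⊆ Icc (0:ℝ) Tm := by
    intro t ht
    simp only [hBdef, mem_iUnion] at ht
    obtain ⟨m, _, ht, _⟩ := ht
    exact ht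
  -- Main claim : B is empty
  have hBempty : B = ∅ := by
    by_contra hne
    have hBne : B.Nonempty := nonempty_iff_ne_empty.2 hne
    have hBbdd : BddBelow B := ⟨0, fun t ht => (hBsub ht).1⟩
    set t₀ : ℝ := sInf B with ht₀def
    have ht₀B : t₀ ∈ B := hBclosed.csInf_mem hBne hBbdd
    have ht₀mem : t₀ ∈ Icc (0:ℝ) Tm := hBsub ht₀B
    -- at time 0 nothing is bad
    have h0notB : (0:ℝ) ∉ B := by
      intro h
      simp only [hBdef, mem_iUnion, mem_inter_iff, mem_setOf_eq, Finset.mem_Icc] at h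
      obtain ⟨m, hm, -, hle⟩ := h
      have hb0 : b m 0 = 1 := by
        have : y 0 = 1 := by simp [hydef, hudef]
        simp [hbdef, this]
      rw [hinit m hm.1 hm.2, hb0] at hle
      norm_num at hle
    have ht₀pos : 0 < t₀ := lt_of_le_of_ne ht₀mem.1 (fun h => h0notB (h ▸ ht₀B))
    -- before t₀, strict inequalities hold
    have hbefore : ∀ s ∈ Ico (0:ℝ) t₀, ∀ k : ℤ, 1 ≤ k → k ≤ (N:ℤ) → a k s < b k s := by
      intro s hs k hk1 hk2
      by_contra hcon
      push_neg at hcon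
      have hsB : s ∈ B := by
        simp only [hBdef, mem_iUnion]
        exact ⟨k, Finset.mem_Icc.2 ⟨hk1, hk2⟩, ⟨⟨hs.1, le_trans hs.2.le ht₀mem.2⟩, hcon⟩⟩
      exact absurd (csInf_le hBbdd hsB) (not_le_of_gt hs.2)
    -- at t₀, a k ≤ b k for all relevant k
    have hat : ∀ k : ℤ, a k t₀ ≤ b k t₀ := by
      intro k
      rcases lt_or_ge k 0 with hk | hk
      · rw [hvanish k (Or.inl hk) t₀]; exact (hb_pos t₀ ht₀mem k).le
      rcases lt_or_ge (N:ℤ) k with hk' | hk'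
      · rw [hvanish k (Or.inr hk') t₀]; exact (hb_pos t₀ ht₀mem k).le
      rcases eq_or_lt_of_le hk with hk0 | hk1
      · rw [← hk0]
        have : b 0 t₀ = 1 := by simp [hbdef]
        rw [this]; exact ha0 t₀ ht₀mem
      · -- k ≥ 1 : use continuity from the left
        have hk1 : 1 ≤ k := hk1
        have hfreq : ∀ s ∈ Ico (0:ℝ) t₀, a k s - b k s ≤ 0 :=
          fun s hs => by linarith [hbefore s hs k hk1 hk']
        have hico : Ico (0:ℝ) t₀ ⊆ Icc (0:ℝ) Tm :=
          fun s hs => ⟨hs.1, le_trans hs.2.le ht₀mem.2⟩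
        have hcont : ContinuousWithinAt (fun s => a k s - b k s) (Ico (0:ℝ) t₀) t₀ := by
          apply (((ha_cont k (by linarith) hk' t₀ ht₀mem).sub (hb_cont k t₀ ht₀mem))).mono hico
        have hNB : (𝓝[Ico (0:ℝ) t₀] t₀).NeBot := by
          apply mem_closure_iff_nhdsWithin_neBot.1
          rw [closure_Ico (ne_of_lt ht₀pos)]
          exact ⟨ht₀pos.le, le_rfl⟩
        have hlim : a k t₀ - b k t₀ ≤ 0 :=
          le_of_tendsto hcont (eventually_nhdsWithin_of_forall hfreq)
        linarith
    -- pick the crossing index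
    obtain ⟨m, hmIcc, -, hmbad⟩ : ∃ m : ℤ, (1 ≤ m ∧ m ≤ (N:ℤ)) ∧ t₀ ∈ Icc (0:ℝ) Tm ∧ b m t₀ ≤ a m t₀ := by
      have h := ht₀B
      simp only [hBdef, mem_iUnion, mem_inter_iff, mem_setOf_eq, Finset.mem_Icc] at h
      obtain ⟨m, hm, h1, h2⟩ := h
      exact ⟨m, hm, h1, h2⟩
    have hm1 : 1 ≤ m := hmIcc.1
    have hmN : m ≤ (N:ℤ) := hmIcc.2
    have hm0 : (0:ℤ) ≤ m := by linarith
    have heq : a m t₀ = b m t₀ := le_antisymm (hat m) hmbad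
    -- derivative comparison
    have hya := hy_pos t₀ ht₀mem
    set Y : ℝ := y t₀ with hYdef
    have hda : deriv (a m) t₀ ≤ C * (m:ℝ) * (a (m-2) t₀ + a (m-1) t₀ + a m t₀ + a (m+1) t₀) :=
      hineq m hm0 hmN t₀ (hsub ht₀mem)
    have hsum : a (m-2) t₀ + a (m-1) t₀ + a m t₀ + a (m+1) t₀ ≤ 4 * Y^(m+1) := by
      have h1 := le_trans (hat (m-2)) (hb_mono t₀ ht₀mem (m-2) (m+1) (by linarith))
      have h2 := le_trans (hat (m-1)) (hb_mono t₀ ht₀mem (m-1) (m+1) (by linarith))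
      have h3 := le_trans (hat m) (hb_mono t₀ ht₀mem m (m+1) (by linarith))
      have h4 := hat (m+1)
      simp only [hbdef] at h1 h2 h3 h4
      rw [hYdef]; linarith
    have hstrict : deriv (a m) t₀ < 5*C*(m:ℝ)*Y^(m+1) := by
      have hm1' : (1:ℝ) ≤ (m:ℝ) := by exact_mod_cast hm1
      have hYp : 0 < Y^(m+1) := zpow_pos hya _
      calc deriv (a m) t₀ ≤ C * (m:ℝ) * (a (m-2) t₀ + a (m-1) t₀ + a m t₀ + a (m+1) t₀) := hda
        _ ≤ C * (m:ℝ) * (4 * Y^(m+1)) := by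
            apply mul_le_mul_of_nonneg_left hsum (by nlinarith)
        _ < 5*C*(m:ℝ)*Y^(m+1) := by
            have h := mul_pos (mul_pos hC0 (lt_of_lt_of_le one_pos hm1')) hYp
            nlinarith [h]
    -- f := a m - b m has negative derivative at t₀ but f < 0 before t₀ and f t₀ = 0
    have hfA : HasDerivAt (a m) (deriv (a m) t₀) t₀ :=
      (hdiff m hm0 hmN t₀ (hsub ht₀mem)).hasDerivAt
    have hfB := hb_deriv m t₀ ht₀mem
    have hf : HasDerivAt (fun s => a m s - b m s) (deriv (a m) t₀ - 5*C*(m:ℝ)*Y^(m+1)) t₀ :=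
      hfA.sub hfB
    have hdneg : deriv (a m) t₀ - 5*C*(m:ℝ)*Y^(m+1) < 0 := by linarith
    have hslope : Tendsto (slope (fun s => a m s - b m s) t₀) (𝓝[≠] t₀)
        (𝓝 (deriv (a m) t₀ - 5*C*(m:ℝ)*Y^(m+1))) := hasDerivAt_iff_tendsto_slope.1 hf
    have hle : 𝓝[<] t₀ ≤ 𝓝[≠] t₀ :=
      nhdsWithin_mono _ (fun x hx => ne_of_lt hx)
    have h1 : ∀ᶠ s in 𝓝[<] t₀, slope (fun s => a m s - b m s) t₀ s < 0 :=
      (hslope.mono_left hle).eventually_lt_const hdneg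
    have h2 : ∀ᶠ s in 𝓝[<] t₀, s ∈ Ioo (0:ℝ) t₀ :=
      Ioo_mem_nhdsLT_of_mem ⟨ht₀pos, le_rfl⟩
    obtain ⟨s, hs1, hs2⟩ := (h1.and h2).exists
    have hsne : s - t₀ < 0 := by linarith [hs2.2]
    have hslope_eq : slope (fun s => a m s - b m s) t₀ s
        = ((a m s - b m s) - (a m t₀ - b m t₀)) / (s - t₀) :=
      slope_def_field _ _ _
    rw [hslope_eq, heq, sub_self, sub_zero] at hs1
    have hpos : 0 < a m s - b m s := by
      rcases div_neg_iff.1 hs1 with ⟨h, h'⟩ | ⟨h, h'⟩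
      · linarith
      · linarith
    have := hbefore s ⟨hs2.1.le, hs2.2⟩ m hm1 hmN
    linarith
  -- conclude
  intro m hm0 hmN t ht0 htTm
  have htmem : t ∈ Icc (0:ℝ) Tm := ⟨ht0, htTm⟩
  rcases eq_or_lt_of_le hm0 with hm | hm
  · rw [← hm]
    simpa using ha0 t htmem
  · have hm1 : 1 ≤ m := hm
    have hnotB : t ∉ B := by rw [hBempty]; exact notMem_empty t
    have : a m t < b m t := by
      by_contra hcon
      push_neg at hcon
      apply hnotB
      simp only [hBdef, mem_iUnion]
      exact ⟨m, Finset.mem_Icc.2 ⟨hm1, hmN⟩, htmem, hcon⟩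
    have hb2 : b m t ≤ (2:ℝ)^m := by
      obtain ⟨n, rfl⟩ := Int.eq_ofNat_of_zero_le hm0
      simp only [hbdef, zpow_natCast]
      exact pow_le_pow_left₀ (hy_pos t htmem).le (hy_two t htmem) n
    linarith
end

section
/- Let C ≥ 1, T₀ > 0 and integers N ≥ 1. Let b_m : [0,T₀] → [0,∞), 1 ≤ m ≤ N, be differentiable functions (with the convention b_{N+1} = 0) satisfying, for all 1 ≤ m ≤ N and t ∈ [0,T₀], the differential inequalities b_m'(t) ≤ C m b_m(t) + C m b_{m+1}(t) + C m³ N^{−2}, with initial conditions b_m(0) = 0 for all 1 ≤ m ≤ N. Then there exists a time T* ∈ (0, T₀], depending only on C, and for each m ≥ 1 a constant C_m, depending only on C and m (and not on N), such that b_m(t) ≤ C_m N^{−2} for all 1 ≤ m ≤ N and all t ∈ [0, T*]. -/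
open Finset

private lemma sum_sq_half_aux (N : ℕ) :
    ∑ i ∈ Finset.range N, (1/2:ℝ)^(i+1) * ((i:ℝ)+1)^2
      ≤ 6 - ((N:ℝ)^2 + 4*N + 6) / 2^N := by
  induction N with
  | zero => norm_num
  | succ n ih =>
    rw [Finset.sum_range_succ]
    have h2 : ((2:ℝ))^n ≠ 0 := by positivity
    have key : (1/2:ℝ)^(n+1) * ((n:ℝ)+1)^2
        = ((n:ℝ)^2 + 4*(n:ℝ) + 6) / 2^n - (((n:ℝ)+1)^2 + 4*((n:ℝ)+1) + 6) / 2^(n+1) := by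
      rw [div_pow, one_pow, pow_succ, pow_succ]
      field_simp
      ring
    push_cast
    linarith [ih, key]

private lemma sum_sq_half (N : ℕ) :
    ∑ i ∈ Finset.range N, (1/2:ℝ)^(i+1) * ((i:ℝ)+1)^2 ≤ 6 := by
  have := sum_sq_half_aux N
  have h2 : (0:ℝ) < 2^N := by positivity
  have : (0:ℝ) ≤ ((N:ℝ)^2 + 4*N + 6) / 2^N := by positivity
  linarith [sum_sq_half_aux N]

/-- generating-function estimate from Step 1 of the proof of Corollary 1.2.
Given `C ≥ 1`, there are `ε > 0` and constants `C_m` (each depending only on `C` and `m`,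
not on `N` or `T₀`) such that for any `T₀ > 0`, any `N ≥ 1`, and any nonnegative
differentiable maps `b_m : [0,T₀] → [0,∞)`, `1 ≤ m ≤ N` (with the convention
`b_{N+1} = 0`), satisfying `b_m' ≤ C m b_m + C m b_{m+1} + C m³ N^{−2}` on `[0,T₀]` and
`b_m(0) = 0`, one has `b_m(t) ≤ C_m N^{−2}` for all `1 ≤ m ≤ N` and `t ∈ [0, T*]`
where `T* := min ε T₀ ∈ (0,T₀]`. -/
theorem propagation_of_chaos_generating_bound (C : ℝ) (hC : 1 ≤ C) :
    ∃ ε : ℝ, 0 < ε ∧ ∃ Cm : ℕ → ℝ,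
      ∀ (T₀ : ℝ) (_hT₀ : 0 < T₀) (N : ℕ) (_hN : 1 ≤ N) (b : ℕ → ℝ → ℝ)
        (_hvanish : ∀ t : ℝ, b (N + 1) t = 0)
        (_hnonneg : ∀ m, 1 ≤ m → m ≤ N → ∀ t ∈ Set.Icc (0 : ℝ) T₀, 0 ≤ b m t)
        (_hdiff : ∀ m, 1 ≤ m → m ≤ N →
          ∀ t ∈ Set.Icc (0 : ℝ) T₀, DifferentiableAt ℝ (b m) t)
        (_hineq : ∀ m, 1 ≤ m → m ≤ N → ∀ t ∈ Set.Icc (0 : ℝ) T₀,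
          deriv (b m) t ≤ C * m * b m t + C * m * b (m + 1) t
            + C * (m : ℝ) ^ 3 / (N : ℝ) ^ 2)
        (_hinit : ∀ m, 1 ≤ m → m ≤ N → b m 0 = 0),
        ∀ m, 1 ≤ m → m ≤ N →
          ∀ t : ℝ, 0 ≤ t → t ≤ min ε T₀ → b m t ≤ Cm m / (N : ℝ) ^ 2 := by
  have hC0 : (0:ℝ) < C := lt_of_lt_of_le one_pos hC
  refine ⟨1/(12*C), by positivity, fun m => 6 * 4^m, ?_⟩
  intro T₀ hT₀ N hN b hvanish hnonneg hdiff hineq hinit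
  set ε := 1/(12*C) with hεdef
  set Ts := min ε T₀ with hTsdef
  have hε0 : 0 < ε := by positivity
  have hTs0 : 0 < Ts := lt_min hε0 hT₀
  have hTsT₀ : Ts ≤ T₀ := min_le_right _ _
  have hsub : Set.Icc (0:ℝ) Ts ⊆ Set.Icc 0 T₀ := Set.Icc_subset_Icc le_rfl hTsT₀
  set c : ℝ := 3*C with hcdef
  have hc0 : 0 < c := by positivity
  have hcε : c * ε = 1/4 := by rw [hcdef, hεdef]; field_simp; ring
  clear_value ε Ts c
  have hN2 : (0:ℝ) < (N:ℝ)^2 := by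
    have : (0:ℝ) < (N:ℝ) := by exact_mod_cast hN
    positivity
  -- bounds on r(t) = 1/2 - c t
  have hr_lb : ∀ t : ℝ, t ∈ Set.Icc (0:ℝ) Ts → (1/4:ℝ) ≤ 1/2 - c*t := by
    intro t ht
    have h1 : t ≤ ε := le_trans ht.2 (hTsdef ▸ min_le_left _ _)
    have h2 : c * t ≤ c * ε := mul_le_mul_of_nonneg_left h1 hc0.le
    linarith
  have hr_ub : ∀ t : ℝ, 0 ≤ t → 1/2 - c*t ≤ 1/2 := by
    intro t ht
    nlinarith [mul_nonneg hc0.le ht]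
  -- the generating function
  set W : ℝ → ℝ := fun t => ∑ i ∈ Finset.range N,
    (1/2 - c*t)^(i+1) * (b (i+1) t + ((i:ℝ)+1)^2/(N:ℝ)^2) with hWdef
  -- derivative of W
  have hW : ∀ t ∈ Set.Icc (0:ℝ) T₀, HasDerivAt W
      (∑ i ∈ Finset.range N,
        ((↑(i+1) * (1/2 - c*t)^i * (-c)) * (b (i+1) t + ((i:ℝ)+1)^2/(N:ℝ)^2)
          + (1/2 - c*t)^(i+1) * deriv (b (i+1)) t)) t := by
    intro t ht
    apply HasDerivAt.fun_sum
    intro i hi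
    have hiN : i + 1 ≤ N := Finset.mem_range.mp hi
    have hb : HasDerivAt (b (i+1)) (deriv (b (i+1)) t) t :=
      (hdiff (i+1) (Nat.le_add_left 1 i) hiN t ht).hasDerivAt
    have hr : HasDerivAt (fun s : ℝ => 1/2 - c*s) (-c) t := by
      simpa using ((hasDerivAt_id t).const_mul c).const_sub (1/2:ℝ)
    have hrp : HasDerivAt (fun s : ℝ => (1/2 - c*s)^(i+1))
        (↑(i+1) * (1/2 - c*t)^i * (-c)) t := by
      simpa using hr.fun_pow (i+1)
    exact hrp.mul (hb.add_const _)
  -- deriv W ≤ 0 on the interior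
  have hderiv_nonpos : ∀ t ∈ Set.Ioo (0:ℝ) Ts, deriv W t ≤ 0 := by
    intro t ht
    have htccTs : t ∈ Set.Icc (0:ℝ) Ts := ⟨ht.1.le, ht.2.le⟩
    have htcc : t ∈ Set.Icc (0:ℝ) T₀ := hsub htccTs
    rw [(hW t htcc).deriv]
    set r : ℝ := 1/2 - c*t with hrdef
    have hr1 : (1/4:ℝ) ≤ r := hr_lb t htccTs
    have hr2 : r ≤ 1/2 := hr_ub t ht.1.le
    clear_value r
    have hr0 : (0:ℝ) < r := lt_of_lt_of_le (by norm_num) hr1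
    -- auxiliary sequence
    set u : ℕ → ℝ := fun j => C * (j:ℝ) * r^j * b (j+1) t with hudef
    clear_value u
    -- step A: termwise bound
    have stepA : ∀ i ∈ Finset.range N,
        ((↑(i+1) * r^i * (-c)) * (b (i+1) t + ((i:ℝ)+1)^2/(N:ℝ)^2)
          + r^(i+1) * deriv (b (i+1)) t)
        ≤ ((↑(i+1) * r^i * (-c)) * (b (i+1) t + ((i:ℝ)+1)^2/(N:ℝ)^2)
            + r^(i+1) * (C * (↑(i+1)) * b (i+1) t + C * (↑(i+1)) * ((i:ℝ)+1)^2/(N:ℝ)^2))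
          + u (i+1) := by
      intro i hi
      have hiN : i + 1 ≤ N := Finset.mem_range.mp hi
      have hineq' := hineq (i+1) (Nat.le_add_left 1 i) hiN t htcc
      have hrp : (0:ℝ) ≤ r^(i+1) := by positivity
      have h1 : r^(i+1) * deriv (b (i+1)) t
          ≤ r^(i+1) * (C * (↑(i+1)) * b (i+1) t + C * (↑(i+1)) * b (i+2) t
              + C * ((↑(i+1)):ℝ)^3 / (N:ℝ)^2) := by
        exact mul_le_mul_of_nonneg_left hineq' hrp
      have h2 : r^(i+1) * (C * (↑(i+1)) * b (i+1) t + C * (↑(i+1)) * b (i+2) t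
              + C * ((↑(i+1)):ℝ)^3 / (N:ℝ)^2)
          = r^(i+1) * (C * (↑(i+1)) * b (i+1) t + C * (↑(i+1)) * ((i:ℝ)+1)^2/(N:ℝ)^2)
            + u (i+1) := by
        simp only [hudef]
        push_cast
        ring
      linarith
    -- step B: reindex the cross terms
    have hu0 : u 0 = 0 := by simp [hudef]
    have huN : u N = 0 := by simp [hudef, hvanish t]
    have hshift : ∑ i ∈ Finset.range N, u (i+1) = ∑ i ∈ Finset.range N, u i := by
      have h1 := Finset.sum_range_succ' u N
      have h2 := Finset.sum_range_succ u N
      rw [h2] at h1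
      linarith
    -- step C: combined termwise nonpositivity
    have stepC : ∀ i ∈ Finset.range N,
        ((↑(i+1) * r^i * (-c)) * (b (i+1) t + ((i:ℝ)+1)^2/(N:ℝ)^2)
            + r^(i+1) * (C * (↑(i+1)) * b (i+1) t + C * (↑(i+1)) * ((i:ℝ)+1)^2/(N:ℝ)^2))
          + u i ≤ 0 := by
      intro i hi
      have hiN : i + 1 ≤ N := Finset.mem_range.mp hi
      have hB : 0 ≤ b (i+1) t := hnonneg (i+1) (Nat.le_add_left 1 i) hiN t htcc
      have hx : (0:ℝ) < r^i := pow_pos hr0 i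
      have hyx : r^(i+1) ≤ r^i := by
        rw [pow_succ]
        nlinarith [hx]
      have hD : (0:ℝ) ≤ ((i:ℝ)+1)^2/(N:ℝ)^2 := by positivity
      have hK : (0:ℝ) < (i:ℝ)+1 := by positivity
      simp only [hudef]
      push_cast
      have hy0 : (0:ℝ) ≤ r^(i+1) := by positivity
      have step1 : r^(i+1) * (C * ((i:ℝ)+1) * b (i+1) t + C * ((i:ℝ)+1) * ((i:ℝ)+1)^2/(N:ℝ)^2)
          ≤ r^i * (C * ((i:ℝ)+1) * b (i+1) t + C * ((i:ℝ)+1) * ((i:ℝ)+1)^2/(N:ℝ)^2) := by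
        apply mul_le_mul_of_nonneg_right hyx
        have := mul_nonneg (mul_nonneg hC0.le hK.le) hB
        positivity
      have hp1 : 0 ≤ C * (((i:ℝ)+2) * (r^i * b (i+1) t)) :=
        mul_nonneg hC0.le (mul_nonneg (by positivity) (mul_nonneg hx.le hB))
      have hp2 : 0 ≤ C * ((((i:ℝ)+1)) * (r^i * (((i:ℝ)+1)^2/(N:ℝ)^2))) :=
        mul_nonneg hC0.le (mul_nonneg hK.le (mul_nonneg hx.le hD))
      rw [hcdef]
      simp only [mul_div_assoc] at step1 hp2 ⊢
      set q := ((i:ℝ)+1)^2/(N:ℝ)^2 with hq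
      clear_value q
      linarith [step1, hp1, hp2]
    calc ∑ i ∈ Finset.range N,
        ((↑(i+1) * r^i * (-c)) * (b (i+1) t + ((i:ℝ)+1)^2/(N:ℝ)^2)
          + r^(i+1) * deriv (b (i+1)) t)
        ≤ ∑ i ∈ Finset.range N,
          (((↑(i+1) * r^i * (-c)) * (b (i+1) t + ((i:ℝ)+1)^2/(N:ℝ)^2)
            + r^(i+1) * (C * (↑(i+1)) * b (i+1) t + C * (↑(i+1)) * ((i:ℝ)+1)^2/(N:ℝ)^2))
            + u (i+1)) := Finset.sum_le_sum stepA
      _ = ∑ i ∈ Finset.range N,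
          ((↑(i+1) * r^i * (-c)) * (b (i+1) t + ((i:ℝ)+1)^2/(N:ℝ)^2)
            + r^(i+1) * (C * (↑(i+1)) * b (i+1) t + C * (↑(i+1)) * ((i:ℝ)+1)^2/(N:ℝ)^2))
          + ∑ i ∈ Finset.range N, u (i+1) := by rw [Finset.sum_add_distrib]
      _ = ∑ i ∈ Finset.range N,
          (((↑(i+1) * r^i * (-c)) * (b (i+1) t + ((i:ℝ)+1)^2/(N:ℝ)^2)
            + r^(i+1) * (C * (↑(i+1)) * b (i+1) t + C * (↑(i+1)) * ((i:ℝ)+1)^2/(N:ℝ)^2))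
            + u i) := by rw [hshift, ← Finset.sum_add_distrib]
      _ ≤ 0 := Finset.sum_nonpos stepC
  -- W is antitone on [0, Ts]
  have hanti : AntitoneOn W (Set.Icc 0 Ts) := by
    apply antitoneOn_of_deriv_nonpos (convex_Icc 0 Ts)
    · intro t ht
      exact ((hW t (hsub ht)).differentiableAt).continuousAt.continuousWithinAt
    · intro t ht
      rw [interior_Icc] at ht
      exact ((hW t (hsub ⟨ht.1.le, ht.2.le⟩)).differentiableAt).differentiableWithinAt
    · intro t ht
      rw [interior_Icc] at ht
      exact hderiv_nonpos t ht
  -- value at 0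
  have hW0 : W 0 ≤ 6 / (N:ℝ)^2 := by
    have : W 0 = ∑ i ∈ Finset.range N, ((1/2:ℝ)^(i+1) * ((i:ℝ)+1)^2) / (N:ℝ)^2 := by
      apply Finset.sum_congr rfl
      intro i hi
      have hiN : i + 1 ≤ N := Finset.mem_range.mp hi
      rw [hinit (i+1) (Nat.le_add_left 1 i) hiN]
      ring_nf
    rw [this, ← Finset.sum_div]
    gcongr
    exact sum_sq_half N
  -- conclusion
  intro m hm1 hmN t ht0 htTs
  have htIcc : t ∈ Set.Icc (0:ℝ) Ts := ⟨ht0, htTs⟩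
  have htT₀ : t ∈ Set.Icc (0:ℝ) T₀ := hsub htIcc
  have hWt : W t ≤ W 0 := hanti (Set.left_mem_Icc.mpr hTs0.le) htIcc ht0
  have hr1 : (1/4:ℝ) ≤ 1/2 - c*t := hr_lb t htIcc
  set r : ℝ := 1/2 - c*t with hrdef
  have hr0 : (0:ℝ) < r := lt_of_lt_of_le (by norm_num) hr1
  have hWt_eq : W t = ∑ i ∈ Finset.range N,
      r^(i+1) * (b (i+1) t + ((i:ℝ)+1)^2/(N:ℝ)^2) := by
    simp only [hWdef]
    rfl
  -- single term bound
  have hmem : m - 1 ∈ Finset.range N := Finset.mem_range.mpr (by omega)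
  have hsingle : r^m * b m t ≤ W t := by
    have hterm : r^((m-1)+1) * (b ((m-1)+1) t + ((((m-1):ℕ):ℝ)+1)^2/(N:ℝ)^2)
        ≤ ∑ i ∈ Finset.range N, r^(i+1) * (b (i+1) t + ((i:ℝ)+1)^2/(N:ℝ)^2) := by
      apply Finset.single_le_sum (f := fun i =>
        r^(i+1) * (b (i+1) t + ((i:ℝ)+1)^2/(N:ℝ)^2)) _ hmem
      intro i hi
      have hiN : i + 1 ≤ N := Finset.mem_range.mp hi
      have hB : 0 ≤ b (i+1) t := hnonneg (i+1) (Nat.le_add_left 1 i) hiN t htT₀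
      have hD : (0:ℝ) ≤ ((i:ℝ)+1)^2/(N:ℝ)^2 := by positivity
      positivity
    have hm' : m - 1 + 1 = m := by omega
    rw [hm'] at hterm
    have hD : (0:ℝ) ≤ (((↑(m-1)):ℝ)+1)^2/(N:ℝ)^2 := by positivity
    have hrm : (0:ℝ) ≤ r^m := by positivity
    calc r^m * b m t ≤ r^m * (b m t + (((↑(m-1)):ℝ)+1)^2/(N:ℝ)^2) :=
          mul_le_mul_of_nonneg_left (le_add_of_nonneg_right hD) hrm
      _ ≤ ∑ i ∈ Finset.range N, r^(i+1) * (b (i+1) t + ((i:ℝ)+1)^2/(N:ℝ)^2) := hterm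
      _ = W t := hWt_eq.symm
  have h4m : (0:ℝ) < 4^m := by positivity
  have hrm : ((1:ℝ)/4)^m ≤ r^m := pow_le_pow_left₀ (by norm_num) hr1 m
  have hB : 0 ≤ b m t := hnonneg m hm1 hmN t htT₀
  have hchain : ((1:ℝ)/4)^m * b m t ≤ 6 / (N:ℝ)^2 := by
    calc ((1:ℝ)/4)^m * b m t ≤ r^m * b m t := mul_le_mul_of_nonneg_right hrm hB
      _ ≤ W t := hsingle
      _ ≤ W 0 := hWt
      _ ≤ 6 / (N:ℝ)^2 := hW0
  have h14 : ((1:ℝ)/4)^m = 1/4^m := by rw [div_pow, one_pow]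
  rw [h14] at hchain
  calc b m t = 4^m * (1/4^m * b m t) := by field_simp
    _ ≤ 4^m * (6/(N:ℝ)^2) := mul_le_mul_of_nonneg_left hchain h4m.le
    _ = 6 * 4^m / (N:ℝ)^2 := by ring
end

section
/- Let n ≥ 1, k ≥ 0 and p be integers with n < p ≤ n + k, and let A, R > 0 be real numbers with p² A ≤ R. Then p^{2p} (A R^{−1})^p ≤ e^{2k} · n^{2n} (A R^{−1})^n. -/
/-- elementary estimate from Case 2 of the proof of Lemma 2.1:
for integers `n ≥ 1`, `k ≥ 0`, `p` with `n < p ≤ n + k`, and reals `A, R > 0` with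
`p² A ≤ R`, one has `p^{2p} (A/R)^p ≤ e^{2k} · n^{2n} (A/R)^n`. -/
theorem initial_datum_estimate (n k p : ℕ) (hn : 1 ≤ n) (hp : n < p) (hpk : p ≤ n + k)
    (A R : ℝ) (hA : 0 < A) (hR : 0 < R) (hpAR : (p : ℝ) ^ 2 * A ≤ R) :
    (p : ℝ) ^ (2 * p) * (A / R) ^ p ≤ Real.exp (2 * k) * (n : ℝ) ^ (2 * n) * (A / R) ^ n := by
  have hn' : (0:ℝ) < n := by exact_mod_cast hn
  have hp' : (0:ℝ) < p := by
    have h0 : 0 < p := by omega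
    exact_mod_cast h0
  have hAR : 0 < A / R := by positivity
  obtain ⟨m, rfl⟩ : ∃ m, p = n + m := ⟨p - n, by omega⟩
  have hsplit : ((n + m : ℕ) : ℝ) ^ (2 * (n + m)) * (A / R) ^ (n + m)
      = ((n + m : ℕ) : ℝ) ^ (2 * n) * (A / R) ^ n * (((n + m : ℕ) : ℝ) ^ 2 * (A / R)) ^ m := by
    rw [mul_pow, ← pow_mul, show 2 * (n + m) = 2 * n + 2 * m by ring, pow_add, pow_add]
    ring
  have hle1 : (((n + m : ℕ) : ℝ) ^ 2 * (A / R)) ^ m ≤ 1 := by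
    apply pow_le_one₀ (by positivity)
    rw [mul_div_assoc', div_le_one hR]
    exact hpAR
  have step1 : ((n + m : ℕ) : ℝ) ^ (2 * (n + m)) * (A / R) ^ (n + m)
      ≤ ((n + m : ℕ) : ℝ) ^ (2 * n) * (A / R) ^ n := by
    rw [hsplit]
    have hpos : (0:ℝ) < ((n + m : ℕ) : ℝ) ^ (2 * n) * (A / R) ^ n := by positivity
    nth_rewrite 2 [← mul_one (((n + m : ℕ) : ℝ) ^ (2 * n) * (A / R) ^ n)]
    exact mul_le_mul_of_nonneg_left hle1 hpos.le
  have step2 : ((n + m : ℕ) : ℝ) ^ (2 * n) ≤ Real.exp (2 * k) * (n : ℝ) ^ (2 * n) := by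
    have hpk' : ((n + m : ℕ) : ℝ) ≤ (n : ℝ) * (1 + k / n) := by
      rw [mul_add, mul_one, mul_div_cancel₀ _ hn'.ne']
      exact_mod_cast hpk
    calc ((n + m : ℕ) : ℝ) ^ (2 * n) ≤ ((n : ℝ) * (1 + k / n)) ^ (2 * n) :=
          pow_le_pow_left₀ hp'.le hpk' _
      _ = (n : ℝ) ^ (2 * n) * (1 + k / n) ^ (2 * n) := mul_pow ..
      _ ≤ (n : ℝ) ^ (2 * n) * Real.exp (2 * k) := by
          apply mul_le_mul_of_nonneg_left _ (by positivity)
          have h1 : (1 : ℝ) + k / n ≤ Real.exp (k / n) := by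
            have := Real.add_one_le_exp ((k : ℝ) / n)
            linarith
          calc (1 + (k:ℝ) / n) ^ (2 * n) ≤ Real.exp ((k:ℝ) / n) ^ (2 * n) :=
                pow_le_pow_left₀ (by positivity) h1 _
            _ = Real.exp ((2 * n : ℕ) * ((k:ℝ) / n)) := by rw [← Real.exp_nat_mul]
            _ = Real.exp (2 * k) := by
                congr 1
                push_cast
                field_simp
      _ = Real.exp (2 * k) * (n : ℝ) ^ (2 * n) := mul_comm ..
  calc ((n + m : ℕ) : ℝ) ^ (2 * (n + m)) * (A / R) ^ (n + m)
      ≤ ((n + m : ℕ) : ℝ) ^ (2 * n) * (A / R) ^ n := step1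
    _ ≤ Real.exp (2 * k) * (n : ℝ) ^ (2 * n) * (A / R) ^ n :=
        mul_le_mul_of_nonneg_right step2 (by positivity)
end
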